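/- arXiv:1210.2198 — 7 statements merged into one kernel-verified Lean document; each statement's English description precedes it below -/
import Mathlib

section
/- For all x ≥ 0, (1/(√(2π)(1+x))) e^{−x²/2} ≤ 1 − Φ(x) ≤ (1/(√π (1+x))) e^{−x²/2}. -/
/-- The standard normal cumulative distribution function. -/
noncomputable def stdNormalCDF (x : ℝ) : ℝ :=
  (Real.sqrt (2 * Real.pi))⁻¹ * ∫ t in Set.Iic x, Real.exp (-t ^ 2 / 2)

open Real MeasureTheory Set Filter Topology

lemma phi_int : Integrable (fun t : ℝ => Real.exp (-t ^ 2 / 2)) := by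
  have h := integrable_exp_neg_mul_sq (by norm_num : (0:ℝ) < 1/2)
  refine h.congr (Eventually.of_forall fun t => ?_)
  ring_nf

lemma phi_total : (∫ t : ℝ, Real.exp (-t ^ 2 / 2)) = Real.sqrt (2 * Real.pi) := by
  have h := integral_gaussian (1/2 : ℝ)
  rw [show (Real.pi / (1/2 : ℝ)) = 2 * Real.pi by ring] at h
  rw [← h]
  exact integral_congr_ae (Eventually.of_forall fun t => by ring_nf)

-- derivative of F t = -exp(-t^2/2)/(1+t)
lemma F_deriv {t : ℝ} (ht : -1 < t) :
    HasDerivAt (fun t : ℝ => -(Real.exp (-t ^ 2 / 2) / (1 + t)))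
      (Real.exp (-t ^ 2 / 2) * (t ^ 2 + t + 1) / (1 + t) ^ 2) t := by
  have h0 : (1 : ℝ) + t ≠ 0 := by linarith
  have h1 : HasDerivAt (fun t : ℝ => -t ^ 2 / 2) (-t) t := by
    have := (hasDerivAt_pow 2 t).neg.div_const 2
    simpa using this.congr_deriv (by ring)
  have h2 : HasDerivAt (fun t : ℝ => Real.exp (-t ^ 2 / 2))
      (Real.exp (-t ^ 2 / 2) * (-t)) t := h1.exp
  have h3 : HasDerivAt (fun t : ℝ => (1 : ℝ) + t) 1 t :=
    (hasDerivAt_id t).const_add 1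
  have h4 := (h2.div h3 h0).neg
  refine HasDerivAt.congr_deriv h4 ?_
  ring

lemma F_tendsto :
    Tendsto (fun t : ℝ => -(Real.exp (-t ^ 2 / 2) / (1 + t))) atTop (𝓝 0) := by
  have h1 : Tendsto (fun t : ℝ => -t ^ 2 / 2) atTop atBot := by
    apply Tendsto.atBot_div_const (by norm_num : (0:ℝ) < 2)
    exact (Filter.tendsto_neg_atBot_iff.mpr (tendsto_pow_atTop (by norm_num)))
  have h2 : Tendsto (fun t : ℝ => Real.exp (-t ^ 2 / 2)) atTop (𝓝 0) :=
    Real.tendsto_exp_atBot.comp h1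
  have h3 : Tendsto (fun t : ℝ => (1 + t)⁻¹) atTop (𝓝 0) := by
    apply tendsto_inv_atTop_zero.comp
    exact tendsto_atTop_add_const_left _ 1 tendsto_id
  have := (h2.mul h3).neg
  simpa [div_eq_mul_inv] using this

lemma g_le_phi {t : ℝ} (ht : 0 ≤ t) :
    Real.exp (-t ^ 2 / 2) * (t ^ 2 + t + 1) / (1 + t) ^ 2 ≤ Real.exp (-t ^ 2 / 2) := by
  rw [div_le_iff₀ (by positivity)]
  have h := Real.exp_pos (-t ^ 2 / 2)
  nlinarith

lemma phi_le_sqrt2_g {t : ℝ} (ht : 0 ≤ t) :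
    Real.exp (-t ^ 2 / 2) ≤
      Real.sqrt 2 * (Real.exp (-t ^ 2 / 2) * (t ^ 2 + t + 1) / (1 + t) ^ 2) := by
  have hs : (1.41 : ℝ) ≤ Real.sqrt 2 := by
    rw [show (2:ℝ) = 1.41^2 + 0.0119 by norm_num]
    nlinarith [Real.sq_sqrt (show (0:ℝ) ≤ 1.41^2 + 0.0119 by norm_num),
      Real.sqrt_nonneg (1.41^2 + 0.0119 : ℝ)]
  have hd : (1 + t) ^ 2 ≤ Real.sqrt 2 * (t ^ 2 + t + 1) := by
    nlinarith [sq_nonneg (t - 1)]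
  rw [mul_div_assoc', mul_comm (Real.sqrt 2), mul_div_assoc]
  have hp : (0:ℝ) < (1 + t) ^ 2 := by positivity
  have key : (1:ℝ) ≤ (t ^ 2 + t + 1) * (Real.sqrt 2 / (1 + t) ^ 2) := by
    rw [mul_div_assoc', le_div_iff₀ hp]; linarith
  calc Real.exp (-t ^ 2 / 2) = Real.exp (-t ^ 2 / 2) * 1 := (mul_one _).symm
    _ ≤ Real.exp (-t ^ 2 / 2) * ((t ^ 2 + t + 1) * (Real.sqrt 2 / (1 + t) ^ 2)) :=
        mul_le_mul_of_nonneg_left key (Real.exp_pos _).le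
    _ = Real.exp (-t ^ 2 / 2) * (t ^ 2 + t + 1) * (Real.sqrt 2 / (1 + t) ^ 2) := by ring

lemma g_int (x : ℝ) (hx : 0 ≤ x) :
    IntegrableOn (fun t : ℝ => Real.exp (-t ^ 2 / 2) * (t ^ 2 + t + 1) / (1 + t) ^ 2)
      (Ioi x) := by
  have hmeas : AEStronglyMeasurable
      (fun t : ℝ => Real.exp (-t ^ 2 / 2) * (t ^ 2 + t + 1) / (1 + t) ^ 2)
      (volume.restrict (Ioi x)) := by
    apply ContinuousOn.aestronglyMeasurable _ measurableSet_Ioi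
    apply ContinuousOn.div
    · exact (Continuous.continuousOn (by continuity))
    · exact (Continuous.continuousOn (by continuity))
    · intro t ht
      have h5 : x < t := ht
      have : 0 < 1 + t := by linarith
      positivity
  refine Integrable.mono phi_int.restrict hmeas ?_
  rw [ae_restrict_iff' measurableSet_Ioi]
  refine Eventually.of_forall fun t ht => ?_
  have h5 : x < t := ht
  have ht0 : 0 ≤ t := le_trans hx h5.le
  rw [Real.norm_eq_abs, Real.norm_eq_abs, abs_of_nonneg (by positivity),
    abs_of_nonneg (by positivity : (0:ℝ) ≤ Real.exp (-t ^ 2 / 2))]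
  exact g_le_phi ht0

lemma key_int (x : ℝ) (hx : 0 ≤ x) :
    ∫ t in Ioi x, Real.exp (-t ^ 2 / 2) * (t ^ 2 + t + 1) / (1 + t) ^ 2
      = Real.exp (-x ^ 2 / 2) / (1 + x) := by
  have h := integral_Ioi_of_hasDerivAt_of_tendsto'
    (f := fun t : ℝ => -(Real.exp (-t ^ 2 / 2) / (1 + t)))
    (f' := fun t : ℝ => Real.exp (-t ^ 2 / 2) * (t ^ 2 + t + 1) / (1 + t) ^ 2)
    (a := x) (m := 0)
    (fun t ht => F_deriv (by have : x ≤ t := ht; linarith))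
    (g_int x hx) F_tendsto
  rw [h]; ring

lemma tail_eq (x : ℝ) :
    1 - stdNormalCDF x
      = (Real.sqrt (2 * Real.pi))⁻¹ * ∫ t in Ioi x, Real.exp (-t ^ 2 / 2) := by
  have hsplit := intervalIntegral.integral_Iic_add_Ioi (b := x) phi_int.integrableOn phi_int.integrableOn
  rw [phi_total] at hsplit
  have hs : (0:ℝ) < Real.sqrt (2 * Real.pi) :=
    Real.sqrt_pos.mpr (by positivity)
  have hA : (∫ t in Set.Iic x, Real.exp (-t ^ 2 / 2))
      = Real.sqrt (2 * Real.pi) - ∫ t in Ioi x, Real.exp (-t ^ 2 / 2) := by linarith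
  rw [stdNormalCDF, hA, mul_sub, inv_mul_cancel₀ hs.ne']
  ring

theorem gaussian_tail_two_sided (x : ℝ) (hx : 0 ≤ x) :
    (Real.sqrt (2 * Real.pi) * (1 + x))⁻¹ * Real.exp (-x ^ 2 / 2) ≤ 1 - stdNormalCDF x ∧
    1 - stdNormalCDF x ≤ (Real.sqrt Real.pi * (1 + x))⁻¹ * Real.exp (-x ^ 2 / 2) := by
  have hs : (0:ℝ) < Real.sqrt (2 * Real.pi) := Real.sqrt_pos.mpr (by positivity)
  have hx1 : (0:ℝ) < 1 + x := by linarith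
  have hmono : ∀ t ∈ Ioi x, (0:ℝ) ≤ t := fun t ht => le_trans hx (le_of_lt ht)
  rw [tail_eq]
  constructor
  · have hcomp : ∫ t in Ioi x, Real.exp (-t ^ 2 / 2) * (t ^ 2 + t + 1) / (1 + t) ^ 2
        ≤ ∫ t in Ioi x, Real.exp (-t ^ 2 / 2) := by
      apply setIntegral_mono_on (g_int x hx) phi_int.integrableOn measurableSet_Ioi
      exact fun t ht => g_le_phi (hmono t ht)
    rw [key_int x hx] at hcomp
    calc (Real.sqrt (2 * Real.pi) * (1 + x))⁻¹ * Real.exp (-x ^ 2 / 2)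
        = (Real.sqrt (2 * Real.pi))⁻¹ * (Real.exp (-x ^ 2 / 2) / (1 + x)) := by
          rw [mul_inv]; ring
      _ ≤ (Real.sqrt (2 * Real.pi))⁻¹ * ∫ t in Ioi x, Real.exp (-t ^ 2 / 2) := by
          exact mul_le_mul_of_nonneg_left hcomp (inv_nonneg.mpr hs.le)
  · have hcomp : ∫ t in Ioi x, Real.exp (-t ^ 2 / 2)
        ≤ ∫ t in Ioi x, Real.sqrt 2 * (Real.exp (-t ^ 2 / 2) * (t ^ 2 + t + 1) / (1 + t) ^ 2) := by
      apply setIntegral_mono_on phi_int.integrableOn ((g_int x hx).const_mul _) measurableSet_Ioi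
      exact fun t ht => phi_le_sqrt2_g (hmono t ht)
    rw [integral_const_mul, key_int x hx] at hcomp
    have hsq : Real.sqrt (2 * Real.pi) = Real.sqrt 2 * Real.sqrt Real.pi :=
      Real.sqrt_mul (by norm_num) _
    have hpi : (0:ℝ) < Real.sqrt Real.pi := Real.sqrt_pos.mpr Real.pi_pos
    have h2 : (0:ℝ) < Real.sqrt 2 := Real.sqrt_pos.mpr (by norm_num)
    calc (Real.sqrt (2 * Real.pi))⁻¹ * ∫ t in Ioi x, Real.exp (-t ^ 2 / 2)
        ≤ (Real.sqrt (2 * Real.pi))⁻¹ * (Real.sqrt 2 * (Real.exp (-x ^ 2 / 2) / (1 + x))) :=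
          mul_le_mul_of_nonneg_left hcomp (inv_nonneg.mpr hs.le)
      _ = (Real.sqrt Real.pi * (1 + x))⁻¹ * Real.exp (-x ^ 2 / 2) := by
          rw [hsq, mul_inv]; field_simp
end

section
/- Let ξ be a real random variable and 𝒢 a sub-σ-field with E[ξ | 𝒢] = 0, and suppose |E[ξ^k | 𝒢]| ≤ (1/2) k! ε^{k−2} E[ξ² | 𝒢] a.s. for all k ≥ 3, where ε ∈ (0, 1/2]. Then for every integer k ≥ 2, |E[ξ^k | 𝒢]| ≤ 6 k! ε^k almost surely. -/
open MeasureTheory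

theorem condMoment_abs_le_of_bernstein {Ω : Type*} {m0 : MeasurableSpace Ω} {μ : Measure Ω}
    [IsProbabilityMeasure μ] {m : MeasurableSpace Ω} (hm : m ≤ m0) (ξ : Ω → ℝ)
    (hint : ∀ k : ℕ, Integrable (fun ω => ξ ω ^ k) μ)
    (hcenter : μ[ξ|m] =ᵐ[μ] 0)
    (ε : ℝ) (hε : ε ∈ Set.Ioc (0 : ℝ) (1 / 2))
    (hB : ∀ k : ℕ, 3 ≤ k → ∀ᵐ ω ∂μ,
      |(μ[fun ω => ξ ω ^ k|m]) ω| ≤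
        (1 / 2) * (Nat.factorial k : ℝ) * ε ^ (k - 2) * (μ[fun ω => ξ ω ^ 2|m]) ω) :
    ∀ k : ℕ, 2 ≤ k → ∀ᵐ ω ∂μ,
      |(μ[fun ω => ξ ω ^ k|m]) ω| ≤ 6 * (Nat.factorial k : ℝ) * ε ^ k := by
  obtain ⟨hε0, hε2⟩ := hε
  set c : ℝ := 1 / (24 * ε ^ 2) with hc
  have hc0 : 0 < c := by positivity
  -- pointwise AM-GM: ξ² ≤ c ξ⁴ + 6 ε²
  have hpt : ∀ ω, ξ ω ^ 2 ≤ c * ξ ω ^ 4 + 6 * ε ^ 2 := by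
    intro ω
    have h1 : 0 ≤ (Real.sqrt c * ξ ω ^ 2 - Real.sqrt (6 * ε ^ 2)) ^ 2 := sq_nonneg _
    have hcs : Real.sqrt c ^ 2 = c := Real.sq_sqrt hc0.le
    have hes : Real.sqrt (6 * ε ^ 2) ^ 2 = 6 * ε ^ 2 := Real.sq_sqrt (by positivity)
    have hprod : Real.sqrt c * Real.sqrt (6 * ε ^ 2) = 1 / 2 := by
      rw [← Real.sqrt_mul hc0.le]
      rw [show c * (6 * ε ^ 2) = 1 / 4 by field_simp [hc]; rw [hc]; field_simp [hε0.ne']; ring]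
      rw [show (1 : ℝ) / 4 = (1 / 2) ^ 2 by norm_num]
      exact Real.sqrt_sq (by norm_num)
    have hexp : (Real.sqrt c * ξ ω ^ 2 - Real.sqrt (6 * ε ^ 2)) ^ 2
        = Real.sqrt c ^ 2 * (ξ ω ^ 2) ^ 2
          - 2 * (Real.sqrt c * Real.sqrt (6 * ε ^ 2)) * ξ ω ^ 2
          + Real.sqrt (6 * ε ^ 2) ^ 2 := by ring
    rw [hexp, hcs, hes, hprod] at h1
    nlinarith [h1]
  -- integrability
  have hint2 := hint 2
  have hint4 := hint 4
  have hintg : Integrable (fun ω => c * ξ ω ^ 4 + 6 * ε ^ 2) μ :=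
    (hint4.const_mul c).add (integrable_const _)
  -- conditional expectation monotonicity
  have hmono : μ[fun ω => ξ ω ^ 2|m] ≤ᵐ[μ] μ[fun ω => c * ξ ω ^ 4 + 6 * ε ^ 2|m] :=
    condExp_mono hint2 hintg (Filter.Eventually.of_forall hpt)
  have hadd : μ[fun ω => c * ξ ω ^ 4 + 6 * ε ^ 2|m]
      =ᵐ[μ] fun ω => c * (μ[fun ω => ξ ω ^ 4|m]) ω + 6 * ε ^ 2 := by
    have h1 : μ[fun ω => c * ξ ω ^ 4 + 6 * ε ^ 2|m]
        =ᵐ[μ] μ[fun ω => c * ξ ω ^ 4|m] + μ[fun _ => (6 : ℝ) * ε ^ 2|m] :=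
      condExp_add (hint4.const_mul c) (integrable_const _) m
    have h2 : μ[fun ω => c * ξ ω ^ 4|m] =ᵐ[μ] fun ω => c * (μ[fun ω => ξ ω ^ 4|m]) ω := by
      have := condExp_smul (μ := μ) (m := m) c (fun ω => ξ ω ^ 4)
      rw [show (c • fun ω => ξ ω ^ 4) = fun ω => c * ξ ω ^ 4 from rfl] at this
      filter_upwards [this.symm.le, this.le] with ω h h'
      simpa using le_antisymm h' h
    filter_upwards [h1, h2] with ω h1 h2
    simp only [Pi.add_apply] at h1
    rw [h1, h2, condExp_const hm]
  have hB4 := hB 4 (by norm_num)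
  have hV0 : 0 ≤ᵐ[μ] μ[fun ω => ξ ω ^ 2|m] :=
    condExp_nonneg (Filter.Eventually.of_forall fun ω => sq_nonneg _)
  -- key bound: V ≤ 12 ε²
  have hkey : ∀ᵐ ω ∂μ, (μ[fun ω => ξ ω ^ 2|m]) ω ≤ 12 * ε ^ 2 := by
    filter_upwards [hmono, hadd, hB4, hV0] with ω h1 h2 h3 h4
    rw [h2] at h1
    have hQ : (μ[fun ω => ξ ω ^ 4|m]) ω ≤ 12 * ε ^ 2 * (μ[fun ω => ξ ω ^ 2|m]) ω := by
      have := le_trans (le_abs_self _) h3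
      simpa [Nat.factorial] using this.trans_eq (by norm_num [Nat.factorial])
    have hcQ : c * (μ[fun ω => ξ ω ^ 4|m]) ω ≤ (μ[fun ω => ξ ω ^ 2|m]) ω / 2 := by
      have : c * (μ[fun ω => ξ ω ^ 4|m]) ω ≤ c * (12 * ε ^ 2 * (μ[fun ω => ξ ω ^ 2|m]) ω) :=
        mul_le_mul_of_nonneg_left hQ hc0.le
      calc c * (μ[fun ω => ξ ω ^ 4|m]) ω
          ≤ c * (12 * ε ^ 2 * (μ[fun ω => ξ ω ^ 2|m]) ω) := this
        _ = (μ[fun ω => ξ ω ^ 2|m]) ω / 2 := by field_simp [hc]; rw [hc]; field_simp [hε0.ne']; ring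
    linarith
  intro k hk
  rcases eq_or_lt_of_le hk with hk2 | hk3
  · -- k = 2
    filter_upwards [hkey, hV0] with ω h1 h2
    rw [← hk2]
    rw [abs_of_nonneg h2]
    calc (μ[fun ω => ξ ω ^ 2|m]) ω ≤ 12 * ε ^ 2 := h1
      _ = 6 * (Nat.factorial 2 : ℝ) * ε ^ 2 := by norm_num [Nat.factorial]
  · -- k ≥ 3
    have hk3' : 3 ≤ k := hk3
    filter_upwards [hB k hk3', hkey, hV0] with ω h1 h2 h3
    have hε' : (0:ℝ) ≤ ε ^ (k - 2) := by positivity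
    have hfac : (0:ℝ) ≤ (Nat.factorial k : ℝ) := Nat.cast_nonneg _
    calc |(μ[fun ω => ξ ω ^ k|m]) ω|
        ≤ (1 / 2) * (Nat.factorial k : ℝ) * ε ^ (k - 2) * (μ[fun ω => ξ ω ^ 2|m]) ω := h1
      _ ≤ (1 / 2) * (Nat.factorial k : ℝ) * ε ^ (k - 2) * (12 * ε ^ 2) := by
          apply mul_le_mul_of_nonneg_left h2 (by positivity)
      _ = 6 * (Nat.factorial k : ℝ) * (ε ^ (k - 2) * ε ^ 2) := by ring
      _ = 6 * (Nat.factorial k : ℝ) * ε ^ k := by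
          rw [← pow_add, Nat.sub_add_cancel hk]
end

section
/- Let ξ be a real random variable and 𝒢 a sub-σ-field with E[ξ | 𝒢] = 0, satisfying |E[ξ^k | 𝒢]| ≤ (1/2) k! ε^{k−2} E[ξ² | 𝒢] a.s. for all k ≥ 3 with ε ∈ (0, 1/2]. Then for every integer k ≥ 2, E[|ξ|^k | 𝒢] ≤ k! ε^{k−2} E[ξ² | 𝒢] almost surely. -/
open MeasureTheory

private lemma aux_key_bernstein (l : ℕ) (ε E : ℝ) (hε0 : 0 < ε) (hE : 0 ≤ E) :
    (ε * ((l : ℝ) + 2)) ^ 2 * (((2 * l + 2).factorial : ℝ) * ε ^ (2 * l) * E) +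
      (1 / 2) * ((2 * l + 4).factorial : ℝ) * ε ^ (2 * l + 2) * E ≤
    2 * (ε * ((l : ℝ) + 2)) * (((2 * (l + 1) + 1).factorial : ℝ) * ε ^ (2 * l + 1) * E) := by
  have ff2 : ((2 * l + 4).factorial : ℝ) =
      (2 * (l : ℝ) + 4) * ((2 * (l : ℝ) + 3) * (2 * l + 2).factorial) := by
    rw [show 2 * l + 4 = (2 * l + 3) + 1 from rfl, Nat.factorial_succ,
      show 2 * l + 3 = (2 * l + 2) + 1 from rfl, Nat.factorial_succ]
    push_cast; ring
  have ff3 : ((2 * (l + 1) + 1).factorial : ℝ) =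
      (2 * (l : ℝ) + 3) * (2 * l + 2).factorial := by
    rw [show 2 * (l + 1) + 1 = (2 * l + 2) + 1 from by ring, Nat.factorial_succ]
    push_cast; ring
  have p1 : ε ^ (2 * l + 2) = ε ^ (2 * l) * ε ^ 2 := by rw [← pow_add]
  have p2 : ε ^ (2 * l + 1) = ε ^ (2 * l) * ε := pow_succ ε (2 * l)
  rw [ff2, ff3, p1, p2]
  set F : ℝ := ((2 * l + 2).factorial : ℝ) with hF
  have hF0 : (0 : ℝ) ≤ F := by positivity
  set P : ℝ := ε ^ (2 * l) with hP
  have hP0 : (0 : ℝ) ≤ P := by positivity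
  clear_value F P
  have hl0 : (0 : ℝ) ≤ (l : ℝ) := Nat.cast_nonneg l
  have hcoef : ((l : ℝ) + 2) ^ 2 + ((l : ℝ) + 2) * (2 * (l : ℝ) + 3) ≤
      2 * ((l : ℝ) + 2) * (2 * (l : ℝ) + 3) := by nlinarith
  have hQ : (0 : ℝ) ≤ F * (P * ε ^ 2) * E := by positivity
  nlinarith [mul_le_mul_of_nonneg_right hcoef hQ]

theorem condAbsMoment_le_of_bernstein {Ω : Type*} {m0 : MeasurableSpace Ω} {μ : Measure Ω}
    [IsProbabilityMeasure μ] {m : MeasurableSpace Ω} (hm : m ≤ m0) (ξ : Ω → ℝ)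
    (hint : ∀ k : ℕ, Integrable (fun ω => ξ ω ^ k) μ)
    (hintabs : ∀ k : ℕ, Integrable (fun ω => |ξ ω| ^ k) μ)
    (hcenter : μ[ξ|m] =ᵐ[μ] 0)
    (ε : ℝ) (hε : ε ∈ Set.Ioc (0 : ℝ) (1 / 2))
    (hB : ∀ k : ℕ, 3 ≤ k → ∀ᵐ ω ∂μ,
      |(μ[fun ω => ξ ω ^ k|m]) ω| ≤
        (1 / 2) * (Nat.factorial k : ℝ) * ε ^ (k - 2) * (μ[fun ω => ξ ω ^ 2|m]) ω) :
    ∀ k : ℕ, 2 ≤ k → ∀ᵐ ω ∂μ,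
      (μ[fun ω => |ξ ω| ^ k|m]) ω ≤
        (Nat.factorial k : ℝ) * ε ^ (k - 2) * (μ[fun ω => ξ ω ^ 2|m]) ω := by
  obtain ⟨hε0, hε2⟩ := hε
  have hE2nn : ∀ᵐ ω ∂μ, 0 ≤ (μ[fun ω => ξ ω ^ 2|m]) ω :=
    condExp_nonneg (ae_of_all _ fun ω => sq_nonneg _)
  have hfull : ∀ j : ℕ, 2 ≤ j → ∀ᵐ ω ∂μ,
      (μ[fun ω => ξ ω ^ j|m]) ω ≤
        (Nat.factorial j : ℝ) * ε ^ (j - 2) * (μ[fun ω => ξ ω ^ 2|m]) ω := by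
    intro j hj
    rcases eq_or_lt_of_le hj with h2 | h3
    · subst h2
      filter_upwards [hE2nn] with ω h
      simp only [Nat.sub_self, pow_zero, mul_one, Nat.factorial]
      norm_num
      linarith
    · filter_upwards [hB j h3, hE2nn] with ω h1 h2
      have hle := le_trans (le_abs_self _) h1
      have hpos : (0:ℝ) ≤ (Nat.factorial j : ℝ) * ε ^ (j - 2) *
          (μ[fun ω => ξ ω ^ 2|m]) ω := by positivity
      linarith
  intro k hk
  rcases Nat.even_or_odd k with he | ho
  · have hek : (fun ω => |ξ ω| ^ k) = fun ω => ξ ω ^ k :=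
      funext fun ω => he.pow_abs _
    rw [hek]
    exact hfull k hk
  · obtain ⟨j, rfl⟩ := ho
    obtain ⟨l, rfl⟩ : ∃ l, j = l + 1 := ⟨j - 1, by omega⟩
    set a : ℝ := ε * ((l : ℝ) + 2) with ha
    have ha0 : 0 < a := by positivity
    have hpt : ∀ ω, (2 * a) * |ξ ω| ^ (2 * (l + 1) + 1) ≤
        a ^ 2 * ξ ω ^ (2 * l + 2) + ξ ω ^ (2 * l + 4) := by
      intro ω
      set y := |ξ ω| with hy
      have e1 : ξ ω ^ (2 * l + 2) = y ^ (l + 1) * y ^ (l + 1) := by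
        rw [hy, ← Even.pow_abs (⟨l + 1, by ring⟩ : Even (2 * l + 2)) (ξ ω), ← pow_add]
        ring_nf
      have e2 : ξ ω ^ (2 * l + 4) = y ^ (l + 2) * y ^ (l + 2) := by
        rw [hy, ← Even.pow_abs (⟨l + 2, by ring⟩ : Even (2 * l + 4)) (ξ ω), ← pow_add]
        ring_nf
      have e3 : y ^ (2 * (l + 1) + 1) = y ^ (l + 1) * y ^ (l + 2) := by
        rw [← pow_add]; ring_nf
      rw [e1, e2, e3]
      nlinarith [sq_nonneg (a * y ^ (l + 1) - y ^ (l + 2))]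
    have hintf : Integrable (fun ω => (2 * a) * |ξ ω| ^ (2 * (l + 1) + 1)) μ :=
      (hintabs _).const_mul _
    have hintg1 : Integrable (fun ω => a ^ 2 * ξ ω ^ (2 * l + 2)) μ :=
      (hint _).const_mul _
    have hintg : Integrable
        (fun ω => a ^ 2 * ξ ω ^ (2 * l + 2) + ξ ω ^ (2 * l + 4)) μ :=
      hintg1.add (hint _)
    have hmono : μ[fun ω => (2 * a) * |ξ ω| ^ (2 * (l + 1) + 1)|m] ≤ᵐ[μ]
        μ[fun ω => a ^ 2 * ξ ω ^ (2 * l + 2) + ξ ω ^ (2 * l + 4)|m] :=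
      condExp_mono hintf hintg (ae_of_all _ hpt)
    have hleft : μ[fun ω => (2 * a) * |ξ ω| ^ (2 * (l + 1) + 1)|m] =ᵐ[μ]
        (2 * a) • μ[fun ω => |ξ ω| ^ (2 * (l + 1) + 1)|m] :=
      condExp_smul (2 * a) _ m
    have hadd : μ[fun ω => a ^ 2 * ξ ω ^ (2 * l + 2) + ξ ω ^ (2 * l + 4)|m] =ᵐ[μ]
        μ[fun ω => a ^ 2 * ξ ω ^ (2 * l + 2)|m] + μ[fun ω => ξ ω ^ (2 * l + 4)|m] :=
      condExp_add hintg1 (hint _) m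
    have hsmul2 : μ[fun ω => a ^ 2 * ξ ω ^ (2 * l + 2)|m] =ᵐ[μ]
        (a ^ 2) • μ[fun ω => ξ ω ^ (2 * l + 2)|m] :=
      condExp_smul (a ^ 2) _ m
    have hf1 := hfull (2 * l + 2) (by omega)
    have hf2 := hB (2 * l + 4) (by omega)
    filter_upwards [hmono, hleft, hadd, hsmul2, hf1, hf2, hE2nn]
      with ω h1 h2 h3 h4 h5 h6 hE
    rw [h2, h3] at h1
    simp only [Pi.smul_apply, Pi.add_apply, smul_eq_mul] at h1
    rw [h4] at h1
    simp only [Pi.smul_apply, smul_eq_mul] at h1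
    set E : ℝ := (μ[fun ω => ξ ω ^ 2|m]) ω with hEdef
    set X : ℝ := (μ[fun ω => |ξ ω| ^ (2 * (l + 1) + 1)|m]) ω with hXdef
    set C1 : ℝ := (μ[fun ω => ξ ω ^ (2 * l + 2)|m]) ω with hC1def
    set C2 : ℝ := (μ[fun ω => ξ ω ^ (2 * l + 4)|m]) ω with hC2def
    clear_value E X C1 C2
    have h6' : C2 ≤ (1 / 2) * ((2 * l + 4).factorial : ℝ) * ε ^ (2 * l + 4 - 2) * E :=
      le_trans (le_abs_self _) h6
    simp only [show 2 * l + 2 - 2 = 2 * l from by omega] at h5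
    simp only [show 2 * l + 4 - 2 = 2 * l + 2 from by omega] at h6'
    simp only [show 2 * (l + 1) + 1 - 2 = 2 * l + 1 from by omega]
    have key := aux_key_bernstein l ε E hε0 hE
    rw [← ha] at key
    have hC1' : a ^ 2 * C1 ≤
        a ^ 2 * (((2 * l + 2).factorial : ℝ) * ε ^ (2 * l) * E) :=
      mul_le_mul_of_nonneg_left h5 (sq_nonneg a)
    have hfin : (2 * a) * X ≤
        (2 * a) * (((2 * (l + 1) + 1).factorial : ℝ) * ε ^ (2 * l + 1) * E) := by
      nlinarith [key, hC1', h6', h1]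
    exact le_of_mul_le_mul_left hfin (by positivity)
end

section
/- Let η be a real random variable satisfying the Bernstein condition: there exists H > 0 such that |E[η^k]| ≤ (1/2) k! H^{k−2} E[η²] for all integers k ≥ 3. Then there exists a constant K > 0 such that K · E[|η|³ e^{K|η|}] ≤ E[η²] (Sakhanenko's condition). -/
open MeasureTheory

theorem bernstein_implies_sakhanenko {Ω : Type*} [MeasurableSpace Ω] {μ : Measure Ω}
    [IsProbabilityMeasure μ] (η : Ω → ℝ)
    (hint : ∀ k : ℕ, Integrable (fun ω => η ω ^ k) μ)
    (hmean : ∫ ω, η ω ∂μ = 0)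
    (H : ℝ) (hH : 0 < H)
    (hB : ∀ k : ℕ, 3 ≤ k →
      |∫ ω, η ω ^ k ∂μ| ≤ (1 / 2) * (Nat.factorial k : ℝ) * H ^ (k - 2) * ∫ ω, η ω ^ 2 ∂μ) :
    ∃ K > 0, Integrable (fun ω => |η ω| ^ 3 * Real.exp (K * |η ω|)) μ ∧
      K * ∫ ω, |η ω| ^ 3 * Real.exp (K * |η ω|) ∂μ ≤ ∫ ω, η ω ^ 2 ∂μ := by
  set V : ℝ := ∫ ω, η ω ^ 2 ∂μ with hVdef
  have hV0 : 0 ≤ V := integral_nonneg (fun ω => sq_nonneg _)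
  have hη : AEStronglyMeasurable η μ := by
    have := (hint 1).aestronglyMeasurable
    simpa using this
  have hintabs : ∀ m : ℕ, Integrable (fun ω => |η ω| ^ m) μ := by
    intro m
    have := (hint m).abs
    simpa [abs_pow] using this
  -- even moments
  have heven : ∀ j : ℕ, 1 ≤ j →
      ∫ ω, |η ω| ^ (2*j) ∂μ ≤ 1/2 * (Nat.factorial (2*j) : ℝ) * H ^ (2*j - 2) * V := by
    intro j hj
    have habs : (fun ω => |η ω| ^ (2*j)) = fun ω => η ω ^ (2*j) := by
      funext ω; exact (even_two_mul j).pow_abs (η ω)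
    rw [habs]
    rcases eq_or_lt_of_le hj with h1 | h2
    · rw [← h1]
      norm_num [Nat.factorial]
      exact hVdef.symm.le
    · calc ∫ ω, η ω ^ (2*j) ∂μ ≤ |∫ ω, η ω ^ (2*j) ∂μ| := le_abs_self _
        _ ≤ 1/2 * (Nat.factorial (2*j) : ℝ) * H ^ (2*j - 2) * V := hB (2*j) (by omega)
  -- odd moments
  have hodd : ∀ j : ℕ, 1 ≤ j →
      ∫ ω, |η ω| ^ (2*j+1) ∂μ ≤ 1/2 * (Nat.factorial (2*j+2) : ℝ) * H ^ (2*j - 1) * V := by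
    intro j hj
    have key : ∀ ω, 2 * H * |η ω| ^ (2*j+1) ≤ |η ω| ^ (2*j+2) + H^2 * |η ω| ^ (2*j) := by
      intro ω
      have hy : (0:ℝ) ≤ |η ω| := abs_nonneg _
      have hyj : (0:ℝ) ≤ |η ω| ^ (2*j) := pow_nonneg hy _
      have e1 : |η ω| ^ (2*j+1) = |η ω| ^ (2*j) * |η ω| := pow_succ _ _
      have e2 : |η ω| ^ (2*j+2) = |η ω| ^ (2*j) * |η ω|^2 := by rw [pow_add]
      rw [e1, e2]
      nlinarith [mul_nonneg hyj (sq_nonneg (|η ω| - H))]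
    have hi1 : Integrable (fun ω => 2 * H * |η ω| ^ (2*j+1)) μ := (hintabs _).const_mul _
    have hi2 : Integrable (fun ω => |η ω| ^ (2*j+2) + H^2 * |η ω| ^ (2*j)) μ :=
      (hintabs _).add ((hintabs _).const_mul _)
    have step := integral_mono hi1 hi2 key
    rw [integral_const_mul, integral_add (hintabs _) ((hintabs _).const_mul _),
      integral_const_mul] at step
    have h1 := heven (j+1) (by omega)
    have h2 := heven j hj
    have e1 : 2*(j+1) = 2*j+2 := by ring
    have e2 : 2*j+2 - 2 = 2*j := by omega
    rw [e1, e2] at h1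
    -- exponent juggling
    have eH1 : H ^ (2*j - 2) * H^2 = H ^ (2*j) := by
      rw [← pow_add]; congr 1; omega
    have eH2 : H ^ (2*j) = H ^ (2*j-1) * H := by
      rw [← pow_succ]; congr 1; omega
    have hF : (Nat.factorial (2*j) : ℝ) ≤ (Nat.factorial (2*j+2) : ℝ) := by
      exact_mod_cast Nat.factorial_le (by omega)
    have hHp : (0:ℝ) < H ^ (2*j-1) := pow_pos hH _
    have hHp2 : (0:ℝ) ≤ H ^ (2*j-2) := le_of_lt (pow_pos hH _)
    have key2 : 2 * H * ∫ ω, |η ω| ^ (2*j+1) ∂μ ≤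
        2 * H * (1/2 * (Nat.factorial (2*j+2) : ℝ) * H ^ (2*j-1) * V) := by
      have hb : H^2 * ∫ ω, |η ω| ^ (2*j) ∂μ ≤
          H^2 * (1/2 * (Nat.factorial (2*j) : ℝ) * H ^ (2*j-2) * V) :=
        mul_le_mul_of_nonneg_left h2 (by positivity)
      calc 2 * H * ∫ ω, |η ω| ^ (2*j+1) ∂μ
          ≤ (∫ ω, |η ω| ^ (2*j+2) ∂μ) + H^2 * ∫ ω, |η ω| ^ (2*j) ∂μ := step
        _ ≤ 1/2 * (Nat.factorial (2*j+2) : ℝ) * H ^ (2*j) * V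
              + H^2 * (1/2 * (Nat.factorial (2*j) : ℝ) * H ^ (2*j-2) * V) :=
            add_le_add h1 hb
        _ = (1/2 * (Nat.factorial (2*j+2) : ℝ) + 1/2 * (Nat.factorial (2*j) : ℝ))
              * (H ^ (2*j-1) * H * V) := by
            have eH3 : H ^ (2*j-2) * H^2 = H ^ (2*j-1) * H := by rw [eH1, eH2]
            rw [eH2]
            linear_combination (1/2 * ((Nat.factorial (2*j) : ℝ)) * V) * eH3
        _ ≤ (Nat.factorial (2*j+2) : ℝ) * (H ^ (2*j-1) * H * V) := by
            have h0 : (0:ℝ) ≤ H ^ (2*j-1) * H * V := by positivity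
            nlinarith [mul_le_mul_of_nonneg_right hF h0]
        _ = 2 * H * (1/2 * (Nat.factorial (2*j+2) : ℝ) * H ^ (2*j-1) * V) := by ring
    exact le_of_mul_le_mul_left key2 (by positivity)
  
  -- all moments of order k+3
  have hmom : ∀ k : ℕ, ∫ ω, |η ω| ^ (k+3) ∂μ
      ≤ 1/2 * (Nat.factorial (k+4) : ℝ) * H ^ (k+1) * V := by
    intro k
    rcases Nat.even_or_odd k with ⟨i, hi⟩ | ⟨i, hi⟩
    · subst hi
      have h := hodd (i+1) (by omega)
      have e3 : 2*(i+1)-1 = i+i+1 := by omega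
      have e1 : 2*(i+1)+1 = i+i+3 := by ring
      have e2 : 2*(i+1)+2 = i+i+4 := by ring
      rw [e3, e1, e2] at h
      exact h
    · subst hi
      have h := heven (i+2) (by omega)
      have e2 : 2*(i+2)-2 = 2*i+1+1 := by omega
      have e1 : 2*(i+2) = 2*i+1+3 := by ring
      rw [e2, e1] at h
      refine h.trans ?_
      have hF : (Nat.factorial (2*i+1+3) : ℝ) ≤ (Nat.factorial (2*i+1+4) : ℝ) := by
        exact_mod_cast Nat.factorial_le (by omega)
      have hHp : (0:ℝ) ≤ H ^ (2*i+1+1) := by positivity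
      nlinarith [mul_le_mul_of_nonneg_right (mul_le_mul_of_nonneg_right hF hHp) hV0]
  -- factorial growth bound
  have hfac : ∀ k : ℕ, (Nat.factorial (k+4) : ℝ) ≤ 256 * 16^k * (Nat.factorial k : ℝ) := by
    intro k
    have h4 : ∀ n : ℕ, n + 4 ≤ 4 * 2 ^ n := by
      intro n
      induction n with
      | zero => norm_num
      | succ n ih => have h : 1 ≤ 2^n := Nat.one_le_two_pow; rw [pow_succ]; omega
    have hnat : Nat.factorial (k+4) ≤ 256 * 16^k * Nat.factorial k := by
      have e : Nat.factorial (k+4) = (k+4)*((k+3)*((k+2)*((k+1)*Nat.factorial k))) := by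
        simp [Nat.factorial_succ]
      rw [e]
      calc (k+4)*((k+3)*((k+2)*((k+1)*Nat.factorial k)))
          ≤ (4*2^k)*((4*2^k)*((4*2^k)*((4*2^k)*Nat.factorial k))) := by
            have h1 : k+1 ≤ 4*2^k := le_trans (by omega) (h4 k)
            have h2 : k+2 ≤ 4*2^k := le_trans (by omega) (h4 k)
            have h3 : k+3 ≤ 4*2^k := le_trans (by omega) (h4 k)
            exact Nat.mul_le_mul (h4 k) (Nat.mul_le_mul h3 (Nat.mul_le_mul h2
              (Nat.mul_le_mul h1 le_rfl)))
        _ = 256 * (2^k)^4 * Nat.factorial k := by ring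
        _ = 256 * 16^k * Nat.factorial k := by
            rw [← pow_mul, mul_comm k 4, pow_mul]; norm_num
    exact_mod_cast hnat
  -- the constant
  set K : ℝ := (512 * H)⁻¹ with hKdef
  have hK0 : 0 < K := by rw [hKdef]; positivity
  have hKH' : K * H = 1/512 := by
    rw [hKdef]; field_simp
  clear_value K
  have haem : AEMeasurable η μ := hη.aemeasurable
  have habs : AEMeasurable (fun ω => |η ω|) μ := measurable_abs.comp_aemeasurable haem
  have hsummable : ∀ ω : Ω, Summable (fun k : ℕ => K ^ k / (Nat.factorial k : ℝ) * |η ω| ^ (k+3)) := by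
    intro ω
    have h := (Real.summable_pow_div_factorial (K * |η ω|)).mul_left (|η ω| ^ 3)
    refine h.congr fun k => ?_
    rw [mul_pow, pow_add]
    ring
  have hFeq : ∀ ω : Ω, |η ω| ^ 3 * Real.exp (K * |η ω|)
      = ∑' k : ℕ, K ^ k / (Nat.factorial k : ℝ) * |η ω| ^ (k+3) := by
    intro ω
    rw [Real.exp_eq_exp_ℝ, NormedSpace.exp_eq_tsum_div, ← tsum_mul_left]
    exact tsum_congr fun k => by rw [mul_pow, pow_add]; ring
  have hGnn : ∀ (k : ℕ) (ω : Ω), 0 ≤ K ^ k / (Nat.factorial k : ℝ) * |η ω| ^ (k+3) :=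
    fun k ω => by positivity
  have hstep1 : ∀ ω : Ω, ENNReal.ofReal (|η ω| ^ 3 * Real.exp (K * |η ω|))
      = ∑' k : ℕ, ENNReal.ofReal (K ^ k / (Nat.factorial k : ℝ) * |η ω| ^ (k+3)) := by
    intro ω
    rw [hFeq ω]
    exact ENNReal.ofReal_tsum_of_nonneg (fun k => hGnn k ω) (hsummable ω)
  have hmeasG : ∀ k : ℕ, AEMeasurable
      (fun ω => ENNReal.ofReal (K ^ k / (Nat.factorial k : ℝ) * |η ω| ^ (k+3))) μ := by
    intro k
    exact ((habs.pow_const (k+3)).const_mul _).ennreal_ofReal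
  have hIntG : ∀ k : ℕ, Integrable (fun ω => K ^ k / (Nat.factorial k : ℝ) * |η ω| ^ (k+3)) μ :=
    fun k => (hintabs (k+3)).const_mul _
  have hlin : ∫⁻ ω, ENNReal.ofReal (|η ω| ^ 3 * Real.exp (K * |η ω|)) ∂μ
      = ∑' k : ℕ, ENNReal.ofReal (K ^ k / (Nat.factorial k : ℝ) * ∫ ω, |η ω| ^ (k+3) ∂μ) := by
    calc ∫⁻ ω, ENNReal.ofReal (|η ω| ^ 3 * Real.exp (K * |η ω|)) ∂μ
        = ∫⁻ ω, ∑' k : ℕ, ENNReal.ofReal (K ^ k / (Nat.factorial k : ℝ) * |η ω| ^ (k+3)) ∂μ :=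
          lintegral_congr fun ω => hstep1 ω
      _ = ∑' k : ℕ, ∫⁻ ω, ENNReal.ofReal (K ^ k / (Nat.factorial k : ℝ) * |η ω| ^ (k+3)) ∂μ :=
          lintegral_tsum hmeasG
      _ = ∑' k : ℕ, ENNReal.ofReal (K ^ k / (Nat.factorial k : ℝ) * ∫ ω, |η ω| ^ (k+3) ∂μ) := by
          refine tsum_congr fun k => ?_
          rw [← integral_const_mul]
          exact (ofReal_integral_eq_lintegral_ofReal (hIntG k)
            (Filter.Eventually.of_forall (hGnn k))).symm
  have hterm : ∀ k : ℕ, K ^ k / (Nat.factorial k : ℝ) * ∫ ω, |η ω| ^ (k+3) ∂μ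
      ≤ 128 * H * V * (1/32 : ℝ) ^ k := by
    intro k
    have hc : 0 ≤ K ^ k / (Nat.factorial k : ℝ) := by positivity
    have hfk : (Nat.factorial k : ℝ) ≠ 0 := by
      exact_mod_cast (Nat.factorial_pos k).ne'
    have hKH : 16 * (K * H) = 1/32 := by
      rw [hKH']; norm_num
    calc K ^ k / (Nat.factorial k : ℝ) * ∫ ω, |η ω| ^ (k+3) ∂μ
        ≤ K ^ k / (Nat.factorial k : ℝ) * (1/2 * (Nat.factorial (k+4) : ℝ) * H ^ (k+1) * V) :=
          mul_le_mul_of_nonneg_left (hmom k) hc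
      _ ≤ K ^ k / (Nat.factorial k : ℝ)
            * (1/2 * (256 * 16^k * (Nat.factorial k : ℝ)) * H ^ (k+1) * V) := by
          have := hfac k
          gcongr
      _ = 128 * H * V * ((16 * (K * H)) ^ k) := by
          rw [mul_pow, mul_pow]
          field_simp
          ring
      _ = 128 * H * V * (1/32 : ℝ) ^ k := by rw [hKH]
  have hgeo : Summable (fun k : ℕ => 128 * H * V * (1/32 : ℝ) ^ k) :=
    (summable_geometric_of_lt_one (by norm_num) (by norm_num)).mul_left _
  have hsum : ∑' k : ℕ, (128 * H * V * (1/32 : ℝ) ^ k) = 128 * H * V * (32/31) := by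
    rw [tsum_mul_left, tsum_geometric_of_lt_one (by norm_num) (by norm_num)]
    norm_num
  have hboundlin : ∫⁻ ω, ENNReal.ofReal (|η ω| ^ 3 * Real.exp (K * |η ω|)) ∂μ
      ≤ ENNReal.ofReal (128 * H * V * (32/31)) := by
    rw [hlin]
    calc ∑' k : ℕ, ENNReal.ofReal (K ^ k / (Nat.factorial k : ℝ) * ∫ ω, |η ω| ^ (k+3) ∂μ)
        ≤ ∑' k : ℕ, ENNReal.ofReal (128 * H * V * (1/32 : ℝ) ^ k) :=
          ENNReal.tsum_le_tsum fun k => ENNReal.ofReal_le_ofReal (hterm k)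
      _ = ENNReal.ofReal (∑' k : ℕ, (128 * H * V * (1/32 : ℝ) ^ k)) :=
          (ENNReal.ofReal_tsum_of_nonneg (fun k => by positivity) hgeo).symm
      _ = ENNReal.ofReal (128 * H * V * (32/31)) := by rw [hsum]
  have hFnn : 0 ≤ᵐ[μ] fun ω => |η ω| ^ 3 * Real.exp (K * |η ω|) :=
    Filter.Eventually.of_forall fun ω => by positivity
  have hFmeas : AEStronglyMeasurable (fun ω => |η ω| ^ 3 * Real.exp (K * |η ω|)) μ := by
    apply AEMeasurable.aestronglyMeasurable
    exact (habs.pow_const 3).mul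
      (Real.measurable_exp.comp_aemeasurable (habs.const_mul K))
  have hFint : Integrable (fun ω => |η ω| ^ 3 * Real.exp (K * |η ω|)) μ := by
    refine ⟨hFmeas, ?_⟩
    rw [hasFiniteIntegral_iff_ofReal hFnn]
    exact lt_of_le_of_lt hboundlin ENNReal.ofReal_lt_top
  refine ⟨K, hK0, hFint, ?_⟩
  have hInt : ∫ ω, |η ω| ^ 3 * Real.exp (K * |η ω|) ∂μ ≤ 128 * H * V * (32/31) := by
    rw [integral_eq_lintegral_of_nonneg_ae hFnn hFmeas]
    exact ENNReal.toReal_le_of_le_ofReal (by positivity) hboundlin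
  calc K * ∫ ω, |η ω| ^ 3 * Real.exp (K * |η ω|) ∂μ
      ≤ K * (128 * H * V * (32/31)) := mul_le_mul_of_nonneg_left hInt hK0.le
    _ ≤ V := by
        have heq : K * (128 * H * V * (32/31)) = (8/31) * V := by
          linear_combination (128 * (32/31) * V) * hKH'
        rw [heq]; linarith
end

section
/- Let ξ be a real random variable with E[ξ | 𝒢] = 0 satisfying the conditional Bernstein condition with parameter ε ∈ (0,1/2]. Then for each α ∈ (0,1) there is a constant c_α such that for all 0 ≤ λ ≤ α ε^{−1}: E[e^{λξ} | 𝒢] ≤ 1 + c_α (λε)² almost surely. -/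
open MeasureTheory Filter Finset
open scoped ENNReal NNReal

set_option maxHeartbeats 1000000

private lemma aux_exp_tail (y : ℝ) (n : ℕ) :
    |Real.exp y - ∑ k ∈ Finset.range n, y ^ k / (Nat.factorial k : ℝ)| ≤
      ∑' k : ℕ, |y| ^ (k + n) / (Nat.factorial (k + n) : ℝ) := by
  have hsum : Summable (fun k : ℕ => y ^ k / (Nat.factorial k : ℝ)) :=
    NormedSpace.expSeries_div_summable y
  have hsum' : Summable (fun k : ℕ => |y| ^ k / (Nat.factorial k : ℝ)) :=
    NormedSpace.expSeries_div_summable |y|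
  have hexp : Real.exp y = ∑' k : ℕ, y ^ k / (Nat.factorial k : ℝ) := by
    rw [Real.exp_eq_exp_ℝ, NormedSpace.exp_eq_tsum_div]
  have hsplit := Summable.sum_add_tsum_nat_add (f := fun k : ℕ => y ^ k / (Nat.factorial k : ℝ)) n hsum
  rw [hexp, ← hsplit, add_comm, add_sub_assoc, sub_self, add_zero]
  have hsumtail : Summable (fun k : ℕ => |y| ^ (k + n) / (Nat.factorial (k + n) : ℝ)) :=
    (summable_nat_add_iff n).2 hsum'
  have habs_eq : ∀ k : ℕ, ‖y ^ (k + n) / (Nat.factorial (k + n) : ℝ)‖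
      = |y| ^ (k + n) / (Nat.factorial (k + n) : ℝ) := fun k => by
    rw [Real.norm_eq_abs, abs_div, abs_pow, Nat.abs_cast]
  have h := norm_tsum_le_tsum_norm (f := fun k : ℕ => y ^ (k + n) / (Nat.factorial (k + n) : ℝ))
    (by simpa only [habs_eq] using hsumtail)
  simpa only [Real.norm_eq_abs, habs_eq] using h

theorem cond_mgf_upper_bound (α : ℝ) (hα : α ∈ Set.Ioo (0 : ℝ) 1) :
    ∃ c > 0, ∀ (Ω : Type) (m0 : MeasurableSpace Ω) (μ : Measure Ω),
      IsProbabilityMeasure μ →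
      ∀ (m : MeasurableSpace Ω), m ≤ m0 →
      ∀ (ξ : Ω → ℝ) (ε : ℝ),
      ε ∈ Set.Ioc (0 : ℝ) (1 / 2) →
      (∀ k : ℕ, Integrable (fun ω => ξ ω ^ k) μ) →
      μ[ξ|m] =ᵐ[μ] 0 →
      (∀ k : ℕ, 3 ≤ k → ∀ᵐ ω ∂μ,
        |(μ[fun ω => ξ ω ^ k|m]) ω| ≤
          (1 / 2) * (Nat.factorial k : ℝ) * ε ^ (k - 2) * (μ[fun ω => ξ ω ^ 2|m]) ω) →
      ∀ l : ℝ, 0 ≤ l → l ≤ α / ε →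
      Integrable (fun ω => Real.exp (l * ξ ω)) μ →
      ∀ᵐ ω ∂μ, (μ[fun ω => Real.exp (l * ξ ω)|m]) ω ≤ 1 + c * (l * ε) ^ 2 := by
  obtain ⟨hα0, hα1⟩ := hα
  refine ⟨6 / (1 - α), div_pos (by norm_num) (by linarith), ?_⟩
  intro Ω m0 μ hPμ m hm ξ ε hε hint hmean hbern l hl0 hlα hexpint
  haveI := hPμ
  obtain ⟨hε0, hε2⟩ := hε
  have hε1 : ε ≤ 1 := hε2.trans (by norm_num)
  have hq : l * ε ≤ α := (le_div_iff₀ hε0).1 hlα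
  have hle0 : 0 ≤ l * ε := mul_nonneg hl0 hε0.le
  -- nonnegativity of conditional second moment
  have hX2nn : 0 ≤ᵐ[μ] μ[fun ω => ξ ω ^ 2|m] :=
    condExp_nonneg (Filter.Eventually.of_forall fun ω => sq_nonneg _)
  -- conditional Cauchy-Schwarz via rationals
  have hCSae : ∀ᵐ ω ∂μ, ∀ q : ℚ,
      2 * (q : ℝ) * (μ[fun ω' => ξ ω' ^ 2|m]) ω - (q : ℝ) ^ 2 ≤ (μ[fun ω' => ξ ω' ^ 4|m]) ω := by
    rw [ae_all_iff]
    intro q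
    have hint1 : Integrable (fun ω => 2 * (q : ℝ) * ξ ω ^ 2 - (q : ℝ) ^ 2) μ :=
      ((hint 2).const_mul (2 * (q : ℝ))).sub (integrable_const _)
    have hmono := condExp_mono (μ := μ) (m := m) hint1 (hint 4)
      (Filter.Eventually.of_forall fun ω => by
        show 2 * (q : ℝ) * ξ ω ^ 2 - (q : ℝ) ^ 2 ≤ ξ ω ^ 4
        nlinarith [sq_nonneg (ξ ω ^ 2 - (q : ℝ))])
    have heq : μ[fun ω => 2 * (q : ℝ) * ξ ω ^ 2 - (q : ℝ) ^ 2|m]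
        =ᵐ[μ] fun ω => 2 * (q : ℝ) * (μ[fun ω' => ξ ω' ^ 2|m]) ω - (q : ℝ) ^ 2 := by
      have h1 : (fun ω => 2 * (q : ℝ) * ξ ω ^ 2 - (q : ℝ) ^ 2)
          = ((2 * (q : ℝ)) • fun ω => ξ ω ^ 2) - fun _ => (q : ℝ) ^ 2 := by
        funext ω; simp [smul_eq_mul]
      rw [h1]
      refine (condExp_sub ((hint 2).smul (2 * (q : ℝ))) (integrable_const _) m).trans ?_
      have h2 := condExp_smul (μ := μ) (m := m) (2 * (q : ℝ)) (fun ω => ξ ω ^ 2)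
      filter_upwards [h2] with ω hω
      simp only [Pi.sub_apply, Pi.smul_apply, smul_eq_mul] at hω ⊢
      rw [hω, condExp_const hm]
    filter_upwards [hmono, heq] with ω h1 h2
    rw [← h2]
    exact h1
  have hCS : ∀ᵐ ω ∂μ, ((μ[fun ω' => ξ ω' ^ 2|m]) ω) ^ 2 ≤ (μ[fun ω' => ξ ω' ^ 4|m]) ω := by
    filter_upwards [hCSae] with ω hq'
    set v := (μ[fun ω' => ξ ω' ^ 2|m]) ω with hv
    set w := (μ[fun ω' => ξ ω' ^ 4|m]) ω with hw
    by_contra hlt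
    push_neg at hlt
    have hd : 0 < v ^ 2 - w := by linarith
    obtain ⟨r, hr⟩ := exists_rat_near v (Real.sqrt_pos.2 hd)
    have h2 := hq' r
    nlinarith [Real.sq_sqrt hd.le, sq_abs (v - (r : ℝ)), abs_nonneg (v - (r : ℝ)),
      Real.sqrt_nonneg (v ^ 2 - w), hr]
  -- conditional second moment bound
  have hx2b : ∀ᵐ ω ∂μ, (μ[fun ω' => ξ ω' ^ 2|m]) ω ≤ 12 * ε ^ 2 := by
    filter_upwards [hCS, hbern 4 (by norm_num), hX2nn] with ω h1 h2 h0
    have hfac : (Nat.factorial 4 : ℝ) = 24 := by norm_num [Nat.factorial]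
    rw [hfac] at h2
    norm_num at h2
    set v := (μ[fun ω' => ξ ω' ^ 2|m]) ω with hv
    set w := (μ[fun ω' => ξ ω' ^ 4|m]) ω with hw
    have h3 : w ≤ 12 * ε ^ 2 * v := by
      have := le_abs_self w
      nlinarith
    rcases h0.eq_or_lt with h|h
    · rw [← h]; positivity
    · nlinarith
  -- conditional moment bounds
  set bnd : ℕ → ℝ := fun k => if k = 0 then 1 else if k = 1 then 0
    else 6 * (Nat.factorial k : ℝ) * ε ^ k with hbnd_def
  have hmom' : ∀ k : ℕ, ∀ᵐ ω ∂μ, (μ[fun ω' => ξ ω' ^ k|m]) ω ≤ bnd k := by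
    intro k
    match k with
    | 0 =>
      have h1 : (fun ω : Ω => ξ ω ^ 0) = fun _ => (1 : ℝ) := funext fun ω => pow_zero _
      rw [h1, condExp_const hm]
      exact Filter.Eventually.of_forall fun ω => by simp [hbnd_def]
    | 1 =>
      filter_upwards [hmean] with ω h1
      simp only [pow_one]
      simp only [Pi.zero_apply] at h1
      simp [hbnd_def, h1]
    | 2 =>
      filter_upwards [hx2b] with ω h1
      have : bnd 2 = 12 * ε ^ 2 := by
        norm_num [hbnd_def, Nat.factorial]
      rw [this]
      exact h1
    | (k + 3) =>
      filter_upwards [hbern (k + 3) (by omega), hx2b, hX2nn] with ω h1 h2 h0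
      have hk2 : k + 3 - 2 = k + 1 := by omega
      rw [hk2] at h1
      have hcoef : (0 : ℝ) ≤ 1 / 2 * (Nat.factorial (k + 3) : ℝ) * ε ^ (k + 1) := by positivity
      have h3 : (μ[fun ω' => ξ ω' ^ (k + 3)|m]) ω
          ≤ 1 / 2 * (Nat.factorial (k + 3) : ℝ) * ε ^ (k + 1) * (12 * ε ^ 2) := by
        calc (μ[fun ω' => ξ ω' ^ (k + 3)|m]) ω
            ≤ |(μ[fun ω' => ξ ω' ^ (k + 3)|m]) ω| := le_abs_self _
          _ ≤ 1 / 2 * (Nat.factorial (k + 3) : ℝ) * ε ^ (k + 1)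
              * (μ[fun ω' => ξ ω' ^ 2|m]) ω := h1
          _ ≤ 1 / 2 * (Nat.factorial (k + 3) : ℝ) * ε ^ (k + 1) * (12 * ε ^ 2) := by
              exact mul_le_mul_of_nonneg_left h2 hcoef
      have hb : bnd (k + 3) = 6 * (Nat.factorial (k + 3) : ℝ) * ε ^ (k + 3) := by
        simp [hbnd_def]
      rw [hb]
      calc (μ[fun ω' => ξ ω' ^ (k + 3)|m]) ω
          ≤ 1 / 2 * (Nat.factorial (k + 3) : ℝ) * ε ^ (k + 1) * (12 * ε ^ 2) := h3
        _ = 6 * (Nat.factorial (k + 3) : ℝ) * ε ^ (k + 3) := by ring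
  have hbnd_le : ∀ k : ℕ, bnd k ≤ 6 * (Nat.factorial k : ℝ) * ε ^ k := by
    intro k
    match k with
    | 0 => norm_num [hbnd_def, Nat.factorial]
    | 1 =>
      simp only [hbnd_def]
      norm_num [Nat.factorial]
      positivity
    | (k + 2) => simp [hbnd_def]
  have hmom : ∀ k : ℕ, ∀ᵐ ω ∂μ, (μ[fun ω' => ξ ω' ^ k|m]) ω
      ≤ 6 * (Nat.factorial k : ℝ) * ε ^ k :=
    fun k => (hmom' k).mono fun ω h => h.trans (hbnd_le k)
  -- unconditional moment bounds
  have hEk : ∀ k : ℕ, ∫ ω, ξ ω ^ k ∂μ ≤ 6 * (Nat.factorial k : ℝ) * ε ^ k := by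
    intro k
    have h1 : ∫ ω, ξ ω ^ k ∂μ = ∫ ω, (μ[fun ω' => ξ ω' ^ k|m]) ω ∂μ :=
      (integral_condExp hm).symm
    rw [h1]
    calc ∫ ω, (μ[fun ω' => ξ ω' ^ k|m]) ω ∂μ
        ≤ ∫ _, 6 * (Nat.factorial k : ℝ) * ε ^ k ∂μ :=
          integral_mono_ae integrable_condExp (integrable_const _) (hmom k)
      _ = 6 * (Nat.factorial k : ℝ) * ε ^ k := by simp
  -- absolute moment bounds
  have habs : ∀ k : ℕ, ∫ ω, |ξ ω ^ k| ∂μ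
      ≤ 9 / ε * ((k : ℝ) + 1) * (Nat.factorial k : ℝ) * ε ^ k := by
    intro k
    have h9 : (9 : ℝ) ≤ 9 / ε := by
      rw [le_div_iff₀ hε0]; nlinarith
    have hk1 : (1 : ℝ) ≤ (k : ℝ) + 1 := by
      have : (0 : ℝ) ≤ (k : ℝ) := Nat.cast_nonneg k
      linarith
    rcases Nat.even_or_odd k with hk | hk
    · have h1 : ∀ ω, |ξ ω ^ k| = ξ ω ^ k := by
        intro ω
        obtain ⟨j, hj⟩ := hk
        have : ξ ω ^ k = (ξ ω ^ j) ^ 2 := by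
          rw [← pow_mul]
          congr 1
          omega
        rw [this]
        exact abs_of_nonneg (sq_nonneg _)
      have h6 : (6 : ℝ) ≤ 9 / ε * ((k : ℝ) + 1) := by
        have h2 : 9 / ε * 1 ≤ 9 / ε * ((k : ℝ) + 1) :=
          mul_le_mul_of_nonneg_left hk1 (by positivity)
        linarith
      have hA : (0 : ℝ) ≤ (Nat.factorial k : ℝ) * ε ^ k := by positivity
      calc ∫ ω, |ξ ω ^ k| ∂μ = ∫ ω, ξ ω ^ k ∂μ := by simp only [h1]
        _ ≤ 6 * (Nat.factorial k : ℝ) * ε ^ k := hEk k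
        _ = 6 * ((Nat.factorial k : ℝ) * ε ^ k) := by ring
        _ ≤ 9 / ε * ((k : ℝ) + 1) * ((Nat.factorial k : ℝ) * ε ^ k) :=
            mul_le_mul_of_nonneg_right h6 hA
        _ = 9 / ε * ((k : ℝ) + 1) * (Nat.factorial k : ℝ) * ε ^ k := by ring
    · obtain ⟨j, rfl⟩ := hk
      have hpt : ∀ ω, |ξ ω ^ (2 * j + 1)| ≤ (ξ ω ^ (2 * j) + ξ ω ^ (2 * j + 2)) / 2 := by
        intro ω
        set a := |ξ ω| with ha
        have e0 : |ξ ω ^ (2 * j + 1)| = a ^ (2 * j + 1) := by rw [abs_pow]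
        have e1 : ξ ω ^ (2 * j) = a ^ (2 * j) := by
          rw [ha, pow_abs]
          refine (abs_of_nonneg ?_).symm
          have : ξ ω ^ (2 * j) = (ξ ω ^ j) ^ 2 := by rw [← pow_mul, mul_comm]
          rw [this]; exact sq_nonneg _
        have e2 : ξ ω ^ (2 * j + 2) = a ^ (2 * j + 2) := by
          rw [ha, pow_abs]
          refine (abs_of_nonneg ?_).symm
          have : ξ ω ^ (2 * j + 2) = (ξ ω ^ (j + 1)) ^ 2 := by
            rw [← pow_mul]
            congr 1
            omega
          rw [this]; exact sq_nonneg _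
        rw [e0, e1, e2]
        have p1 : a ^ (2 * j + 1) = a ^ (2 * j) * a := by ring
        have p2 : a ^ (2 * j + 2) = a ^ (2 * j) * a ^ 2 := by ring
        rw [p1, p2]
        nlinarith [mul_nonneg (pow_nonneg (abs_nonneg (ξ ω)) (2 * j)) (sq_nonneg (a - 1))]
      have hint_rhs : Integrable (fun ω => (ξ ω ^ (2 * j) + ξ ω ^ (2 * j + 2)) / 2) μ :=
        ((hint (2 * j)).add (hint (2 * j + 2))).div_const 2
      have h2 : ∫ ω, |ξ ω ^ (2 * j + 1)| ∂μ
          ≤ ∫ ω, (ξ ω ^ (2 * j) + ξ ω ^ (2 * j + 2)) / 2 ∂μ :=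
        integral_mono (hint (2 * j + 1)).abs hint_rhs hpt
      have h3 : ∫ ω, (ξ ω ^ (2 * j) + ξ ω ^ (2 * j + 2)) / 2 ∂μ
          = ((∫ ω, ξ ω ^ (2 * j) ∂μ) + ∫ ω, ξ ω ^ (2 * j + 2) ∂μ) / 2 := by
        rw [integral_div, integral_add (hint (2 * j)) (hint (2 * j + 2))]
      refine h2.trans ?_
      rw [h3]
      have hb1 := hEk (2 * j)
      have hb2 := hEk (2 * j + 2)
      have h4 : ((∫ ω, ξ ω ^ (2 * j) ∂μ) + ∫ ω, ξ ω ^ (2 * j + 2) ∂μ) / 2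
          ≤ (6 * (Nat.factorial (2 * j) : ℝ) * ε ^ (2 * j)
            + 6 * (Nat.factorial (2 * j + 2) : ℝ) * ε ^ (2 * j + 2)) / 2 := by
        gcongr
      refine h4.trans ?_
      have c1 : ((2 * j + 1).factorial : ℝ) = (2 * (j : ℝ) + 1) * ((2 * j).factorial : ℝ) := by
        rw [Nat.factorial_succ]
        push_cast
        ring
      have c2 : ((2 * j + 2).factorial : ℝ)
          = (2 * (j : ℝ) + 2) * (2 * (j : ℝ) + 1) * ((2 * j).factorial : ℝ) := by
        rw [show 2 * j + 2 = (2 * j + 1) + 1 from rfl, Nat.factorial_succ, Nat.factorial_succ]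
        push_cast
        ring
      have hrhs : 9 / ε * (((2 * j + 1 : ℕ) : ℝ) + 1) * ((2 * j + 1).factorial : ℝ)
            * ε ^ (2 * j + 1)
          = 9 * ((2 * (j : ℝ) + 2) * (2 * (j : ℝ) + 1))
            * (((2 * j).factorial : ℝ) * ε ^ (2 * j)) := by
        rw [c1]
        push_cast
        field_simp
        ring
      rw [hrhs, c2]
      have hee : ε ^ 2 ≤ 1 := by nlinarith
      have hexpand : ε ^ (2 * j + 2) = ε ^ (2 * j) * ε ^ 2 := by ring
      rw [hexpand]
      have hgen : ∀ C G E e : ℝ, 2 ≤ C → 0 ≤ G → 0 ≤ E → 0 ≤ e → e ≤ 1 →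
          (6 * G * E + 6 * (C * G) * (E * e)) / 2 ≤ 9 * C * (G * E) := by
        intro C G E e hC hG hE he0 he1
        nlinarith [mul_nonneg (mul_nonneg (mul_nonneg (by linarith : (0:ℝ) ≤ C) hG) hE)
            (sub_nonneg.2 he1),
          mul_nonneg (mul_nonneg (sub_nonneg.2 hC) hG) hE, mul_nonneg hG hE]
      have hC2 : (2 : ℝ) ≤ (2 * (j : ℝ) + 2) * (2 * (j : ℝ) + 1) := by
        nlinarith [Nat.cast_nonneg (α := ℝ) j]
      exact hgen _ _ _ _ hC2 (Nat.cast_nonneg _) (pow_nonneg hε0.le _) (sq_nonneg ε) hee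
  -- partial sums
  set S : ℕ → Ω → ℝ := fun n ω => ∑ k ∈ Finset.range n, l ^ k / (Nat.factorial k : ℝ) * ξ ω ^ k
    with hS_def
  have hS_int : ∀ n, Integrable (S n) μ := by
    intro n
    apply integrable_finset_sum
    intro k _
    exact (hint k).const_mul _
  have hS_cond : ∀ n, μ[S n|m] =ᵐ[μ] fun ω =>
      ∑ k ∈ Finset.range n, l ^ k / (Nat.factorial k : ℝ) * (μ[fun ω' => ξ ω' ^ k|m]) ω := by
    intro n
    induction n with
    | zero =>
      have h0 : S 0 = (0 : Ω → ℝ) := funext fun ω => by simp [hS_def]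
      rw [h0, condExp_zero]
      filter_upwards with ω
      simp
    | succ n ih =>
      have hfun : S (n + 1) = S n + (l ^ n / (Nat.factorial n : ℝ)) • fun ω => ξ ω ^ n :=
        funext fun ω => by simp [hS_def, Finset.sum_range_succ, smul_eq_mul]
      rw [hfun]
      refine (condExp_add (hS_int n) ((hint n).smul _) m).trans ?_
      have h2 := condExp_smul (μ := μ) (m := m) (l ^ n / (Nat.factorial n : ℝ))
        (fun ω => ξ ω ^ n)
      filter_upwards [ih, h2] with ω h3 h4
      simp only [Pi.add_apply, Pi.smul_apply, smul_eq_mul] at h3 h4 ⊢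
      rw [h3, h4, Finset.sum_range_succ]
  -- geometric sum bound
  have hgeom : ∀ n : ℕ, ∑ i ∈ Finset.range n, (l * ε) ^ i ≤ 1 / (1 - α) := by
    intro n
    have h1 : ∑ i ∈ Finset.range n, (l * ε) ^ i ≤ ∑ i ∈ Finset.range n, α ^ i := by
      apply Finset.sum_le_sum
      intro i _
      exact pow_le_pow_left₀ hle0 hq i
    refine h1.trans ?_
    rw [geom_sum_eq hα1.ne n]
    have h2 : (α ^ n - 1) / (α - 1) = (1 - α ^ n) / (1 - α) := by
      rw [← neg_div_neg_eq]
      ring_nf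
    rw [h2]
    have h3 : (0 : ℝ) < 1 - α := by linarith
    rw [div_le_div_iff₀ h3 h3]
    have h4 : (0 : ℝ) ≤ α ^ n := pow_nonneg hα0.le n
    nlinarith
  -- bound on conditional expectation of partial sums
  have hS_bound : ∀ n, ∀ᵐ ω ∂μ, (μ[S n|m]) ω ≤ 1 + 6 / (1 - α) * (l * ε) ^ 2 := by
    intro n
    filter_upwards [hS_cond n, ae_all_iff.2 hmom'] with ω hc hb
    rw [hc]
    have hstep : ∑ k ∈ Finset.range n, l ^ k / (Nat.factorial k : ℝ) * (μ[fun ω' => ξ ω' ^ k|m]) ω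
        ≤ ∑ k ∈ Finset.range n, l ^ k / (Nat.factorial k : ℝ) * bnd k := by
      apply Finset.sum_le_sum
      intro k _
      exact mul_le_mul_of_nonneg_left (hb k) (by positivity)
    refine hstep.trans ?_
    have hRHSnn : (0 : ℝ) ≤ 6 / (1 - α) * (l * ε) ^ 2 := by
      have : (0:ℝ) < 1 - α := by linarith
      positivity
    match n with
    | 0 => simp; linarith
    | 1 =>
      rw [Finset.sum_range_one]
      simp [hbnd_def]
      linarith
    | (n + 2) =>
      rw [Finset.sum_range_succ', Finset.sum_range_succ']
      have hf0 : l ^ 0 / (Nat.factorial 0 : ℝ) * bnd 0 = 1 := by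
        simp [hbnd_def]
      have hf1 : l ^ (0 + 1) / (Nat.factorial (0 + 1) : ℝ) * bnd (0 + 1) = 0 := by
        simp [hbnd_def]
      rw [hf1, hf0, add_zero]
      have hterm : ∀ i : ℕ, l ^ (i + 1 + 1) / (Nat.factorial (i + 1 + 1) : ℝ) * bnd (i + 1 + 1)
          = 6 * (l * ε) ^ 2 * (l * ε) ^ i := by
        intro i
        have hb2 : bnd (i + 1 + 1) = 6 * (Nat.factorial (i + 2) : ℝ) * ε ^ (i + 2) := by
          simp [hbnd_def]
        rw [hb2]
        have hfne : ((i + 2).factorial : ℝ) ≠ 0 := Nat.cast_ne_zero.2 (Nat.factorial_ne_zero _)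
        have : i + 1 + 1 = i + 2 := by omega
        rw [this]
        field_simp
        ring
      have hsum2 : ∑ i ∈ Finset.range n, l ^ (i + 1 + 1) / (Nat.factorial (i + 1 + 1) : ℝ)
            * bnd (i + 1 + 1) = 6 * (l * ε) ^ 2 * ∑ i ∈ Finset.range n, (l * ε) ^ i := by
        rw [Finset.mul_sum]
        exact Finset.sum_congr rfl fun i _ => hterm i
      rw [hsum2]
      have h5 : 6 * (l * ε) ^ 2 * ∑ i ∈ Finset.range n, (l * ε) ^ i
          ≤ 6 * (l * ε) ^ 2 * (1 / (1 - α)) :=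
        mul_le_mul_of_nonneg_left (hgeom n) (by positivity)
      have h6 : 6 * (l * ε) ^ 2 * (1 / (1 - α)) = 6 / (1 - α) * (l * ε) ^ 2 := by
        ring
      linarith
  -- summable majorant
  set u : ℕ → ℝ := fun k => 9 / ε * ((k : ℝ) + 1) * α ^ k with hu_def
  have hu_nonneg : ∀ k, 0 ≤ u k := fun k => by
    have : (0:ℝ) ≤ (k:ℝ) := Nat.cast_nonneg k
    positivity
  have hu : Summable u := by
    have h1 : Summable (fun k : ℕ => (k : ℝ) * α ^ k) := by
      have := summable_pow_mul_geometric_of_norm_lt_one (R := ℝ) 1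
        (r := α) (by rwa [Real.norm_eq_abs, abs_of_pos hα0])
      simpa using this
    have h2 : Summable (fun k : ℕ => α ^ k) := summable_geometric_of_lt_one hα0.le hα1
    have h3 := (h1.add h2).mul_left (9 / ε)
    refine h3.congr fun k => ?_
    simp only [hu_def]
    ring
  -- per-term integral bounds
  have ht_le : ∀ j : ℕ, l ^ j / (Nat.factorial j : ℝ) * ∫ ω, |ξ ω ^ j| ∂μ ≤ u j := by
    intro j
    have h1 := habs j
    have h2 : (0:ℝ) ≤ l ^ j / (Nat.factorial j : ℝ) := by positivity
    have hfne : ((j).factorial : ℝ) ≠ 0 := Nat.cast_ne_zero.2 (Nat.factorial_ne_zero _)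
    calc l ^ j / (Nat.factorial j : ℝ) * ∫ ω, |ξ ω ^ j| ∂μ
        ≤ l ^ j / (Nat.factorial j : ℝ)
          * (9 / ε * ((j : ℝ) + 1) * (Nat.factorial j : ℝ) * ε ^ j) :=
          mul_le_mul_of_nonneg_left h1 h2
      _ = 9 / ε * ((j : ℝ) + 1) * (l * ε) ^ j := by
          field_simp
          ring
      _ ≤ 9 / ε * ((j : ℝ) + 1) * α ^ j := by
          refine mul_le_mul_of_nonneg_left (pow_le_pow_left₀ hle0 hq j) ?_
          have : (0:ℝ) ≤ (j:ℝ) := Nat.cast_nonneg j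
          positivity
  -- pointwise tail bound
  have hpt : ∀ (n : ℕ) (ω : Ω), |Real.exp (l * ξ ω) - S n ω|
      ≤ ∑' k : ℕ, l ^ (k + n) / (Nat.factorial (k + n) : ℝ) * |ξ ω ^ (k + n)| := by
    intro n ω
    have hrepr : S n ω = ∑ k ∈ Finset.range n, (l * ξ ω) ^ k / (Nat.factorial k : ℝ) := by
      simp only [hS_def]
      refine Finset.sum_congr rfl fun k _ => ?_
      rw [mul_pow]
      ring
    rw [hrepr]
    refine (aux_exp_tail (l * ξ ω) n).trans_eq ?_
    refine tsum_congr fun k => ?_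
    rw [abs_mul, abs_of_nonneg hl0, mul_pow, ← abs_pow]
    ring
  -- pointwise summability
  have hsumpt : ∀ (n : ℕ) (ω : Ω),
      Summable (fun k : ℕ => l ^ (k + n) / (Nat.factorial (k + n) : ℝ) * |ξ ω ^ (k + n)|) := by
    intro n ω
    have h0 : Summable (fun k : ℕ => (l * |ξ ω|) ^ k / (Nat.factorial k : ℝ)) :=
      NormedSpace.expSeries_div_summable _
    have h1 := (summable_nat_add_iff n).2 h0
    refine h1.congr fun k => ?_
    rw [mul_pow, ← abs_pow]
    ring
  -- measurability
  have haem : ∀ j : ℕ, AEMeasurable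
      (fun ω => ENNReal.ofReal (l ^ j / (Nat.factorial j : ℝ) * |ξ ω ^ j|)) μ := by
    intro j
    have h1 : AEMeasurable (fun ω => |ξ ω ^ j|) μ :=
      (hint j).abs.aestronglyMeasurable.aemeasurable
    exact ENNReal.measurable_ofReal.comp_aemeasurable (h1.const_mul _)
  -- integral identity per term
  have hIk : ∀ j : ℕ, ∫⁻ ω, ENNReal.ofReal (l ^ j / (Nat.factorial j : ℝ) * |ξ ω ^ j|) ∂μ
      = ENNReal.ofReal (l ^ j / (Nat.factorial j : ℝ) * ∫ ω, |ξ ω ^ j| ∂μ) := by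
    intro j
    rw [← ofReal_integral_eq_lintegral_ofReal ((hint j).abs.const_mul _)
      (Filter.Eventually.of_forall fun ω => by positivity)]
    rw [integral_const_mul]
  -- key eLpNorm bound
  have hkey : ∀ n : ℕ, eLpNorm (fun ω => Real.exp (l * ξ ω) - S n ω) 1 μ
      ≤ ENNReal.ofReal (∑' k : ℕ, u (k + n)) := by
    intro n
    rw [eLpNorm_one_eq_lintegral_enorm]
    calc ∫⁻ ω, ‖Real.exp (l * ξ ω) - S n ω‖₊ ∂μ
        ≤ ∫⁻ ω, ∑' k : ℕ,
            ENNReal.ofReal (l ^ (k + n) / (Nat.factorial (k + n) : ℝ) * |ξ ω ^ (k + n)|) ∂μ := by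
          apply lintegral_mono
          intro ω
          calc (‖Real.exp (l * ξ ω) - S n ω‖₊ : ℝ≥0∞)
              = ENNReal.ofReal |Real.exp (l * ξ ω) - S n ω| := by
                rw [← Real.norm_eq_abs, ← coe_nnnorm, ENNReal.ofReal_coe_nnreal]
            _ ≤ ENNReal.ofReal (∑' k : ℕ,
                l ^ (k + n) / (Nat.factorial (k + n) : ℝ) * |ξ ω ^ (k + n)|) :=
                ENNReal.ofReal_le_ofReal (hpt n ω)
            _ = ∑' k : ℕ, ENNReal.ofReal
                (l ^ (k + n) / (Nat.factorial (k + n) : ℝ) * |ξ ω ^ (k + n)|) :=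
                ENNReal.ofReal_tsum_of_nonneg (fun k => by positivity) (hsumpt n ω)
      _ = ∑' k : ℕ, ∫⁻ ω, ENNReal.ofReal
            (l ^ (k + n) / (Nat.factorial (k + n) : ℝ) * |ξ ω ^ (k + n)|) ∂μ :=
          lintegral_tsum fun k => haem (k + n)
      _ = ∑' k : ℕ, ENNReal.ofReal
            (l ^ (k + n) / (Nat.factorial (k + n) : ℝ) * ∫ ω, |ξ ω ^ (k + n)| ∂μ) :=
          tsum_congr fun k => hIk (k + n)
      _ ≤ ∑' k : ℕ, ENNReal.ofReal (u (k + n)) :=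
          ENNReal.tsum_le_tsum fun k => ENNReal.ofReal_le_ofReal (ht_le (k + n))
      _ = ENNReal.ofReal (∑' k : ℕ, u (k + n)) :=
          (ENNReal.ofReal_tsum_of_nonneg (fun k => hu_nonneg (k + n))
            ((summable_nat_add_iff n).2 hu)).symm
  -- upper bound on eLpNorm of condexp differences
  have hub : ∀ n : ℕ, eLpNorm (μ[S n|m] - μ[fun ω => Real.exp (l * ξ ω)|m]) 1 μ
      ≤ ENNReal.ofReal (∑' k : ℕ, u (k + n)) := by
    intro n
    have h1 : μ[S n|m] - μ[fun ω => Real.exp (l * ξ ω)|m]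
        =ᵐ[μ] μ[S n - fun ω => Real.exp (l * ξ ω)|m] :=
      (condExp_sub (hS_int n) hexpint m).symm
    calc eLpNorm (μ[S n|m] - μ[fun ω => Real.exp (l * ξ ω)|m]) 1 μ
        = eLpNorm (μ[S n - fun ω => Real.exp (l * ξ ω)|m]) 1 μ := eLpNorm_congr_ae h1
      _ ≤ eLpNorm (S n - fun ω => Real.exp (l * ξ ω)) 1 μ := eLpNorm_one_condExp_le_eLpNorm _
      _ = eLpNorm ((fun ω => Real.exp (l * ξ ω)) - S n) 1 μ := eLpNorm_sub_comm _ _ _ _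
      _ = eLpNorm (fun ω => Real.exp (l * ξ ω) - S n ω) 1 μ := rfl
      _ ≤ ENNReal.ofReal (∑' k : ℕ, u (k + n)) := hkey n
  -- convergence in L1
  have hR : Tendsto (fun n => ∑' k : ℕ, u (k + n)) atTop (nhds 0) := tendsto_sum_nat_add u
  have htend : Tendsto (fun n => eLpNorm (μ[S n|m] - μ[fun ω => Real.exp (l * ξ ω)|m]) 1 μ)
      atTop (nhds 0) := by
    have h1 : Tendsto (fun n => ENNReal.ofReal (∑' k : ℕ, u (k + n))) atTop (nhds 0) := by
      have := ENNReal.tendsto_ofReal hR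
      simpa using this
    exact tendsto_of_tendsto_of_tendsto_of_le_of_le tendsto_const_nhds h1
      (fun n => zero_le) hub
  -- convergence in measure and a.e. subsequence
  have hmeas : ∀ n : ℕ, AEStronglyMeasurable[m0] (μ[S n|m]) μ :=
    fun n => (stronglyMeasurable_condExp.mono hm).aestronglyMeasurable
  have hmeasg : AEStronglyMeasurable[m0] (μ[fun ω => Real.exp (l * ξ ω)|m]) μ :=
    (stronglyMeasurable_condExp.mono hm).aestronglyMeasurable
  have htim : TendstoInMeasure μ (fun n => μ[S n|m]) atTop (μ[fun ω => Real.exp (l * ξ ω)|m]) :=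
    tendstoInMeasure_of_tendsto_eLpNorm one_ne_zero hmeas hmeasg htend
  obtain ⟨ns, -, hns⟩ := htim.exists_seq_tendsto_ae
  filter_upwards [hns, ae_all_iff.2 hS_bound] with ω h1 h2
  exact le_of_tendsto h1 (Filter.Eventually.of_forall fun i => h2 (ns i))
end

section
/- Let (ξᵢ, ℱᵢ)_{i=0..n} be martingale differences satisfying conditions (A1) (conditional Bernstein with parameter ε ∈ (0,1/2]) and (A2) (|⟨X⟩_n − 1| ≤ δ², δ ∈ [0,1/2]). Define the drift B_n(λ) = Σᵢ E[ξᵢ e^{λξᵢ} | ℱ_{i−1}] / E[e^{λξᵢ} | ℱ_{i−1}]. Then for each α ∈ (0,1) there is c_α such that for all 0 ≤ λ ≤ α ε^{−1}: |B_n(λ) − λ| ≤ λδ² + c_α λ²ε almost surely. -/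
open MeasureTheory Filter Topology

namespace DriftAux

variable {Ω : Type} {m0 : MeasurableSpace Ω} {μ : Measure Ω} {F : MeasurableSpace Ω}



lemma ae_eq_sum' {ι : Type*} {s : Finset ι} {f g : ι → Ω → ℝ}
    (h : ∀ i ∈ s, f i =ᵐ[μ] g i) :
    (fun ω => ∑ i ∈ s, f i ω) =ᵐ[μ] fun ω => ∑ i ∈ s, g i ω := by
  have := (Filter.eventually_all_finset s).mpr h
  filter_upwards [this] with ω hω
  exact Finset.sum_congr rfl hω

lemma condexp_hasSum [IsProbabilityMeasure μ] (hF : F ≤ m0) (ξ : Ω → ℝ)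
    (hint : ∀ k : ℕ, Integrable (fun ω => ξ ω ^ k) μ)
    (c B : ℕ → ℝ)
    (hB : ∀ k, ∫ ω, |ξ ω| ^ k ∂μ ≤ B k)
    (hsum : Summable fun k => |c k| * B k)
    (f : Ω → ℝ) (hf : Integrable f μ)
    (hfs : ∀ ω, HasSum (fun k => c k * ξ ω ^ k) (f ω)) :
    ∀ᵐ ω ∂μ, HasSum (fun k => c k * (μ[fun ω' => ξ ω' ^ k|F]) ω) ((μ[f|F]) ω) := by
  haveI : SigmaFinite (μ.trim hF) := by infer_instance
  set g : ℕ → Ω → ℝ := fun k => μ[fun ω' => ξ ω' ^ k|F] with hg_def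
  have hBnn : ∀ k, 0 ≤ B k := fun k =>
    le_trans (integral_nonneg fun ω => pow_nonneg (abs_nonneg _) k) (hB k)
  have hIξ : ∀ k, ∫ ω, |ξ ω ^ k| ∂μ ≤ B k := by
    intro k; simpa [abs_pow] using hB k
  have hIg : ∀ k : ℕ, ∫ ω, |g k ω| ∂μ ≤ B k := fun k =>
    (integral_abs_condExp_le _).trans (hIξ k)
  have key : ∀ (k : ℕ) (h : Ω → ℝ), Integrable h μ → (∫ ω, |h ω| ∂μ) ≤ B k →
      ∫⁻ ω, ‖c k * h ω‖₊ ∂μ ≤ ENNReal.ofReal (|c k| * B k) := by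
    intro k h hh hhB
    rw [show (∫⁻ ω, (‖c k * h ω‖₊ : ENNReal) ∂μ) = ∫⁻ ω, ‖c k * h ω‖ₑ ∂μ from rfl,
      ← ofReal_integral_norm_eq_lintegral_enorm (hh.const_mul _)]
    apply ENNReal.ofReal_le_ofReal
    have : ∫ ω, ‖c k * h ω‖ ∂μ = |c k| * ∫ ω, |h ω| ∂μ := by
      simp_rw [norm_mul, Real.norm_eq_abs]
      exact integral_const_mul _ _
    rw [this]
    exact mul_le_mul_of_nonneg_left hhB (abs_nonneg _)
  have htop : (∑' k, ENNReal.ofReal (|c k| * B k)) ≠ ⊤ := by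
    rw [← ENNReal.ofReal_tsum_of_nonneg (fun k => mul_nonneg (abs_nonneg _) (hBnn k)) hsum]
    exact ENNReal.ofReal_ne_top
  have hgmeas : ∀ k, AEStronglyMeasurable[m0] (fun ω => c k * g k ω) μ := fun k =>
    ((stronglyMeasurable_condExp.mono hF).aestronglyMeasurable).const_mul _
  have hgmeas' : ∀ k, AEMeasurable (fun ω => (‖c k * g k ω‖₊ : ENNReal)) μ := fun k =>
    (hgmeas k).enorm
  have hsum_lint : (∑' k, ∫⁻ ω, ‖c k * g k ω‖₊ ∂μ) ≠ ⊤ :=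
    ne_top_of_le_ne_top htop (ENNReal.tsum_le_tsum fun k => key k (g k) integrable_condExp (hIg k))
  have hae_sum : ∀ᵐ ω ∂μ, Summable (fun k => c k * g k ω) := by
    rw [← lintegral_tsum hgmeas'] at hsum_lint
    filter_upwards [ae_lt_top' (AEMeasurable.ennreal_tsum hgmeas') hsum_lint] with ω hω
    have h2 : Summable (fun k => (‖c k * g k ω‖₊ : NNReal)) :=
      ENNReal.tsum_coe_ne_top_iff_summable.mp hω.ne
    exact Summable.of_nnnorm h2
  -- partial sums
  set S : ℕ → Ω → ℝ := fun N ω => ∑ k ∈ Finset.range N, c k * ξ ω ^ k with hS_def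
  have hSint : ∀ N, Integrable (S N) μ := fun N =>
    integrable_finset_sum _ fun k _ => (hint k).const_mul _
  have hpartial : ∀ N : ℕ, μ[S N|F] =ᵐ[μ] fun ω => ∑ k ∈ Finset.range N, c k * g k ω := by
    intro N
    have h0 : S N = ∑ k ∈ Finset.range N, fun ω => c k * ξ ω ^ k := by
      funext ω; simp [hS_def]
    rw [h0]
    refine (condExp_finsetSum (fun k _ => (hint k).const_mul _) F).trans ?_
    have h1 : ∀ k ∈ Finset.range N,
        μ[fun ω => c k * ξ ω ^ k|F] =ᵐ[μ] fun ω => c k * g k ω := by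
      intro k _
      have h2 : (fun ω => c k * ξ ω ^ k) = c k • (fun ω => ξ ω ^ k) := by
        funext ω; simp [smul_eq_mul]
      rw [h2]
      refine (condExp_smul (c k) _ F).trans ?_
      filter_upwards with ω
      simp [smul_eq_mul, hg_def]
    have h3 := ae_eq_sum' (μ := μ) h1
    refine EventuallyEq.trans ?_ h3
    filter_upwards with ω
    simp
  -- domination
  have hxmeas : ∀ k, AEMeasurable (fun ω => (‖c k * ξ ω ^ k‖₊ : ENNReal)) μ := fun k =>
    (((hint k).aestronglyMeasurable).const_mul (c k)).enorm
  have hblt : (∫⁻ ω, ∑' k, (‖c k * ξ ω ^ k‖₊ : ENNReal) ∂μ) ≠ ⊤ := by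
    rw [lintegral_tsum hxmeas]
    exact ne_top_of_le_ne_top htop (ENNReal.tsum_le_tsum fun k => key k _ (hint k) (hIξ k))
  set bound : Ω → ℝ := fun ω => (∑' k, (‖c k * ξ ω ^ k‖₊ : ENNReal)).toReal with hbound_def
  have hboundint : Integrable bound μ :=
    integrable_toReal_of_lintegral_ne_top (AEMeasurable.ennreal_tsum hxmeas) hblt
  have hSbound : ∀ N : ℕ, ∀ᵐ ω ∂μ, ‖S N ω‖ ≤ bound ω := by
    intro N
    filter_upwards [ae_lt_top' (AEMeasurable.ennreal_tsum hxmeas) hblt] with ω hω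
    calc ‖S N ω‖ ≤ ∑ k ∈ Finset.range N, ‖c k * ξ ω ^ k‖ := norm_sum_le _ _
      _ = (∑ k ∈ Finset.range N, (‖c k * ξ ω ^ k‖₊ : ENNReal)).toReal := by
          rw [ENNReal.toReal_sum (fun k _ => ENNReal.coe_ne_top)]
          simp [coe_nnnorm]
      _ ≤ bound ω := by
          exact ENNReal.toReal_mono hω.ne
            (Summable.sum_le_tsum (Finset.range N) (fun _ _ => zero_le) ENNReal.summable)
  have hL1 : Tendsto (fun N => condExpL1 hF μ (S N)) atTop (𝓝 (condExpL1 hF μ f)) :=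
    tendsto_condExpL1_of_dominated_convergence hF bound
      (fun N => (hSint N).aestronglyMeasurable) hboundint hSbound
      (Eventually.of_forall fun ω => (hfs ω).tendsto_sum_nat)
  have hmeasconv : TendstoInMeasure μ (fun N => (condExpL1 hF μ (S N) : Ω → ℝ)) atTop
      (condExpL1 hF μ f : Ω → ℝ) := tendstoInMeasure_of_tendsto_Lp hL1
  obtain ⟨ns, hns_mono, hns_ae⟩ := hmeasconv.exists_seq_tendsto_ae
  have hcl : ∀ N : ℕ, (condExpL1 hF μ (S N) : Ω → ℝ) =ᵐ[μ]
      fun ω => ∑ k ∈ Finset.range N, c k * g k ω :=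
    fun N => (condExp_ae_eq_condExpL1 hF (S N)).symm.trans (hpartial N)
  filter_upwards [hae_sum, hns_ae, ae_all_iff.mpr hcl, condExp_ae_eq_condExpL1 hF f]
    with ω h1 h2 h3 h4
  have h5 : Tendsto (fun j => ∑ k ∈ Finset.range (ns j), c k * g k ω) atTop
      (𝓝 ((μ[f|F]) ω)) := by
    rw [h4]
    exact Tendsto.congr (fun j => h3 (ns j)) h2
  have h6 : Tendsto (fun j => ∑ k ∈ Finset.range (ns j), c k * g k ω) atTop
      (𝓝 (∑' k, c k * g k ω)) :=
    (h1.hasSum.tendsto_sum_nat).comp hns_mono.tendsto_atTop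
  have h7 : (∑' k, c k * g k ω) = (μ[f|F]) ω := tendsto_nhds_unique h6 h5
  exact h7 ▸ h1.hasSum




lemma two_abs_pow_le (a : ℝ) (j : ℕ) (ha : 0 ≤ a) : 2 * a ^ (j+1) ≤ a ^ j + a ^ (j+2) := by
  have h1 : 0 ≤ a ^ j * (a - 1)^2 := mul_nonneg (pow_nonneg ha j) (sq_nonneg _)
  have h2 : a ^ (j+1) = a ^ j * a := pow_succ a j
  have h3 : a ^ (j+2) = a ^ j * a * a := by rw [pow_succ, pow_succ]
  nlinarith [h1, h2, h3]

lemma moment_bound [IsProbabilityMeasure μ] (hF : F ≤ m0) (ξ : Ω → ℝ) {ε : ℝ}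
    (hε : 0 < ε) (hε2 : ε ≤ 1/2)
    (hint : ∀ k : ℕ, Integrable (fun ω => ξ ω ^ k) μ)
    (hbern : ∀ k : ℕ, 3 ≤ k → ∀ᵐ ω ∂μ,
      |(μ[fun ω => ξ ω ^ k|F]) ω| ≤
        (1 / 2) * (Nat.factorial k : ℝ) * ε ^ (k - 2) * (μ[fun ω => ξ ω ^ 2|F]) ω) :
    ∀ k : ℕ, ∫ ω, |ξ ω| ^ k ∂μ ≤
      (1 + ∫ ω, ξ ω ^ 2 ∂μ) / ε ^ 3 * (Nat.factorial (k+2) : ℝ) * ε ^ k := by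
  haveI : SigmaFinite (μ.trim hF) := by infer_instance
  set M : ℝ := ∫ ω, ξ ω ^ 2 ∂μ with hM_def
  have hM : 0 ≤ M := integral_nonneg fun ω => sq_nonneg _
  have haint : ∀ k : ℕ, Integrable (fun ω => |ξ ω| ^ k) μ := by
    intro k; simpa [abs_pow] using (hint k).abs
  have heven : ∀ m : ℕ, 1 ≤ m →
      ∫ ω, ξ ω ^ (2*m) ∂μ ≤ 1/2 * (Nat.factorial (2*m) : ℝ) * ε ^ (2*m-2) * M := by
    intro m hm
    rcases eq_or_lt_of_le hm with h1 | h1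
    · have : m = 1 := h1.symm
      subst this
      norm_num [Nat.factorial, hM_def]
    · have h3 : 3 ≤ 2*m := by omega
      have hb := hbern (2*m) h3
      have e1 : ∫ ω, ξ ω ^ (2*m) ∂μ = ∫ ω, (μ[fun ω' => ξ ω' ^ (2*m)|F]) ω ∂μ :=
        (integral_condExp hF).symm
      rw [e1]
      have step : ∫ ω, (μ[fun ω' => ξ ω' ^ (2*m)|F]) ω ∂μ ≤
          ∫ ω, (1/2 * (Nat.factorial (2*m) : ℝ) * ε ^ (2*m-2)) * (μ[fun ω' => ξ ω' ^ 2|F]) ω ∂μ := by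
        refine integral_mono_ae integrable_condExp (integrable_condExp.const_mul _) ?_
        filter_upwards [hb] with ω hω
        exact le_trans (le_abs_self _) (by simpa [mul_assoc] using hω)
      refine step.trans ?_
      rw [integral_const_mul, integral_condExp hF]
  -- even powers of abs
  have habs_even : ∀ m : ℕ, (fun ω => |ξ ω| ^ (2*m)) = fun ω => ξ ω ^ (2*m) := by
    intro m; funext ω; exact Even.pow_abs (even_two_mul m) _
  intro k
  rw [div_mul_eq_mul_div, div_mul_eq_mul_div, le_div_iff₀ (by positivity : (0:ℝ) < ε ^ 3)]
  rcases Nat.lt_or_ge k 3 with hk | hk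
  · interval_cases k
    · simp only [pow_zero, integral_const, probReal_univ, ENNReal.toReal_one, smul_eq_mul, mul_one]
      have : (Nat.factorial 2 : ℝ) = 2 := by norm_num [Nat.factorial]
      rw [this]
      have hε1 : ε ≤ 1 := by linarith
      have h3 : ε ^ 3 ≤ 1 := pow_le_one₀ hε.le hε1
      nlinarith [hM]
    · have hptw : ∀ ω, |ξ ω| ^ 1 ≤ (1 + ξ ω ^ 2)/2 := by
        intro ω; have := sq_nonneg (|ξ ω| - 1)
        have h2 : |ξ ω| ^ 2 = ξ ω ^ 2 := sq_abs _
        nlinarith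
      have hint2 : Integrable (fun ω => (1 + ξ ω ^ 2)/2) μ :=
        ((integrable_const 1).add (hint 2)).div_const 2
      have h1 : ∫ ω, |ξ ω| ^ 1 ∂μ ≤ (1 + M)/2 := by
        refine (integral_mono (haint 1) hint2 hptw).trans ?_
        rw [integral_div, integral_add (integrable_const 1) (hint 2), integral_const]
        simp [hM_def]
      have hf3 : (Nat.factorial 3 : ℝ) = 6 := by norm_num [Nat.factorial]
      rw [hf3]
      have hε1 : ε ≤ 1 := by linarith
      have hsq : ε ^ 2 ≤ 1 := pow_le_one₀ hε.le hε1
      have h3 : ε ^ 3 ≤ ε := by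
        calc ε ^ 3 = ε * ε ^ 2 := by ring
          _ ≤ ε * 1 := mul_le_mul_of_nonneg_left hsq hε.le
          _ = ε := by ring
      have hInn : 0 ≤ ∫ ω, |ξ ω| ^ 1 ∂μ :=
        integral_nonneg fun ω => pow_nonneg (abs_nonneg (ξ ω)) 1
      calc (∫ ω, |ξ ω| ^ 1 ∂μ) * ε ^ 3 ≤ (∫ ω, |ξ ω| ^ 1 ∂μ) * ε :=
            mul_le_mul_of_nonneg_left h3 hInn
        _ ≤ ((1 + M)/2) * ε := mul_le_mul_of_nonneg_right h1 hε.le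
        _ ≤ (1 + M) * 6 * ε ^ 1 := by
            have : (1 + M)/2 ≤ (1 + M) * 6 := by linarith
            have h7 := mul_le_mul_of_nonneg_right this hε.le
            calc ((1 + M)/2) * ε ≤ (1 + M) * 6 * ε := h7
              _ = (1 + M) * 6 * ε ^ 1 := by ring
    · have h1 : ∫ ω, |ξ ω| ^ 2 ∂μ = M := by
        rw [show (2:ℕ) = 2*1 by norm_num] at *
        rw [habs_even 1]
      have hf4 : (Nat.factorial 4 : ℝ) = 24 := by norm_num [Nat.factorial]
      rw [h1, hf4]
      have hε1 : ε ≤ 1 := by linarith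
      have h3 : ε ^ 3 ≤ ε ^ 2 := by
        calc ε ^ 3 = ε ^ 2 * ε := by ring
          _ ≤ ε ^ 2 * 1 := mul_le_mul_of_nonneg_left hε1 (sq_nonneg ε)
          _ = ε ^ 2 := by ring
      calc M * ε ^ 3 ≤ M * ε ^ 2 := mul_le_mul_of_nonneg_left h3 hM
        _ ≤ (1 + M) * 24 * ε ^ 2 := by
            have : M ≤ (1 + M) * 24 := by linarith
            exact mul_le_mul_of_nonneg_right this (sq_nonneg ε)
  · rcases Nat.even_or_odd k with ⟨m, hm⟩ | ⟨m, hm⟩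
    · have hk2 : k = 2*m := by omega
      subst hk2
      have hm2 : 1 ≤ m := by omega
      have hb := heven m hm2
      rw [habs_even m]
      have hfle : ((2*m).factorial : ℝ) ≤ ((2*m+2).factorial : ℝ) := by
        exact_mod_cast Nat.factorial_le (by omega)
      have hεp : ε ^ (2*m-2) * ε ^ 3 = ε ^ (2*m) * ε := by
        rw [← pow_add, ← pow_succ]; congr 1; omega
      have hnn : (0:ℝ) ≤ ε ^ (2*m) := by positivity
      calc (∫ ω, ξ ω ^ (2*m) ∂μ) * ε ^ 3
          ≤ (1/2 * ((2*m).factorial : ℝ) * ε ^ (2*m-2) * M) * ε ^ 3 := by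
            exact mul_le_mul_of_nonneg_right hb (by positivity)
        _ = (1/2 * M) * (((2*m).factorial : ℝ)) * (ε ^ (2*m-2) * ε ^ 3) := by ring
        _ = (1/2 * M * ε) * (((2*m).factorial : ℝ) * ε ^ (2*m)) := by rw [hεp]; ring
        _ ≤ (1 + M) * (((2*m+2).factorial : ℝ) * ε ^ (2*m)) := by
            refine mul_le_mul (by nlinarith [hε.le]) ?_ (by positivity) (by nlinarith)
            exact mul_le_mul_of_nonneg_right hfle hnn
        _ = (1 + M) * ((2*m+2).factorial : ℝ) * ε ^ (2*m) := by ring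
    · subst hm
      have hm1 : 1 ≤ m := by omega
      have hptw : ∀ ω, |ξ ω| ^ (2*m+1) ≤ (ξ ω ^ (2*m) + ξ ω ^ (2*m+2))/2 := by
        intro ω
        have h1 := two_abs_pow_le |ξ ω| (2*m) (abs_nonneg _)
        have h2 : |ξ ω| ^ (2*m) = ξ ω ^ (2*m) := Even.pow_abs (even_two_mul m) _
        have h3 : |ξ ω| ^ (2*m+2) = ξ ω ^ (2*m+2) := by
          have : 2*m+2 = 2*(m+1) := by ring
          rw [this]; exact Even.pow_abs (even_two_mul (m+1)) _
        nlinarith [h1, h2, h3]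
      have hint3 : Integrable (fun ω => (ξ ω ^ (2*m) + ξ ω ^ (2*m+2))/2) μ :=
        ((hint (2*m)).add (hint (2*m+2))).div_const 2
      have h4 : ∫ ω, |ξ ω| ^ (2*m+1) ∂μ ≤
          ((∫ ω, ξ ω ^ (2*m) ∂μ) + ∫ ω, ξ ω ^ (2*m+2) ∂μ)/2 := by
        refine (integral_mono (haint _) hint3 hptw).trans ?_
        rw [integral_div, integral_add (hint (2*m)) (hint (2*m+2))]
      have hb1 := heven m hm1
      have hb2 := heven (m+1) (by omega)
      have e2 : 2*(m+1) = 2*m+2 := by ring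
      rw [e2] at hb2
      rw [show 2*m+2-2 = 2*m from by omega] at hb2
      -- now combine
      have hfle1 : ((2*m).factorial : ℝ) ≤ ((2*m+3).factorial : ℝ) := by
        exact_mod_cast Nat.factorial_le (by omega)
      have hfle2 : ((2*m+2).factorial : ℝ) ≤ ((2*m+3).factorial : ℝ) := by
        exact_mod_cast Nat.factorial_le (by omega)
      have hfnn : (0:ℝ) ≤ ((2*m+3).factorial : ℝ) := by positivity
      have hεp1 : ε ^ (2*m-2) * ε ^ 3 = ε ^ (2*m+1) := by
        rw [← pow_add]; congr 1; omega
      have hεp2 : ε ^ (2*m) * ε ^ 3 = ε ^ (2*m+1) * ε ^ 2 := by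
        rw [← pow_add, ← pow_add]
      have hεle : ε ^ (2*m+1) * ε ^ 2 ≤ ε ^ (2*m+1) * 1 := by
        refine mul_le_mul_of_nonneg_left ?_ (by positivity)
        nlinarith [hε.le]
      rw [show 2*m+1+2 = 2*m+3 from by omega]
      have key1 : (∫ ω, ξ ω ^ (2*m) ∂μ) * ε ^ 3 ≤
          1/2 * ((2*m+3).factorial : ℝ) * M * ε ^ (2*m+1) := by
        calc (∫ ω, ξ ω ^ (2*m) ∂μ) * ε ^ 3
            ≤ (1/2 * ((2*m).factorial : ℝ) * ε ^ (2*m-2) * M) * ε ^ 3 :=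
              mul_le_mul_of_nonneg_right hb1 (by positivity)
          _ = 1/2 * ((2*m).factorial : ℝ) * M * (ε ^ (2*m-2) * ε ^ 3) := by ring
          _ = 1/2 * ((2*m).factorial : ℝ) * M * ε ^ (2*m+1) := by rw [hεp1]
          _ = M * ε ^ (2*m+1) / 2 * ((2*m).factorial : ℝ) := by ring
          _ ≤ M * ε ^ (2*m+1) / 2 * ((2*m+3).factorial : ℝ) :=
              mul_le_mul_of_nonneg_left hfle1 (by positivity)
          _ = 1/2 * ((2*m+3).factorial : ℝ) * M * ε ^ (2*m+1) := by ring
      have key2 : (∫ ω, ξ ω ^ (2*m+2) ∂μ) * ε ^ 3 ≤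
          1/2 * ((2*m+3).factorial : ℝ) * M * ε ^ (2*m+1) := by
        calc (∫ ω, ξ ω ^ (2*m+2) ∂μ) * ε ^ 3
            ≤ (1/2 * ((2*m+2).factorial : ℝ) * ε ^ (2*m) * M) * ε ^ 3 :=
              mul_le_mul_of_nonneg_right hb2 (by positivity)
          _ = 1/2 * ((2*m+2).factorial : ℝ) * M * (ε ^ (2*m) * ε ^ 3) := by ring
          _ = 1/2 * ((2*m+2).factorial : ℝ) * M * (ε ^ (2*m+1) * ε ^ 2) := by rw [hεp2]
          _ = M/2 * (((2*m+2).factorial : ℝ) * (ε ^ (2*m+1) * ε ^ 2)) := by ring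
          _ ≤ M/2 * (((2*m+3).factorial : ℝ) * ε ^ (2*m+1)) := by
              refine mul_le_mul_of_nonneg_left ?_ (by linarith)
              calc ((2*m+2).factorial : ℝ) * (ε ^ (2*m+1) * ε ^ 2)
                  ≤ ((2*m+2).factorial : ℝ) * (ε ^ (2*m+1) * 1) :=
                    mul_le_mul_of_nonneg_left hεle (by positivity)
                _ = ((2*m+2).factorial : ℝ) * ε ^ (2*m+1) := by ring
                _ ≤ ((2*m+3).factorial : ℝ) * ε ^ (2*m+1) :=
                    mul_le_mul_of_nonneg_right hfle2 (by positivity)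
          _ = 1/2 * ((2*m+3).factorial : ℝ) * M * ε ^ (2*m+1) := by ring
      calc (∫ ω, |ξ ω| ^ (2*m+1) ∂μ) * ε ^ 3
          ≤ (((∫ ω, ξ ω ^ (2*m) ∂μ) + ∫ ω, ξ ω ^ (2*m+2) ∂μ)/2) * ε ^ 3 :=
            mul_le_mul_of_nonneg_right h4 (by positivity)
        _ = ((∫ ω, ξ ω ^ (2*m) ∂μ) * ε ^ 3 + (∫ ω, ξ ω ^ (2*m+2) ∂μ) * ε ^ 3)/2 := by ring
        _ ≤ (1/2 * ((2*m+3).factorial : ℝ) * M * ε ^ (2*m+1) +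
             1/2 * ((2*m+3).factorial : ℝ) * M * ε ^ (2*m+1))/2 := by linarith [key1, key2]
        _ = 1/2 * M * (((2*m+3).factorial : ℝ) * ε ^ (2*m+1)) := by ring
        _ ≤ (1 + M) * (((2*m+3).factorial : ℝ) * ε ^ (2*m+1)) :=
            mul_le_mul_of_nonneg_right (by linarith) (by positivity)
        _ = (1 + M) * ((2*m+3).factorial : ℝ) * ε ^ (2*m+1) := by ring




set_option maxHeartbeats 2000000 in
lemma per_index [IsProbabilityMeasure μ] (hF : F ≤ m0) (ξ : Ω → ℝ)
    {ε α l : ℝ} (hε : 0 < ε) (hε2 : ε ≤ 1/2) (hα0 : 0 < α) (hα1 : α < 1)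
    (hl : 0 ≤ l) (hlε : l * ε ≤ α)
    (hint : ∀ k : ℕ, Integrable (fun ω => ξ ω ^ k) μ)
    (hmart : μ[ξ|F] =ᵐ[μ] 0)
    (hbern : ∀ k : ℕ, 3 ≤ k → ∀ᵐ ω ∂μ,
      |(μ[fun ω => ξ ω ^ k|F]) ω| ≤
        (1 / 2) * (Nat.factorial k : ℝ) * ε ^ (k - 2) * (μ[fun ω => ξ ω ^ 2|F]) ω)
    (hσ2 : ∀ᵐ ω ∂μ, (μ[fun ω => ξ ω ^ 2|F]) ω ≤ 2)
    (hexp : Integrable (fun ω => Real.exp (l * ξ ω)) μ)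
    (hxexp : Integrable (fun ω => ξ ω * Real.exp (l * ξ ω)) μ) :
    ∀ᵐ ω ∂μ,
      0 ≤ (μ[fun ω => ξ ω ^ 2|F]) ω ∧
      |(μ[fun ω => ξ ω * Real.exp (l * ξ ω)|F]) ω /
          (μ[fun ω => Real.exp (l * ξ ω)|F]) ω - l * (μ[fun ω => ξ ω ^ 2|F]) ω|
        ≤ ((∑' k : ℕ, ((k : ℝ) + 3) * α ^ k) + 6 * (1 - α)⁻¹) * l ^ 2 * ε *
            (μ[fun ω => ξ ω ^ 2|F]) ω := by
  haveI : SigmaFinite (μ.trim hF) := by infer_instance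
  have hξint : Integrable ξ μ := by simpa using hint 1
  set σ : Ω → ℝ := μ[fun ω => ξ ω ^ 2|F] with hσ_def
  set Z : Ω → ℝ := μ[fun ω => Real.exp (l * ξ ω)|F] with hZ_def
  set Y : Ω → ℝ := μ[fun ω => ξ ω * Real.exp (l * ξ ω)|F] with hY_def
  set K : ℝ := (1 - α)⁻¹ with hK_def
  have hK0 : 0 < K := inv_pos.mpr (by linarith)
  have hK1 : 1 + α * K = K := by
    have h : (1:ℝ) - α ≠ 0 := by linarith
    rw [hK_def]
    field_simp
    ring
  have hlε0 : 0 ≤ l * ε := mul_nonneg hl hε.le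
  -- σ nonneg
  have hσ0 : ∀ᵐ ω ∂μ, 0 ≤ σ ω := by
    have := condExp_nonneg (μ := μ) (m := F)
      (f := fun ω => ξ ω ^ 2) (Eventually.of_forall fun ω => sq_nonneg _)
    filter_upwards [this] with ω hω using hω
  -- Z ≥ 1
  have hZ1 : ∀ᵐ ω ∂μ, 1 ≤ Z ω := by
    have hint1 : Integrable (fun ω => 1 + l * ξ ω) μ :=
      (integrable_const 1).add (hξint.const_mul l)
    have hmono := condExp_mono (m := F) hint1 hexp
      (Eventually.of_forall fun ω => by
        simpa [add_comm] using Real.add_one_le_exp (l * ξ ω))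
    have hid : μ[fun ω => 1 + l * ξ ω|F] =ᵐ[μ] fun _ => 1 := by
      have h1 : (fun ω => 1 + l * ξ ω) = (fun _ : Ω => (1:ℝ)) + l • ξ := by
        funext ω; simp [smul_eq_mul]
      rw [h1]
      refine (condExp_add (integrable_const 1) (hξint.smul l) F).trans ?_
      have h3 : μ[(fun _ : Ω => (1:ℝ))|F] = fun _ => 1 := condExp_const hF 1
      filter_upwards [condExp_smul (μ := μ) (m := F) l ξ, hmart] with ω hω2 hωm
      simp only [Pi.add_apply, h3, Pi.smul_apply, smul_eq_mul]
      rw [hω2]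
      simp [hωm]
    filter_upwards [hmono, hid] with ω h1 h2
    have : (μ[fun ω => 1 + l * ξ ω|F]) ω = 1 := h2
    rw [← this]
    exact h1
  -- conditional Cauchy-Schwarz: σ^2 ≤ condexp ξ^4, then σ*σ ≤ 12 ε^2 σ
  have hσσ : ∀ᵐ ω ∂μ, σ ω * σ ω ≤ 12 * ε ^ 2 * σ ω := by
    have hσsm : StronglyMeasurable[F] σ := stronglyMeasurable_condExp
    have hσb : ∀ᵐ ω ∂μ, ‖σ ω‖ ≤ 2 := by
      filter_upwards [hσ0, hσ2] with ω h1 h2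
      rw [Real.norm_eq_abs, abs_of_nonneg h1]; exact h2
    have hσasm : AEStronglyMeasurable[m0] σ μ := (hσsm.mono hF).aestronglyMeasurable
    have hσξ2int : Integrable (fun ω => σ ω * ξ ω ^ 2) μ :=
      (hint 2).bdd_mul hσasm (c := 2) hσb
    have hσ4int : Integrable (fun ω => σ ω * σ ω) μ := by
      refine Integrable.mono' (integrable_const (4:ℝ))
        (((hσsm.mul hσsm).mono hF).aestronglyMeasurable) ?_
      filter_upwards [hσb] with ω hω
      rw [Real.norm_eq_abs, abs_mul]
      calc |σ ω| * |σ ω| ≤ 2 * 2 :=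
            mul_le_mul (by simpa using hω) (by simpa using hω) (abs_nonneg _) (by norm_num)
        _ = 4 := by norm_num
    have hpull : μ[fun ω => σ ω * ξ ω ^ 2|F] =ᵐ[μ] fun ω => σ ω * σ ω := by
      have heqf : (fun ω => σ ω * ξ ω ^ 2) = σ * (fun ω => ξ ω ^ 2) := rfl
      rw [heqf]
      refine (condExp_stronglyMeasurable_mul_of_bound hF hσsm (hint 2) 2 hσb).trans ?_
      filter_upwards with ω
      simp [hσ_def]
    have hcondsq : μ[fun ω => σ ω * σ ω|F] = fun ω => σ ω * σ ω :=
      condExp_of_stronglyMeasurable hF (hσsm.mul hσsm) hσ4int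
    have hexpand : (fun ω => (ξ ω ^ 2 - σ ω)^2) =
        (fun ω => ξ ω ^ 4 - 2 * (σ ω * ξ ω ^ 2)) + fun ω => σ ω * σ ω := by
      funext ω; simp only [Pi.add_apply]; ring
    have hint4 : Integrable (fun ω => ξ ω ^ 4 - 2 * (σ ω * ξ ω ^ 2)) μ :=
      (hint 4).sub (hσξ2int.const_mul 2)
    have hnn : 0 ≤ᵐ[μ] μ[fun ω => (ξ ω ^ 2 - σ ω)^2|F] :=
      condExp_nonneg (Eventually.of_forall fun ω => sq_nonneg _)
    have hlin : μ[fun ω => (ξ ω ^ 2 - σ ω)^2|F] =ᵐ[μ]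
        fun ω => (μ[fun ω' => ξ ω' ^ 4|F]) ω - 2 * (σ ω * σ ω) + σ ω * σ ω := by
      rw [hexpand]
      refine (condExp_add hint4 hσ4int F).trans ?_
      have h6 : μ[fun ω => 2 * (σ ω * ξ ω ^ 2)|F] =ᵐ[μ] fun ω => 2 * (σ ω * σ ω) := by
        have h7 : (fun ω => 2 * (σ ω * ξ ω ^ 2)) = (2:ℝ) • (fun ω => σ ω * ξ ω ^ 2) := by
          funext ω; simp [smul_eq_mul]
        rw [h7]
        refine (condExp_smul (2:ℝ) _ F).trans ?_
        filter_upwards [hpull] with ω hω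
        simp only [Pi.smul_apply, smul_eq_mul]
        rw [hω]
      have h5 : μ[fun ω => ξ ω ^ 4 - 2 * (σ ω * ξ ω ^ 2)|F] =ᵐ[μ]
          fun ω => (μ[fun ω' => ξ ω' ^ 4|F]) ω - 2 * (σ ω * σ ω) := by
        refine (condExp_sub (hint 4) (hσξ2int.const_mul 2) F).trans ?_
        filter_upwards [h6] with ω hω
        simp only [Pi.sub_apply]
        rw [hω]
      filter_upwards [h5] with ω hω
      simp only [Pi.add_apply]
      rw [hω, hcondsq]
    have hb4 := hbern 4 (by norm_num)
    filter_upwards [hnn, hlin, hb4, hσ0] with ω h1 h2 h3 h4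
    rw [h2] at h1
    simp only [Pi.zero_apply] at h1
    have h5 : σ ω * σ ω ≤ (μ[fun ω' => ξ ω' ^ 4|F]) ω := by linarith
    have h6 : (μ[fun ω' => ξ ω' ^ 4|F]) ω ≤ 12 * ε ^ 2 * σ ω := by
      have h7 : (Nat.factorial 4 : ℝ) = 24 := by norm_num [Nat.factorial]
      calc (μ[fun ω' => ξ ω' ^ 4|F]) ω ≤ |(μ[fun ω' => ξ ω' ^ 4|F]) ω| := le_abs_self _
        _ ≤ 1/2 * (Nat.factorial 4 : ℝ) * ε ^ (4-2) * σ ω := h3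
        _ = 12 * ε ^ 2 * σ ω := by rw [h7]; norm_num
    linarith
  -- the series coefficients
  set M : ℝ := ∫ ω, ξ ω ^ 2 ∂μ with hM_def
  have hM0 : 0 ≤ M := integral_nonneg fun ω => sq_nonneg _
  set D : ℝ := (1 + M) / ε ^ 3 with hD_def
  have hD0 : 0 ≤ D := div_nonneg (by linarith) (by positivity)
  set B : ℕ → ℝ := fun k => D * (Nat.factorial (k+2) : ℝ) * ε ^ k with hB_def
  have hB := moment_bound hF ξ hε hε2 hint hbern
  have hαn : ‖α‖ < 1 := by rw [Real.norm_eq_abs, abs_of_pos hα0]; exact hα1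
  set c1 : ℕ → ℝ := fun k => l ^ k / (Nat.factorial k : ℝ) with hc1_def
  set c2 : ℕ → ℝ := fun k => if k = 0 then 0 else l ^ (k-1) / (Nat.factorial (k-1) : ℝ)
    with hc2_def
  have hc1nn : ∀ k, 0 ≤ c1 k := fun k => by positivity
  have hfacpos : ∀ k : ℕ, (0:ℝ) < (Nat.factorial k : ℝ) := fun k =>
    Nat.cast_pos.mpr (Nat.factorial_pos k)
  have hfact2 : ∀ k : ℕ, (Nat.factorial (k+2) : ℝ) =
      ((k:ℝ)+2) * ((k:ℝ)+1) * (Nat.factorial k : ℝ) := by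
    intro k
    rw [show k+2 = (k+1)+1 from rfl, Nat.factorial_succ, Nat.factorial_succ]
    push_cast; ring
  have hcubic : ∀ a b c d : ℝ, ∀ r : ℝ, ‖r‖ < 1 →
      Summable (fun k : ℕ => (a*(k:ℝ)^3 + b*(k:ℝ)^2 + c*(k:ℝ) + d) * r ^ k) := by
    intro a b c d r hr
    have h3 := (summable_pow_mul_geometric_of_norm_lt_one 3 hr).mul_left a
    have h2 := (summable_pow_mul_geometric_of_norm_lt_one 2 hr).mul_left b
    have h1 := (summable_pow_mul_geometric_of_norm_lt_one 1 hr).mul_left c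
    have h0 := (summable_pow_mul_geometric_of_norm_lt_one 0 hr).mul_left d
    refine (((h3.add h2).add h1).add h0).congr fun k => ?_
    push_cast; ring
  have hlεn : ‖l * ε‖ < 1 := by
    rw [Real.norm_eq_abs, abs_of_nonneg hlε0]; linarith
  have hBle : ∀ k, ∫ ω, |ξ ω| ^ k ∂μ ≤ B k := fun k => hB k
  have hsum1 : Summable (fun k => |c1 k| * B k) := by
    have key : ∀ k, |c1 k| * B k = (D*(((k:ℝ)+2)*((k:ℝ)+1))) * (l*ε)^k := by
      intro k
      rw [abs_of_nonneg (hc1nn k)]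
      simp only [hc1_def, hB_def]
      rw [hfact2 k, mul_pow]
      field_simp
    have hS : Summable (fun k : ℕ => (D*(((k:ℝ)+2)*((k:ℝ)+1))) * (l*ε)^k) := by
      have h := hcubic 0 D (3*D) (2*D) (l*ε) hlεn
      apply h.congr
      intro k
      push_cast
      ring
    exact hS.congr fun k => (key k).symm
  have hsum2 : Summable (fun k => |c2 k| * B k) := by
    refine (summable_nat_add_iff 1).mp ?_
    have key : ∀ j : ℕ, |c2 (j+1)| * B (j+1) =
        ((D*ε)*((((j:ℝ)+3)*((j:ℝ)+2))*((j:ℝ)+1))) * (l*ε)^j := by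
      intro j
      have hc2v : c2 (j+1) = l ^ j / (Nat.factorial j : ℝ) := by
        simp [hc2_def]
      have hf3 : ((j+1+2).factorial : ℝ) = ((j:ℝ)+3)*(((j:ℝ)+2)*((j:ℝ)+1)*(j.factorial : ℝ)) := by
        rw [show j+1+2 = (j+2)+1 from rfl, Nat.factorial_succ]
        push_cast
        rw [hfact2 j]
        push_cast
        ring
      rw [hc2v, abs_of_nonneg (by positivity)]
      simp only [hB_def]
      rw [hf3, mul_pow, pow_succ ε j]
      field_simp
    have hS : Summable (fun j : ℕ => ((D*ε)*((((j:ℝ)+3)*((j:ℝ)+2))*((j:ℝ)+1))) * (l*ε)^j) := by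
      have h := hcubic (D*ε) (6*(D*ε)) (11*(D*ε)) (6*(D*ε)) (l*ε) hlεn
      apply h.congr
      intro k
      push_cast
      ring
    exact hS.congr fun j => (key j).symm
  have hfs1 : ∀ ω, HasSum (fun k => c1 k * ξ ω ^ k) (Real.exp (l * ξ ω)) := by
    intro ω
    have h := NormedSpace.exp_series_hasSum_exp' (𝕂 := ℝ) (l * ξ ω)
    rw [← Real.exp_eq_exp_ℝ] at h
    have h2 : (fun k : ℕ => ((Nat.factorial k : ℝ))⁻¹ • (l * ξ ω)^k) =
        fun k => c1 k * ξ ω ^ k := by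
      funext k
      simp only [hc1_def, smul_eq_mul, mul_pow, div_eq_mul_inv]
      ring
    rw [h2] at h
    exact h
  have hfs2 : ∀ ω, HasSum (fun k => c2 k * ξ ω ^ k) (ξ ω * Real.exp (l * ξ ω)) := by
    intro ω
    have h := (hfs1 ω).mul_left (ξ ω)
    have h2 : (fun k => ξ ω * (c1 k * ξ ω ^ k)) = fun k => c2 (k+1) * ξ ω ^ (k+1) := by
      funext k
      simp only [hc1_def, hc2_def, Nat.succ_ne_zero, if_false, Nat.add_sub_cancel]
      rw [pow_succ]
      ring
    rw [h2] at h
    have h3 := (hasSum_nat_add_iff (f := fun k => c2 k * ξ ω ^ k) 1).mp h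
    simpa [hc2_def] using h3
  have hHSZ := condexp_hasSum hF ξ hint c1 B hBle hsum1 _ hexp hfs1
  have hHSY := condexp_hasSum hF ξ hint c2 B hBle hsum2 _ hxexp hfs2
  have hbern_all : ∀ᵐ ω ∂μ, ∀ k : ℕ, 3 ≤ k →
      |(μ[fun ω' => ξ ω' ^ k|F]) ω| ≤ 1/2 * (Nat.factorial k : ℝ) * ε^(k-2) * σ ω := by
    rw [ae_all_iff]
    intro k
    by_cases h : 3 ≤ k
    · exact (hbern k h).mono fun ω hω _ => hω
    · exact Eventually.of_forall fun ω h' => absurd h' h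
  have hg0 : μ[fun ω' => ξ ω' ^ 0|F] =ᵐ[μ] fun _ => (1:ℝ) := by
    have h := condExp_congr_ae (μ := μ) (m := F) (f := fun ω' => ξ ω' ^ 0)
      (g := fun _ => (1:ℝ)) (Eventually.of_forall fun ω => by norm_num)
    rw [condExp_const hF] at h
    exact h
  have hg1 : μ[fun ω' => ξ ω' ^ 1|F] =ᵐ[μ] (0 : Ω → ℝ) :=
    (condExp_congr_ae (Eventually.of_forall fun ω => pow_one _)).trans hmart
  have hTsum : Summable (fun k : ℕ => ((k:ℝ)+3) * α^k) := by
    have h := hcubic 0 0 1 3 α hαn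
    apply h.congr
    intro k
    push_cast
    ring
  have hT0 : 0 ≤ ∑' k : ℕ, ((k:ℝ)+3)*α^k := tsum_nonneg fun k => by positivity
  set T : ℝ := ∑' k : ℕ, ((k:ℝ)+3)*α^k with hT_def
  have hgeo : Summable (fun k : ℕ => α ^ k) := summable_geometric_of_lt_one hα0.le hα1
  filter_upwards [hσ0, hZ1, hσσ, hHSZ, hHSY, hbern_all, hg0, hg1]
    with ω hσ0ω hZ1ω hσσω hsz hsy hbw hg0ω hg1ω
  simp only [Pi.zero_apply] at hg1ω
  refine ⟨hσ0ω, ?_⟩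
  have ha2 : (μ[fun ω' => ξ ω' ^ 2|F]) ω = σ ω := rfl
  -- Z decomposition
  have hsmz := hsz.summable
  have hdz := Summable.sum_add_tsum_nat_add (f := fun k => c1 k * (μ[fun ω' => ξ ω' ^ k|F]) ω) 3 hsmz
  rw [hsz.tsum_eq] at hdz
  rw [← hZ_def] at hdz
  have hrz : ∑ k ∈ Finset.range 3, c1 k * (μ[fun ω' => ξ ω' ^ k|F]) ω
      = 1 + l^2/2 * σ ω := by
    rw [Finset.sum_range_succ, Finset.sum_range_succ, Finset.sum_range_one]
    rw [hg0ω, hg1ω, ha2]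
    simp only [hc1_def]
    norm_num [Nat.factorial]
  have hmajZ : ∀ k : ℕ, |c1 (k+3) * (μ[fun ω' => ξ ω' ^ (k+3)|F]) ω| ≤
      (1/2*l^2*(σ ω)*α) * α^k := by
    intro k
    have hbk := hbw (k+3) (by omega)
    rw [show k+3-2 = k+1 from rfl] at hbk
    rw [abs_mul, abs_of_nonneg (hc1nn _)]
    calc c1 (k+3) * |(μ[fun ω' => ξ ω' ^ (k+3)|F]) ω|
        ≤ c1 (k+3) * (1/2 * (Nat.factorial (k+3) : ℝ) * ε^(k+1) * σ ω) :=
          mul_le_mul_of_nonneg_left hbk (hc1nn _)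
      _ = 1/2 * σ ω * ((l*ε)^(k+1)) * l^2 := by
          simp only [hc1_def]
          rw [mul_pow, show k+3 = (k+1)+2 from rfl, pow_add]
          have := hfacpos (k+1+2)
          field_simp
      _ ≤ 1/2 * σ ω * (α^(k+1)) * l^2 := by
          refine mul_le_mul_of_nonneg_right (mul_le_mul_of_nonneg_left ?_ ?_) (by positivity)
          · exact pow_le_pow_left₀ hlε0 hlε (k+1)
          · have : (0:ℝ) ≤ σ ω := hσ0ω
            positivity
      _ = (1/2*l^2*(σ ω)*α) * α^k := by rw [pow_succ]; ring
  have hsabsZ : Summable (fun k => |c1 (k+3) * (μ[fun ω' => ξ ω' ^ (k+3)|F]) ω|) :=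
    Summable.of_nonneg_of_le (fun k => abs_nonneg _) hmajZ (hgeo.mul_left _)
  have htailZ : |∑' k : ℕ, c1 (k+3) * (μ[fun ω' => ξ ω' ^ (k+3)|F]) ω| ≤
      1/2*l^2*(σ ω)*α*K := by
    have h1 : |∑' k : ℕ, c1 (k+3) * (μ[fun ω' => ξ ω' ^ (k+3)|F]) ω| ≤
        ∑' k, |c1 (k+3) * (μ[fun ω' => ξ ω' ^ (k+3)|F]) ω| := by
      have := norm_tsum_le_tsum_norm (f := fun k => c1 (k+3) * (μ[fun ω' => ξ ω' ^ (k+3)|F]) ω)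
        (by simpa only [Real.norm_eq_abs] using hsabsZ)
      simpa only [Real.norm_eq_abs] using this
    refine h1.trans ?_
    calc (∑' k, |c1 (k+3) * (μ[fun ω' => ξ ω' ^ (k+3)|F]) ω|)
        ≤ ∑' k : ℕ, (1/2*l^2*(σ ω)*α) * α^k := Summable.tsum_le_tsum hmajZ hsabsZ (hgeo.mul_left _)
      _ = (1/2*l^2*(σ ω)*α) * (1-α)⁻¹ := by
          rw [tsum_mul_left, tsum_geometric_of_lt_one hα0.le hα1]
      _ = 1/2*l^2*(σ ω)*α*K := by rw [hK_def]
  have hZdev : |Z ω - (1 + l^2/2 * σ ω)| ≤ 1/2*l^2*(σ ω)*α*K := by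
    have h2 : Z ω - (1 + l^2/2 * σ ω) =
        ∑' k : ℕ, c1 (k+3) * (μ[fun ω' => ξ ω' ^ (k+3)|F]) ω := by
      rw [← hdz, hrz]; ring
    rw [h2]; exact htailZ
  -- Y decomposition
  have hsmy := hsy.summable
  have hdy := Summable.sum_add_tsum_nat_add (f := fun k => c2 k * (μ[fun ω' => ξ ω' ^ k|F]) ω) 3 hsmy
  rw [hsy.tsum_eq] at hdy
  rw [← hY_def] at hdy
  have hry : ∑ k ∈ Finset.range 3, c2 k * (μ[fun ω' => ξ ω' ^ k|F]) ω = l * σ ω := by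
    rw [Finset.sum_range_succ, Finset.sum_range_succ, Finset.sum_range_one]
    rw [hg0ω, hg1ω, ha2]
    simp only [hc2_def]
    norm_num [Nat.factorial]
  have hmajY : ∀ k : ℕ, |c2 (k+3) * (μ[fun ω' => ξ ω' ^ (k+3)|F]) ω| ≤
      (1/2*l^2*ε*(σ ω)) * (((k:ℝ)+3) * α^k) := by
    intro k
    have hbk := hbw (k+3) (by omega)
    rw [show k+3-2 = k+1 from rfl] at hbk
    have hc2v : c2 (k+3) = l ^ (k+2) / (Nat.factorial (k+2) : ℝ) := by
      simp [hc2_def]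
    rw [abs_mul, hc2v, abs_of_nonneg (by positivity)]
    calc l ^ (k+2) / (Nat.factorial (k+2) : ℝ) * |(μ[fun ω' => ξ ω' ^ (k+3)|F]) ω|
        ≤ l ^ (k+2) / (Nat.factorial (k+2) : ℝ) *
            (1/2 * (Nat.factorial (k+3) : ℝ) * ε^(k+1) * σ ω) :=
          mul_le_mul_of_nonneg_left hbk (by positivity)
      _ = 1/2 * σ ω * (((k:ℝ)+3) * ((l*ε)^k)) * (l^2*ε) := by
          have hf4 : (Nat.factorial (k+3) : ℝ) =
              ((k:ℝ)+3)*(((k:ℝ)+2)*((k:ℝ)+1)*(Nat.factorial k : ℝ)) := by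
            rw [show k+3 = (k+2)+1 from rfl, Nat.factorial_succ]
            push_cast
            rw [hfact2 k]
            push_cast
            ring
          rw [hf4, hfact2 k, mul_pow, pow_add l k 2, pow_add ε k 1]
          have h0 := hfacpos k
          field_simp
      _ ≤ 1/2 * σ ω * (((k:ℝ)+3) * (α^k)) * (l^2*ε) := by
          refine mul_le_mul_of_nonneg_right (mul_le_mul_of_nonneg_left ?_ ?_) (by positivity)
          · exact mul_le_mul_of_nonneg_left (pow_le_pow_left₀ hlε0 hlε k) (by positivity)
          · have : (0:ℝ) ≤ σ ω := hσ0ω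
            positivity
      _ = (1/2*l^2*ε*(σ ω)) * (((k:ℝ)+3) * α^k) := by ring
  have hsabsY : Summable (fun k => |c2 (k+3) * (μ[fun ω' => ξ ω' ^ (k+3)|F]) ω|) :=
    Summable.of_nonneg_of_le (fun k => abs_nonneg _) hmajY (hTsum.mul_left _)
  have htailY : |∑' k : ℕ, c2 (k+3) * (μ[fun ω' => ξ ω' ^ (k+3)|F]) ω| ≤
      1/2*l^2*ε*(σ ω)*T := by
    have h1 : |∑' k : ℕ, c2 (k+3) * (μ[fun ω' => ξ ω' ^ (k+3)|F]) ω| ≤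
        ∑' k, |c2 (k+3) * (μ[fun ω' => ξ ω' ^ (k+3)|F]) ω| := by
      have := norm_tsum_le_tsum_norm (f := fun k => c2 (k+3) * (μ[fun ω' => ξ ω' ^ (k+3)|F]) ω)
        (by simpa only [Real.norm_eq_abs] using hsabsY)
      simpa only [Real.norm_eq_abs] using this
    refine h1.trans ?_
    calc (∑' k, |c2 (k+3) * (μ[fun ω' => ξ ω' ^ (k+3)|F]) ω|)
        ≤ ∑' k : ℕ, (1/2*l^2*ε*(σ ω)) * (((k:ℝ)+3) * α^k) :=
          Summable.tsum_le_tsum hmajY hsabsY (hTsum.mul_left _)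
      _ = (1/2*l^2*ε*(σ ω)) * T := by rw [tsum_mul_left, hT_def]
      _ = 1/2*l^2*ε*(σ ω)*T := by ring
  have hYdev : |Y ω - l * σ ω| ≤ 1/2*l^2*ε*(σ ω)*T := by
    have h2 : Y ω - l * σ ω =
        ∑' k : ℕ, c2 (k+3) * (μ[fun ω' => ξ ω' ^ (k+3)|F]) ω := by
      rw [← hdy, hry]; ring
    rw [h2]; exact htailY
  -- final assembly
  have hZpos : (0:ℝ) < Z ω := lt_of_lt_of_le one_pos hZ1ω
  have hform : Y ω / Z ω - l * σ ω = (Y ω - l * σ ω * Z ω) / Z ω := by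
    field_simp
  rw [hform, abs_div, abs_of_pos hZpos]
  have hd : |Y ω - l * σ ω * Z ω| / Z ω ≤ |Y ω - l * σ ω * Z ω| :=
    div_le_self (abs_nonneg _) hZ1ω
  refine hd.trans ?_
  have hZ1dev : |Z ω - 1| ≤ 1/2*l^2*(σ ω)*K := by
    have h10 : Z ω - 1 = (Z ω - (1 + l^2/2 * σ ω)) + l^2/2 * σ ω := by ring
    rw [h10]
    refine (abs_add_le _ _).trans ?_
    have h11 : |l^2/2 * σ ω| = l^2/2 * σ ω := abs_of_nonneg (by
      have : (0:ℝ) ≤ σ ω := hσ0ω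
      positivity)
    rw [h11]
    calc |Z ω - (1 + l^2/2 * σ ω)| + l^2/2 * σ ω
        ≤ 1/2*l^2*(σ ω)*α*K + l^2/2*σ ω := add_le_add_left hZdev _
      _ = 1/2*l^2*(σ ω)*(1 + α*K) := by ring
      _ = 1/2*l^2*(σ ω)*K := by rw [hK1]
  have hsplit : |Y ω - l * σ ω * Z ω| ≤ |Y ω - l * σ ω| + l * σ ω * |Z ω - 1| := by
    have h9 : Y ω - l * σ ω * Z ω = (Y ω - l * σ ω) - l * σ ω * (Z ω - 1) := by ring
    rw [h9]
    refine (abs_sub _ _).trans ?_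
    rw [abs_mul, abs_of_nonneg (mul_nonneg hl hσ0ω)]
  refine hsplit.trans ?_
  have hlast : l * σ ω * |Z ω - 1| ≤ 6*K*(l^2*ε*(σ ω)) := by
    calc l * σ ω * |Z ω - 1| ≤ l * σ ω * (1/2*l^2*(σ ω)*K) :=
          mul_le_mul_of_nonneg_left hZ1dev (mul_nonneg hl hσ0ω)
      _ = 1/2*K*l^3*(σ ω * σ ω) := by ring
      _ ≤ 1/2*K*l^3*(12*ε^2*σ ω) := by
          refine mul_le_mul_of_nonneg_left hσσω (by positivity)
      _ = (l*ε)*(6*K*(l^2*ε*(σ ω))) := by ring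
      _ ≤ 1*(6*K*(l^2*ε*(σ ω))) := by
          refine mul_le_mul_of_nonneg_right (by linarith) ?_
          have : (0:ℝ) ≤ σ ω := hσ0ω
          positivity
      _ = 6*K*(l^2*ε*(σ ω)) := by ring
  have hx0 : (0:ℝ) ≤ l^2*ε*(σ ω) := by
    have : (0:ℝ) ≤ σ ω := hσ0ω
    positivity
  calc |Y ω - l * σ ω| + l * σ ω * |Z ω - 1|
      ≤ 1/2*l^2*ε*(σ ω)*T + 6*K*(l^2*ε*(σ ω)) := add_le_add hYdev hlast
    _ ≤ (T + 6*K) * l^2 * ε * σ ω := by nlinarith [mul_nonneg hT0 hx0]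


lemma summable_shift3 {α : ℝ} (hαn : ‖α‖ < 1) :
    Summable (fun k : ℕ => ((k:ℝ)+3)*α^k) := by
  have h1 := summable_pow_mul_geometric_of_norm_lt_one 1 hαn
  have h0 := (summable_pow_mul_geometric_of_norm_lt_one 0 hαn).mul_left 3
  apply (h1.add h0).congr
  intro k
  push_cast
  ring

end DriftAux

open MeasureTheory

theorem drift_process_expansion (α : ℝ) (hα : α ∈ Set.Ioo (0 : ℝ) 1) :
    ∃ c > 0, ∀ (Ω : Type) (m0 : MeasurableSpace Ω) (μ : Measure Ω),
      IsProbabilityMeasure μ →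
      ∀ (n : ℕ) (ξ : ℕ → Ω → ℝ) (𝓕 : ℕ → MeasurableSpace Ω) (ε δ : ℝ),
      (∀ i, 𝓕 i ≤ m0) →
      ε ∈ Set.Ioc (0 : ℝ) (1 / 2) → δ ∈ Set.Icc (0 : ℝ) (1 / 2) →
      (∀ i ∈ Finset.Icc 1 n, ∀ k : ℕ, Integrable (fun ω => ξ i ω ^ k) μ) →
      (∀ i ∈ Finset.Icc 1 n, μ[ξ i|𝓕 (i - 1)] =ᵐ[μ] 0) →
      (∀ i ∈ Finset.Icc 1 n, ∀ k : ℕ, 3 ≤ k → ∀ᵐ ω ∂μ,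
        |(μ[fun ω => ξ i ω ^ k|𝓕 (i - 1)]) ω| ≤
          (1 / 2) * (Nat.factorial k : ℝ) * ε ^ (k - 2) *
            (μ[fun ω => ξ i ω ^ 2|𝓕 (i - 1)]) ω) →
      (∀ᵐ ω ∂μ,
        |(∑ i ∈ Finset.Icc 1 n, (μ[fun ω => ξ i ω ^ 2|𝓕 (i - 1)]) ω) - 1| ≤ δ ^ 2) →
      ∀ l : ℝ, 0 ≤ l → l ≤ α / ε →
      (∀ i ∈ Finset.Icc 1 n, Integrable (fun ω => Real.exp (l * ξ i ω)) μ) →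
      (∀ i ∈ Finset.Icc 1 n, Integrable (fun ω => ξ i ω * Real.exp (l * ξ i ω)) μ) →
      ∀ᵐ ω ∂μ,
        |(∑ i ∈ Finset.Icc 1 n,
            (μ[fun ω => ξ i ω * Real.exp (l * ξ i ω)|𝓕 (i - 1)]) ω /
              (μ[fun ω => Real.exp (l * ξ i ω)|𝓕 (i - 1)]) ω) - l|
          ≤ l * δ ^ 2 + c * l ^ 2 * ε := by
  obtain ⟨hα0, hα1⟩ := hα
  have hαn : ‖α‖ < 1 := by rw [Real.norm_eq_abs, abs_of_pos hα0]; exact hα1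
  have hTsum := DriftAux.summable_shift3 hαn
  have hT0 : 0 ≤ ∑' k : ℕ, ((k:ℝ)+3)*α^k := tsum_nonneg fun k => by positivity
  have hK0 : (0:ℝ) < (1-α)⁻¹ := inv_pos.mpr (by linarith)
  set C : ℝ := (∑' k : ℕ, ((k:ℝ)+3)*α^k) + 6*(1-α)⁻¹ with hC_def
  have hC0 : 0 < C := by positivity
  refine ⟨2*C, by linarith, ?_⟩
  intro Ω m0 μ hprob n ξ 𝓕 ε δ h𝓕 hε hδ h_int h_mart h_bern hA2 l hl0 hlA hexp hxexp
  have hε0 := hε.1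
  have hε2 := hε.2
  have hδ0 := hδ.1
  have hδ2 := hδ.2
  have hδsq : δ^2 ≤ 1/4 := by nlinarith
  have hlε : l * ε ≤ α := by
    rw [← le_div_iff₀ hε0]
    exact hlA
  -- nonnegativity of each conditional variance
  have hσ0all : ∀ᵐ ω ∂μ, ∀ i ∈ Finset.Icc 1 n,
      0 ≤ (μ[fun ω => ξ i ω ^ 2|𝓕 (i-1)]) ω := by
    refine (Filter.eventually_all_finset _).mpr fun i _ => ?_
    exact condExp_nonneg (Eventually.of_forall fun ω => sq_nonneg _)
  have hσ2all : ∀ᵐ ω ∂μ, ∀ i ∈ Finset.Icc 1 n,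
      (μ[fun ω => ξ i ω ^ 2|𝓕 (i-1)]) ω ≤ 2 := by
    filter_upwards [hA2, hσ0all] with ω h1 h2
    intro i hi
    have h3 := (abs_le.mp h1).2
    have h4 : (μ[fun ω => ξ i ω ^ 2|𝓕 (i-1)]) ω ≤
        ∑ j ∈ Finset.Icc 1 n, (μ[fun ω => ξ j ω ^ 2|𝓕 (j-1)]) ω :=
      Finset.single_le_sum (f := fun j => (μ[fun ω => ξ j ω ^ 2|𝓕 (j-1)]) ω)
        (fun j hj => h2 j hj) hi
    linarith
  have hper : ∀ᵐ ω ∂μ, ∀ i ∈ Finset.Icc 1 n,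
      0 ≤ (μ[fun ω => ξ i ω ^ 2|𝓕 (i-1)]) ω ∧
      |(μ[fun ω => ξ i ω * Real.exp (l * ξ i ω)|𝓕 (i-1)]) ω /
          (μ[fun ω => Real.exp (l * ξ i ω)|𝓕 (i-1)]) ω -
          l * (μ[fun ω => ξ i ω ^ 2|𝓕 (i-1)]) ω|
        ≤ C * l^2 * ε * (μ[fun ω => ξ i ω ^ 2|𝓕 (i-1)]) ω := by
    refine (Filter.eventually_all_finset _).mpr fun i hi => ?_
    have hσ2i : ∀ᵐ ω ∂μ, (μ[fun ω => ξ i ω ^ 2|𝓕 (i-1)]) ω ≤ 2 :=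
      hσ2all.mono fun ω h => h i hi
    exact DriftAux.per_index (h𝓕 (i-1)) (ξ i) hε0 hε2 hα0 hα1 hl0 hlε
      (fun k => h_int i hi k) (h_mart i hi) (fun k hk => h_bern i hi k hk) hσ2i
      (hexp i hi) (hxexp i hi)
  filter_upwards [hper, hA2] with ω hperω hA2ω
  set V : ℝ := ∑ i ∈ Finset.Icc 1 n, (μ[fun ω => ξ i ω ^ 2|𝓕 (i-1)]) ω with hV_def
  have hVle : V ≤ 2 := by
    have := (abs_le.mp hA2ω).2
    linarith
  have hV0 : 0 ≤ V := by
    have := (abs_le.mp hA2ω).1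
    linarith
  have hsplit : ∑ i ∈ Finset.Icc 1 n,
      (μ[fun ω => ξ i ω * Real.exp (l * ξ i ω)|𝓕 (i-1)]) ω /
        (μ[fun ω => Real.exp (l * ξ i ω)|𝓕 (i-1)]) ω - l * V =
      (∑ i ∈ Finset.Icc 1 n,
        ((μ[fun ω => ξ i ω * Real.exp (l * ξ i ω)|𝓕 (i-1)]) ω /
          (μ[fun ω => Real.exp (l * ξ i ω)|𝓕 (i-1)]) ω -
          l * (μ[fun ω => ξ i ω ^ 2|𝓕 (i-1)]) ω)) := by
    rw [Finset.sum_sub_distrib, hV_def, Finset.mul_sum]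
  have h1 : |∑ i ∈ Finset.Icc 1 n,
      (μ[fun ω => ξ i ω * Real.exp (l * ξ i ω)|𝓕 (i-1)]) ω /
        (μ[fun ω => Real.exp (l * ξ i ω)|𝓕 (i-1)]) ω - l * V|
      ≤ C * l^2 * ε * V := by
    rw [hsplit]
    refine (Finset.abs_sum_le_sum_abs _ _).trans ?_
    rw [hV_def, Finset.mul_sum]
    exact Finset.sum_le_sum fun i hi => (hperω i hi).2
  have h2 : |l * V - l| ≤ l * δ^2 := by
    have h3 : |l * V - l| = l * |V - 1| := by
      rw [show l * V - l = l * (V - 1) by ring, abs_mul, abs_of_nonneg hl0]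
    rw [h3]
    exact mul_le_mul_of_nonneg_left hA2ω hl0
  have hCl : C * l^2 * ε * V ≤ 2*C * l^2 * ε := by
    calc C * l^2 * ε * V ≤ C * l^2 * ε * 2 := by
          refine mul_le_mul_of_nonneg_left hVle (by positivity)
      _ = 2*C * l^2 * ε := by ring
  calc |(∑ i ∈ Finset.Icc 1 n,
      (μ[fun ω => ξ i ω * Real.exp (l * ξ i ω)|𝓕 (i-1)]) ω /
        (μ[fun ω => Real.exp (l * ξ i ω)|𝓕 (i-1)]) ω) - l|
      ≤ |∑ i ∈ Finset.Icc 1 n,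
          (μ[fun ω => ξ i ω * Real.exp (l * ξ i ω)|𝓕 (i-1)]) ω /
            (μ[fun ω => Real.exp (l * ξ i ω)|𝓕 (i-1)]) ω - l * V| + |l * V - l| := by
        have := abs_add_le (∑ i ∈ Finset.Icc 1 n,
          (μ[fun ω => ξ i ω * Real.exp (l * ξ i ω)|𝓕 (i-1)]) ω /
            (μ[fun ω => Real.exp (l * ξ i ω)|𝓕 (i-1)]) ω - l * V) (l * V - l)
        simpa using this
    _ ≤ C * l^2 * ε * V + l * δ^2 := add_le_add h1 h2
    _ ≤ l * δ^2 + 2*C * l^2 * ε := by linarith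
end

section
/- Under conditions (A1) and (A2), the quadratic characteristic of the conjugate martingale satisfies |⟨Y⟩_n − 1| ≤ c(λε + δ²) almost surely for all 0 ≤ λ ≤ (1/4) ε^{−1}, where c is an absolute constant and ⟨Y⟩_n = Σ_{k=1}^n Δ⟨Y⟩_k with Δ⟨Y⟩_k as defined via the Esscher transform. -/
set_option maxHeartbeats 1000000

open MeasureTheory Real
open scoped ENNReal NNReal

section Aux

variable {Ω : Type} {m0 : MeasurableSpace Ω} {μ : Measure Ω} {F : MeasurableSpace Ω}

lemma PL1 (t : ℝ) : Real.exp t ≤ 1 + t + t^2 + t^2 * Real.exp t := by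
  have h := Real.add_one_le_exp (-t)
  have h2 : Real.exp (-t) * Real.exp t = 1 := by rw [← Real.exp_add]; simp
  rcases le_or_gt 0 t with ht | ht
  · have h3 : (1 - t^2) ≤ (1+t) * Real.exp (-t) := by nlinarith [mul_le_mul_of_nonneg_left h (by linarith : (0:ℝ) ≤ 1 + t)]
    have h4 : (1 - t^2) * Real.exp t ≤ (1+t) := by
      calc (1 - t^2) * Real.exp t ≤ ((1+t) * Real.exp (-t)) * Real.exp t :=
            mul_le_mul_of_nonneg_right h3 (Real.exp_pos t).le
        _ = 1 + t := by rw [mul_assoc, h2, mul_one]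
    nlinarith [sq_nonneg t]
  · have h3 : (1 - t) * Real.exp t ≤ 1 := by
      calc (1-t) * Real.exp t ≤ Real.exp (-t) * Real.exp t :=
            mul_le_mul_of_nonneg_right (by linarith) (Real.exp_pos t).le
        _ = 1 := h2
    -- exp t ≤ 1 + t + t^2 since (1+t+t^2)(1-t) = 1 - t^3 ≥ 1 ≥ (1-t) exp t, 1-t > 0
    have h5 : Real.exp t ≤ 1 + t + t^2 := by nlinarith [Real.exp_pos t]
    nlinarith [mul_nonneg (sq_nonneg t) (Real.exp_pos t).le]

lemma PL2' (t : ℝ) : Real.exp t - 1 ≤ t * Real.exp t := by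
  have h := Real.add_one_le_exp (-t)
  have h2 : Real.exp (-t) * Real.exp t = 1 := by rw [← Real.exp_add]; simp
  nlinarith [mul_le_mul_of_nonneg_right h (Real.exp_pos t).le]

lemma PL2 (l : ℝ) (hl : 0 ≤ l) (x : ℝ) :
    x * Real.exp (l * x) ≤ x + l * x^2 + l * x^2 * Real.exp (l * x) := by
  rcases le_or_gt 0 x with hx | hx
  · have h := mul_le_mul_of_nonneg_left (PL2' (l * x)) hx
    nlinarith [mul_nonneg (mul_nonneg hl (sq_nonneg x)) (Real.exp_pos (l*x)).le, mul_nonneg hl (sq_nonneg x)]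
  · have h := Real.add_one_le_exp (l * x)
    have h3 := mul_le_mul_of_nonpos_left h hx.le
    nlinarith [mul_nonneg (mul_nonneg hl (sq_nonneg x)) (Real.exp_pos (l*x)).le]

lemma PL3 (l : ℝ) (hl : 0 ≤ l) (x : ℝ) : x ≤ x * Real.exp (l * x) := by
  rcases le_or_gt 0 x with hx | hx
  · have h1 : (1:ℝ) ≤ Real.exp (l*x) := by
      rw [← Real.exp_zero]; exact Real.exp_le_exp.mpr (by nlinarith)
    nlinarith
  · have h1 : Real.exp (l*x) ≤ 1 := by
      rw [← Real.exp_zero]; exact Real.exp_le_exp.mpr (by nlinarith)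
    nlinarith [Real.exp_pos (l*x)]

lemma PL4 (l : ℝ) (x : ℝ) : 1 + l * x ≤ Real.exp (l * x) := by
  have := Real.add_one_le_exp (l*x); linarith

lemma NB2 (m : ℕ) : ((m+1) * (m+2) : ℝ) ≤ 6 * 2 ^ m := by
  have h1 : (1:ℝ) ≤ 2 ^ m := one_le_pow₀ (by norm_num)
  induction m with
  | zero => norm_num
  | succ k ih =>
    have h2 : (1:ℝ) ≤ 2 ^ k := one_le_pow₀ (by norm_num)
    have ih' := ih h2
    have hp : (2:ℝ)^(k+1) = 2 * 2^k := by ring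
    push_cast at ih' ⊢
    rw [hp]
    nlinarith [sq_nonneg (k:ℝ)]

lemma NB3' (j : ℕ) : ((j+3) * (j+4) * (j+5) : ℝ) ≤ 24 * 2 ^ (j+2) := by
  induction j with
  | zero => norm_num
  | succ k ih =>
    have hp : (2:ℝ)^(k+1+2) = 2 * 2^(k+2) := by ring
    push_cast at ih ⊢
    rw [hp]
    have : (0:ℝ) ≤ (k:ℝ) := Nat.cast_nonneg k
    nlinarith [sq_nonneg ((k:ℝ)+4)]

lemma NB3 (m : ℕ) : ((m+1) * (m+2) * (m+3) : ℝ) ≤ 24 * 2 ^ m := by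
  match m with
  | 0 => norm_num
  | 1 => norm_num
  | (j+2) => have := NB3' j; push_cast at this ⊢; linarith

lemma sigma2_bounds [IsProbabilityMeasure μ] (hF : F ≤ m0) (ξ : Ω → ℝ) (ε : ℝ)
    (hε : 0 < ε) (hε2 : ε ≤ 1/2)
    (hI2 : Integrable (fun ω => ξ ω ^ 2) μ) (hI4 : Integrable (fun ω => ξ ω ^ 4) μ)
    (hB4 : ∀ᵐ ω ∂μ, |(μ[fun ω => ξ ω ^ 4|F]) ω| ≤
      (1/2) * (Nat.factorial 4 : ℝ) * ε ^ 2 * (μ[fun ω => ξ ω ^ 2|F]) ω) :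
    ∀ᵐ ω ∂μ, 0 ≤ (μ[fun ω => ξ ω ^ 2|F]) ω ∧ (μ[fun ω => ξ ω ^ 2|F]) ω ≤ 12 * ε ^ 2 := by
  haveI : SigmaFinite (μ.trim hF) := by infer_instance
  set σ2 := μ[fun ω => ξ ω ^ 2|F] with hσ2def
  set g : Ω → ℝ := fun ω => max 0 (min (σ2 ω) 4) with hgdef
  have hg_meas : StronglyMeasurable[F] g := by
    have : StronglyMeasurable[F] ((fun _ => (0:ℝ)) ⊔ (σ2 ⊓ fun _ => (4:ℝ))) :=
      stronglyMeasurable_const.sup (stronglyMeasurable_condExp.inf stronglyMeasurable_const)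
    exact this
  have hg_bdd : ∀ ω, ‖g ω‖ ≤ 4 := by
    intro ω
    simp only [hgdef, Real.norm_eq_abs, abs_le]
    constructor
    · have := le_max_left (0:ℝ) (min (σ2 ω) 4); linarith
    · exact max_le (by norm_num) (le_trans (min_le_right _ _) (by norm_num))
  have hgsm0 : AEStronglyMeasurable[m0] g μ := (hg_meas.mono hF).aestronglyMeasurable
  have hIg2 : Integrable (g * fun ω => ξ ω ^ 2) μ := hI2.bdd_mul (c := 4) hgsm0 (Filter.Eventually.of_forall hg_bdd)
  have hgg : (fun ω => g ω ^ 2) = g * g := by funext ω; simp [pow_two]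
  have hIgg : Integrable (fun ω => g ω ^ 2) μ := by
    refine Integrable.mono' (integrable_const (16:ℝ)) ?_ ?_
    · rw [hgg]; exact ((hg_meas.mul hg_meas).mono hF).aestronglyMeasurable
    · filter_upwards with ω
      have := hg_bdd ω
      simp only [Real.norm_eq_abs] at this ⊢
      rw [abs_pow]  -- |g^2| = |g|^2
      nlinarith [abs_nonneg (g ω)]
  -- nonnegativity of σ2
  have hσ2_nonneg : 0 ≤ᵐ[μ] σ2 :=
    condExp_nonneg (Filter.Eventually.of_forall fun ω => sq_nonneg (ξ ω))
  -- key: 0 ≤ E[(ξ² - g)² | F] = E[ξ⁴|F] - 2 g σ2 + g²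
  have hkey : 0 ≤ᵐ[μ] μ[fun ω => (ξ ω ^ 2 - g ω) ^ 2|F] :=
    condExp_nonneg (Filter.Eventually.of_forall fun ω => sq_nonneg _)
  have hsplit : (fun ω => (ξ ω ^ 2 - g ω) ^ 2) =
      fun ω => ξ ω ^ 4 - ((2:ℝ) • (g * fun ω => ξ ω ^ 2) - fun ω => g ω ^ 2) ω := by
    funext ω; simp [Pi.mul_apply]; ring
  have hIsub : Integrable ((2:ℝ) • (g * fun ω => ξ ω ^ 2) - fun ω => g ω ^ 2) μ :=
    (hIg2.smul (2:ℝ)).sub hIgg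
  have hexp : μ[fun ω => (ξ ω ^ 2 - g ω) ^ 2|F] =ᵐ[μ]
      fun ω => (μ[fun ω => ξ ω ^ 4|F]) ω - (2 * (g ω * σ2 ω) - g ω ^ 2) := by
    rw [hsplit]
    refine (condExp_sub hI4 hIsub F).trans ?_
    have h1 : μ[(2:ℝ) • (g * fun ω => ξ ω ^ 2) - fun ω => g ω ^ 2|F] =ᵐ[μ]
        fun ω => 2 * (g ω * σ2 ω) - g ω ^ 2 := by
      refine (condExp_sub (hIg2.smul (2:ℝ)) hIgg F).trans ?_
      have h2 : μ[(2:ℝ) • (g * fun ω => ξ ω ^ 2)|F] =ᵐ[μ] fun ω => 2 * (g ω * σ2 ω) := by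
        refine (condExp_smul (2:ℝ) _ F).trans ?_
        have h3 : μ[g * fun ω => ξ ω ^ 2|F] =ᵐ[μ] g * σ2 :=
          condExp_mul_of_stronglyMeasurable_left hg_meas hIg2 hI2
        filter_upwards [h3] with ω h3ω
        simp only [Pi.smul_apply, smul_eq_mul, h3ω, Pi.mul_apply]
      have h4 : μ[fun ω => g ω ^ 2|F] = fun ω => g ω ^ 2 := by
        refine condExp_of_stronglyMeasurable hF ?_ hIgg
        rw [hgg]; exact hg_meas.mul hg_meas
      filter_upwards [h2] with ω h2ω
      simp only [Pi.sub_apply, h2ω, h4]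
    filter_upwards [h1] with ω h1ω
    simp only [Pi.sub_apply, h1ω]
  filter_upwards [hσ2_nonneg, hkey, hexp, hB4] with ω h0 hk he hb
  rw [he] at hk
  refine ⟨h0, ?_⟩
  simp only [Pi.zero_apply] at hk h0
  have hb' : |(μ[fun ω => ξ ω ^ 4|F]) ω| ≤ 12 * ε ^ 2 * σ2 ω := by
    have : ((Nat.factorial 4 : ℕ) : ℝ) = 24 := by norm_num [Nat.factorial]
    rw [this] at hb; linarith
  have hV := (abs_le.mp hb').1
  have hV' := (abs_le.mp hb').2
  by_contra hcon
  push_neg at hcon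
  have hgω : g ω = min (σ2 ω) 4 := max_eq_right (le_min h0 (by norm_num))
  rcases le_or_gt (σ2 ω) 4 with hc | hc
  · have : g ω = σ2 ω := by rw [hgω]; exact min_eq_left hc
    rw [this] at hk
    nlinarith [sq_nonneg (ε), mul_pos hε hε]
  · have : g ω = 4 := by rw [hgω]; exact min_eq_right hc.le
    rw [this] at hk
    have hε4 : ε ^ 2 ≤ 1/4 := by nlinarith
    nlinarith [mul_le_mul_of_nonneg_right hε4 h0]

lemma mom [IsProbabilityMeasure μ] (hF : F ≤ m0) (ξ : Ω → ℝ) (ε : ℝ)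
    (hε : 0 < ε) (hε2 : ε ≤ 1/2)
    (hInt : ∀ k : ℕ, Integrable (fun ω => ξ ω ^ k) μ)
    (hσ : ∀ᵐ ω ∂μ, 0 ≤ (μ[fun ω => ξ ω ^ 2|F]) ω ∧ (μ[fun ω => ξ ω ^ 2|F]) ω ≤ 12 * ε ^ 2)
    (hB : ∀ k : ℕ, 3 ≤ k → ∀ᵐ ω ∂μ, |(μ[fun ω => ξ ω ^ k|F]) ω| ≤
      (1/2) * (Nat.factorial k : ℝ) * ε ^ (k-2) * (μ[fun ω => ξ ω ^ 2|F]) ω) :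
    ∀ m : ℕ, ∫ ω, |ξ ω| ^ (m+2) ∂μ ≤ 6 * (Nat.factorial (m+3) : ℝ) * ε ^ (m+1) := by
  haveI : SigmaFinite (μ.trim hF) := by infer_instance
  have hIabs : ∀ k : ℕ, Integrable (fun ω => |ξ ω| ^ k) μ := by
    intro k
    have := (hInt k).abs
    simp only [abs_pow] at this
    exact this
  have EV : ∀ k : ℕ, 2 ≤ k → ∫ ω, ξ ω ^ k ∂μ ≤ 6 * (Nat.factorial k : ℝ) * ε ^ k := by
    intro k hk
    have hae : ∀ᵐ ω ∂μ, (μ[fun ω => ξ ω ^ k|F]) ω ≤ 6 * (Nat.factorial k : ℝ) * ε ^ k := by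
      rcases Nat.lt_or_ge k 3 with h3 | h3
      · -- k = 2
        have hk2 : k = 2 := by omega
        subst hk2
        filter_upwards [hσ] with ω ⟨h0, h1⟩
        have : (Nat.factorial 2 : ℝ) = 2 := by norm_num [Nat.factorial]
        rw [this]
        calc (μ[fun ω => ξ ω ^ 2|F]) ω ≤ 12 * ε ^ 2 := h1
          _ = 6 * 2 * ε ^ 2 := by ring
      · filter_upwards [hσ, hB k h3] with ω ⟨h0, h1⟩ hb
        have hb' := (abs_le.mp hb).2
        have hc : (0:ℝ) ≤ (1/2) * (Nat.factorial k : ℝ) * ε ^ (k-2) := by positivity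
        calc (μ[fun ω => ξ ω ^ k|F]) ω ≤ |(μ[fun ω => ξ ω ^ k|F]) ω| := le_abs_self _
          _ ≤ (1/2) * (Nat.factorial k : ℝ) * ε ^ (k-2) * (μ[fun ω => ξ ω ^ 2|F]) ω := hb
          _ ≤ (1/2) * (Nat.factorial k : ℝ) * ε ^ (k-2) * (12 * ε ^ 2) :=
              mul_le_mul_of_nonneg_left h1 hc
          _ = 6 * (Nat.factorial k : ℝ) * (ε ^ (k-2) * ε ^ 2) := by ring
          _ = 6 * (Nat.factorial k : ℝ) * ε ^ k := by
              rw [← pow_add]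
              congr 2
              omega
    calc ∫ ω, ξ ω ^ k ∂μ = ∫ ω, (μ[fun ω => ξ ω ^ k|F]) ω ∂μ := (integral_condExp hF).symm
      _ ≤ ∫ _, 6 * (Nat.factorial k : ℝ) * ε ^ k ∂μ :=
          integral_mono_ae integrable_condExp (integrable_const _) hae
      _ = 6 * (Nat.factorial k : ℝ) * ε ^ k := by simp
  intro m
  rcases Nat.even_or_odd m with ⟨j, hj⟩ | ⟨j, hj⟩
  · subst hj
    have heq : ∀ x : ℝ, |x| ^ (j + j + 2) = x ^ (j + j + 2) := by
      intro x
      rw [← abs_pow]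
      exact abs_of_nonneg (Even.pow_nonneg ⟨j+1, by ring⟩ x)
    have h1 : ∫ ω, |ξ ω| ^ (j + j + 2) ∂μ = ∫ ω, ξ ω ^ (j + j + 2) ∂μ := by
      congr 1; funext ω; exact heq (ξ ω)
    rw [h1]
    refine le_trans (EV _ (by omega)) ?_
    have hf : (Nat.factorial (j+j+2) : ℝ) ≤ (Nat.factorial (j+j+2+1) : ℝ) := by
      exact_mod_cast Nat.factorial_le (by omega)
    have hee : ε ^ (j+j+2) ≤ ε ^ (j+j+1) := by
      apply pow_le_pow_of_le_one hε.le (by linarith) (by omega)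
    have h2 : j + j + 2 + 1 = j + j + 3 := by omega
    rw [h2] at hf
    calc 6 * (Nat.factorial (j+j+2) : ℝ) * ε ^ (j+j+2)
        ≤ 6 * (Nat.factorial (j+j+3) : ℝ) * ε ^ (j+j+1) := by
          apply mul_le_mul (by linarith) hee (by positivity) (by positivity)
      _ = 6 * (Nat.factorial (j+j+3) : ℝ) * ε ^ (j+j+1) := rfl
  · subst hj
    -- m = 2j+1, k = 2j+3 odd
    have hptw : ∀ x : ℝ, |x| ^ (2*j+1+2) ≤ x ^ (2*j+2) + x ^ (2*j+4) := by
      intro x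
      have he1 : |x| ^ (2*j+2) = x ^ (2*j+2) := by
        rw [← abs_pow]; exact abs_of_nonneg (Even.pow_nonneg ⟨j+1, by ring⟩ x)
      have he2 : |x| ^ (2*j+4) = x ^ (2*j+4) := by
        rw [← abs_pow]; exact abs_of_nonneg (Even.pow_nonneg ⟨j+2, by ring⟩ x)
      rcases le_or_gt (|x|) 1 with hx | hx
      · have : |x| ^ (2*j+3) ≤ |x| ^ (2*j+2) :=
          pow_le_pow_of_le_one (abs_nonneg x) hx (by omega)
        have h4 : (0:ℝ) ≤ x ^ (2*j+4) := Even.pow_nonneg ⟨j+2, by ring⟩ x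
        calc |x| ^ (2*j+1+2) = |x| ^ (2*j+3) := by norm_num
          _ ≤ x ^ (2*j+2) := by rw [← he1]; exact this
          _ ≤ x ^ (2*j+2) + x ^ (2*j+4) := by linarith
      · have h34 : |x| ^ (2*j+3) ≤ |x| ^ (2*j+4) :=
          pow_le_pow_right₀ hx.le (by omega)
        have h2 : (0:ℝ) ≤ x ^ (2*j+2) := Even.pow_nonneg ⟨j+1, by ring⟩ x
        calc |x| ^ (2*j+1+2) = |x| ^ (2*j+3) := by norm_num
          _ ≤ |x| ^ (2*j+4) := h34
          _ = x ^ (2*j+4) := he2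
          _ ≤ x ^ (2*j+2) + x ^ (2*j+4) := by linarith
    have hint : ∫ ω, |ξ ω| ^ (2*j+1+2) ∂μ ≤
        ∫ ω, (ξ ω ^ (2*j+2) + ξ ω ^ (2*j+4)) ∂μ := by
      refine integral_mono (hIabs _) ((hInt _).add (hInt _)) fun ω => hptw (ξ ω)
    have hadd : ∫ ω, (ξ ω ^ (2*j+2) + ξ ω ^ (2*j+4)) ∂μ =
        (∫ ω, ξ ω ^ (2*j+2) ∂μ) + ∫ ω, ξ ω ^ (2*j+4) ∂μ :=
      integral_add (hInt _) (hInt _)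
    have e1 := EV (2*j+2) (by omega)
    have e2 := EV (2*j+4) (by omega)
    have hfac : (Nat.factorial (2*j+4) : ℝ) =
        ((2*j+4 : ℕ) : ℝ) * (((2*j+3 : ℕ) : ℝ) * (Nat.factorial (2*j+2) : ℝ)) := by
      rw [show 2*j+4 = (2*j+3)+1 by omega, Nat.factorial_succ]
      push_cast
      rw [show (2*j+3 : ℕ) = (2*j+2)+1 by omega, Nat.factorial_succ]
      push_cast
      ring
    have htarget : 6 * (Nat.factorial (2*j+2) : ℝ) * ε ^ (2*j+2)
        + 6 * (Nat.factorial (2*j+4) : ℝ) * ε ^ (2*j+4)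
        ≤ 6 * (Nat.factorial (2*j+1+3) : ℝ) * ε ^ (2*j+1+1) := by
      have hh : (2*j+1+3) = 2*j+4 := by omega
      rw [hh, show 2*j+1+1 = 2*j+2 by omega]
      set A := (Nat.factorial (2*j+2) : ℝ) with hA
      set B := (Nat.factorial (2*j+4) : ℝ) with hB
      have hApos : (0:ℝ) < A := by positivity
      have hcast : (12:ℝ) ≤ ((2*j+4 : ℕ) : ℝ) * ((2*j+3 : ℕ) : ℝ) := by
        push_cast
        have hj0 : (0:ℝ) ≤ (j:ℝ) := Nat.cast_nonneg j
        nlinarith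
      have hAB : 2 * A ≤ B := by
        rw [hfac]
        nlinarith
      have hpe : ε ^ (2*j+4) = ε ^ (2*j+2) * ε ^ 2 := by rw [← pow_add]
      have hε4 : ε ^ 2 ≤ 1/4 := by nlinarith
      have hepos : (0:ℝ) < ε ^ (2*j+2) := pow_pos hε _
      rw [hpe]
      nlinarith [mul_pos hApos hepos, pow_pos hε (2*j+2),
        mul_le_mul_of_nonneg_left hε4 (mul_nonneg (by positivity : (0:ℝ) ≤ B) hepos.le)]
    calc ∫ ω, |ξ ω| ^ (2*j+1+2) ∂μ
        ≤ (∫ ω, ξ ω ^ (2*j+2) ∂μ) + ∫ ω, ξ ω ^ (2*j+4) ∂μ := by rw [← hadd]; exact hint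
      _ ≤ 6 * (Nat.factorial (2*j+2) : ℝ) * ε ^ (2*j+2)
          + 6 * (Nat.factorial (2*j+4) : ℝ) * ε ^ (2*j+4) := add_le_add e1 e2
      _ ≤ 6 * (Nat.factorial (2*j+1+3) : ℝ) * ε ^ (2*j+1+1) := htarget

lemma bseries [IsProbabilityMeasure μ] (hF : F ≤ m0) (ξ : Ω → ℝ) (ε l : ℝ)
    (hε : 0 < ε) (hε2 : ε ≤ 1/2) (hl : 0 ≤ l) (hlε : l * ε ≤ 1/4)
    (hInt : ∀ k : ℕ, Integrable (fun ω => ξ ω ^ k) μ)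
    (hσ : ∀ᵐ ω ∂μ, 0 ≤ (μ[fun ω => ξ ω ^ 2|F]) ω ∧ (μ[fun ω => ξ ω ^ 2|F]) ω ≤ 12 * ε ^ 2)
    (hB : ∀ k : ℕ, 3 ≤ k → ∀ᵐ ω ∂μ, |(μ[fun ω => ξ ω ^ k|F]) ω| ≤
      (1/2) * (Nat.factorial k : ℝ) * ε ^ (k-2) * (μ[fun ω => ξ ω ^ 2|F]) ω)
    (hmom : ∀ m : ℕ, ∫ ω, |ξ ω| ^ (m+2) ∂μ ≤ 6 * (Nat.factorial (m+3) : ℝ) * ε ^ (m+1))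
    (hIb : Integrable (fun ω => ξ ω ^ 2 * Real.exp (l * ξ ω)) μ) :
    ∀ᵐ ω ∂μ, |(μ[fun ω => ξ ω ^ 2 * Real.exp (l * ξ ω)|F]) ω - (μ[fun ω => ξ ω ^ 2|F]) ω|
      ≤ 12 * (l * ε) * (μ[fun ω => ξ ω ^ 2|F]) ω := by
  haveI : SigmaFinite (μ.trim hF) := by infer_instance
  set f : Ω → ℝ := fun ω => ξ ω ^ 2 * Real.exp (l * ξ ω) with hfdef
  set h : ℕ → Ω → ℝ := fun m ω => (l ^ m / (Nat.factorial m : ℝ)) * ξ ω ^ (m+2) with hhdef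
  -- pointwise expansion
  have hSum : ∀ ω, HasSum (fun m => h m ω) (f ω) := by
    intro ω
    have h0 : HasSum (fun n => (l * ξ ω) ^ n / (Nat.factorial n : ℝ)) (Real.exp (l * ξ ω)) := by
      rw [Real.exp_eq_exp_ℝ]
      exact NormedSpace.expSeries_div_hasSum_exp (l * ξ ω)
    have h1 := h0.mul_left (ξ ω ^ 2)
    refine h1.congr_fun fun n => ?_
    simp only [hhdef, mul_pow]
    ring
  have habsSum : ∀ ω, HasSum (fun m => |h m ω|) (ξ ω ^ 2 * Real.exp (l * |ξ ω|)) := by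
    intro ω
    have h0 : HasSum (fun n => (l * |ξ ω|) ^ n / (Nat.factorial n : ℝ))
        (Real.exp (l * |ξ ω|)) := by
      rw [Real.exp_eq_exp_ℝ]
      exact NormedSpace.expSeries_div_hasSum_exp (l * |ξ ω|)
    have h1 := h0.mul_left (ξ ω ^ 2)
    refine h1.congr_fun fun n => ?_
    have : |h n ω| = (l ^ n / (Nat.factorial n : ℝ)) * |ξ ω| ^ (n+2) := by
      rw [hhdef, abs_mul, abs_pow]
      congr 1
      rw [abs_of_nonneg (by positivity : (0:ℝ) ≤ l ^ n / (Nat.factorial n : ℝ))]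
    rw [this, mul_pow]
    rw [show |ξ ω| ^ (n+2) = |ξ ω| ^ n * |ξ ω| ^ 2 from by rw [pow_add]]
    rw [sq_abs]
    ring
  have hIh : ∀ m : ℕ, Integrable (h m) μ := fun m => (hInt (m+2)).const_mul _
  have hIS : ∀ N : ℕ, Integrable (fun ω => ∑ m ∈ Finset.range N, h m ω) μ := by
    intro N
    have := integrable_finset_sum (μ := μ) (Finset.range N) (fun m _ => hIh m)
    simpa using this
  -- moment bound on each term
  have hterm : ∀ m : ℕ, ∫ ω, |h m ω| ∂μ ≤ 144 * ε * (1/2) ^ m := by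
    intro m
    have heq : ∀ ω, |h m ω| = (l ^ m / (Nat.factorial m : ℝ)) * |ξ ω| ^ (m+2) := by
      intro ω
      rw [hhdef, abs_mul, abs_pow, abs_of_nonneg (by positivity : (0:ℝ) ≤ l ^ m / (Nat.factorial m : ℝ))]
    calc ∫ ω, |h m ω| ∂μ = (l ^ m / (Nat.factorial m : ℝ)) * ∫ ω, |ξ ω| ^ (m+2) ∂μ := by
          rw [← integral_const_mul]
          exact integral_congr_ae (Filter.Eventually.of_forall fun ω => heq ω)
      _ ≤ (l ^ m / (Nat.factorial m : ℝ)) * (6 * (Nat.factorial (m+3) : ℝ) * ε ^ (m+1)) := by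
          apply mul_le_mul_of_nonneg_left (hmom m) (by positivity)
      _ = 6 * ε * (((m:ℝ)+1) * ((m:ℝ)+2) * ((m:ℝ)+3)) * (l * ε) ^ m := by
          have hfac : (Nat.factorial (m+3) : ℝ) =
              ((m:ℝ)+1) * (((m:ℝ)+2) * (((m:ℝ)+3) * (Nat.factorial m : ℝ))) := by
            rw [show m+3 = (m+2)+1 by omega, Nat.factorial_succ,
                show m+2 = (m+1)+1 by omega, Nat.factorial_succ, Nat.factorial_succ]
            push_cast; ring
          have hfm : (0:ℝ) < (Nat.factorial m : ℝ) := by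
            exact_mod_cast Nat.factorial_pos m
          rw [hfac, mul_pow, pow_succ]
          field_simp
      _ ≤ 6 * ε * (24 * 2 ^ m) * (l * ε) ^ m := by
          apply mul_le_mul_of_nonneg_right _ (by positivity)
          apply mul_le_mul_of_nonneg_left (NB3 m) (by positivity)
      _ = 144 * ε * (2 * (l * ε)) ^ m := by rw [mul_pow]; ring
      _ ≤ 144 * ε * (1/2) ^ m := by
          apply mul_le_mul_of_nonneg_left _ (by positivity)
          apply pow_le_pow_left₀ (by positivity) (by linarith)
  -- remainder bound
  have hremainder : ∀ N : ℕ, ∫ ω, |f ω - ∑ m ∈ Finset.range N, h m ω| ∂μ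
      ≤ 288 * ε * (1/2) ^ N := by
    intro N
    set R : Ω → ℝ := fun ω => f ω - ∑ m ∈ Finset.range N, h m ω with hRdef
    have hIR : Integrable R μ := hIb.sub (hIS N)
    have hRptw : ∀ ω, |R ω| ≤ ∑' m, |h (m + N) ω| := by
      intro ω
      have hsummable := (hSum ω).summable
      have htail : R ω = ∑' m, h (m + N) ω := by
        have := Summable.sum_add_tsum_nat_add (f := fun m => h m ω) N hsummable
        rw [hRdef]
        simp only
        rw [← (hSum ω).tsum_eq]
        linarith [this]
      rw [htail]
      have habs : Summable fun m => |h (m + N) ω| :=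
        ((summable_nat_add_iff N).mpr (habsSum ω).summable)
      have := norm_tsum_le_tsum_norm (f := fun m => h (m + N) ω) (by simpa [Real.norm_eq_abs] using habs)
      simpa [Real.norm_eq_abs] using this
    -- pass to lintegral
    have hmeasm : ∀ m : ℕ, AEMeasurable (fun ω => ENNReal.ofReal |h (m + N) ω|) μ :=
      fun m => ((hIh (m+N)).abs.aestronglyMeasurable.aemeasurable).ennreal_ofReal
    have hhalf : ENNReal.ofReal ((1:ℝ)/2) = 1/2 := by
      rw [ENNReal.ofReal_div_of_pos (by norm_num)]
      norm_num
    have key : ENNReal.ofReal (∫ ω, |R ω| ∂μ) ≤ ENNReal.ofReal (288 * ε * (1/2) ^ N) := by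
      rw [ofReal_integral_eq_lintegral_ofReal hIR.abs
        (Filter.Eventually.of_forall fun ω => abs_nonneg _)]
      calc ∫⁻ ω, ENNReal.ofReal |R ω| ∂μ
          ≤ ∫⁻ ω, ENNReal.ofReal (∑' m, |h (m + N) ω|) ∂μ :=
            lintegral_mono fun ω => ENNReal.ofReal_le_ofReal (hRptw ω)
        _ = ∫⁻ ω, ∑' m, ENNReal.ofReal |h (m + N) ω| ∂μ := by
            apply lintegral_congr fun ω => ?_
            exact ENNReal.ofReal_tsum_of_nonneg (fun m => abs_nonneg _)
              ((summable_nat_add_iff N).mpr (habsSum ω).summable)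
        _ = ∑' m, ∫⁻ ω, ENNReal.ofReal |h (m + N) ω| ∂μ := lintegral_tsum hmeasm
        _ ≤ ∑' m, ENNReal.ofReal (144 * ε * (1/2) ^ (m + N)) := by
            refine ENNReal.tsum_le_tsum fun m => ?_
            rw [← ofReal_integral_eq_lintegral_ofReal (hIh (m+N)).abs
              (Filter.Eventually.of_forall fun ω => abs_nonneg _)]
            exact ENNReal.ofReal_le_ofReal (hterm (m+N))
        _ = ∑' m, ENNReal.ofReal (144 * ε * (1/2) ^ N) * ENNReal.ofReal ((1/2) ^ m) := by
            congr 1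
            funext m
            rw [← ENNReal.ofReal_mul (by positivity)]
            congr 1
            rw [pow_add]
            ring
        _ = ENNReal.ofReal (144 * ε * (1/2) ^ N) * ∑' m : ℕ, ENNReal.ofReal ((1/2) ^ m) :=
            ENNReal.tsum_mul_left
        _ ≤ ENNReal.ofReal (144 * ε * (1/2) ^ N) * 2 := by
            refine mul_le_mul_right ?_ _
            have : ∀ m : ℕ, ENNReal.ofReal ((1/2:ℝ) ^ m) = (1/2 : ℝ≥0∞) ^ m := by
              intro m
              rw [ENNReal.ofReal_pow (by norm_num), hhalf]
            rw [tsum_congr this, ENNReal.tsum_geometric]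
            rw [show (1 : ℝ≥0∞) - 1/2 = 1/2 by rw [one_div, ENNReal.one_sub_inv_two]]
            rw [show ((1:ℝ≥0∞)/2)⁻¹ = 2 by
              rw [one_div, inv_inv]]
        _ = ENNReal.ofReal (288 * ε * (1/2) ^ N) := by
            rw [show (2 : ℝ≥0∞) = ENNReal.ofReal (2:ℝ) by norm_num,
              ← ENNReal.ofReal_mul (by positivity)]
            congr 1
            ring
    rw [← ENNReal.ofReal_le_ofReal_iff (by positivity)]
    exact key
  -- partial sum condExp identity
  have hcond : ∀ N : ℕ, μ[fun ω => ∑ m ∈ Finset.range N, h m ω|F] =ᵐ[μ]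
      fun ω => ∑ m ∈ Finset.range N, (l ^ m / (Nat.factorial m : ℝ)) *
        (μ[fun ω => ξ ω ^ (m+2)|F]) ω := by
    intro N
    have h1 : μ[fun ω => ∑ m ∈ Finset.range N, h m ω|F] =ᵐ[μ]
        fun ω => ∑ m ∈ Finset.range N, (μ[h m|F]) ω := by
      have := condExp_finsetSum (μ := μ) (m := F) (fun m (_ : m ∈ Finset.range N) => hIh m)
      refine Filter.EventuallyEq.trans (condExp_congr_ae ?_) (this.trans ?_)
      · exact Filter.Eventually.of_forall fun ω => by simp
      · exact Filter.Eventually.of_forall fun ω => by simp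
    refine h1.trans ?_
    have h2 : ∀ m : ℕ, μ[h m|F] =ᵐ[μ]
        fun ω => (l ^ m / (Nat.factorial m : ℝ)) * (μ[fun ω => ξ ω ^ (m+2)|F]) ω := by
      intro m
      have : h m = (l ^ m / (Nat.factorial m : ℝ)) • (fun ω => ξ ω ^ (m+2)) := by
        funext ω; simp [hhdef, smul_eq_mul]
      rw [this]
      refine (condExp_smul _ _ F).trans ?_
      exact Filter.Eventually.of_forall fun ω => by simp [smul_eq_mul]
    have h3 : ∀ᵐ ω ∂μ, ∀ m : ℕ, m ∈ Finset.range N → (μ[h m|F]) ω =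
        (l ^ m / (Nat.factorial m : ℝ)) * (μ[fun ω => ξ ω ^ (m+2)|F]) ω := by
      rw [ae_all_iff]
      intro m
      filter_upwards [h2 m] with ω hω _
      exact hω
    filter_upwards [h3] with ω hω
    exact Finset.sum_congr rfl fun m hm => hω m hm
  -- bound on the partial conditional sums
  have hTbd : ∀ N : ℕ, ∀ᵐ ω ∂μ,
      |(∑ m ∈ Finset.range (N+1), (l ^ m / (Nat.factorial m : ℝ)) *
        (μ[fun ω => ξ ω ^ (m+2)|F]) ω) - (μ[fun ω => ξ ω ^ 2|F]) ω|
      ≤ 12 * (l * ε) * (μ[fun ω => ξ ω ^ 2|F]) ω := by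
    intro N
    have hBall : ∀ᵐ ω ∂μ, ∀ m : ℕ, |(μ[fun ω => ξ ω ^ (m+3)|F]) ω| ≤
        (1/2) * (Nat.factorial (m+3) : ℝ) * ε ^ (m+1) * (μ[fun ω => ξ ω ^ 2|F]) ω := by
      rw [ae_all_iff]
      intro m
      have := hB (m+3) (by omega)
      filter_upwards [this] with ω hω
      have he : (m + 3) - 2 = m + 1 := by omega
      rwa [he] at hω
    filter_upwards [hBall, hσ] with ω hω ⟨hσ0, _⟩
    have hpeel : ∑ m ∈ Finset.range (N+1), (l ^ m / (Nat.factorial m : ℝ)) *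
        (μ[fun ω => ξ ω ^ (m+2)|F]) ω
        = (∑ m ∈ Finset.range N, (l ^ (m+1) / (Nat.factorial (m+1) : ℝ)) *
          (μ[fun ω => ξ ω ^ (m+3)|F]) ω) + (μ[fun ω => ξ ω ^ 2|F]) ω := by
      rw [Finset.sum_range_succ' (fun m => (l ^ m / (Nat.factorial m : ℝ)) *
        (μ[fun ω => ξ ω ^ (m+2)|F]) ω) N]
      have h0 : l ^ 0 / ((Nat.factorial 0 : ℕ) : ℝ) * (μ[fun ω => ξ ω ^ (0+2)|F]) ω
          = (μ[fun ω => ξ ω ^ 2|F]) ω := by norm_num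
      rw [h0]
    rw [hpeel, add_sub_cancel_right]
    set σ2ω := (μ[fun ω => ξ ω ^ 2|F]) ω with hσ2ω
    calc |∑ m ∈ Finset.range N, (l ^ (m+1) / (Nat.factorial (m+1) : ℝ)) *
          (μ[fun ω => ξ ω ^ (m+3)|F]) ω|
        ≤ ∑ m ∈ Finset.range N, |(l ^ (m+1) / (Nat.factorial (m+1) : ℝ)) *
          (μ[fun ω => ξ ω ^ (m+3)|F]) ω| := Finset.abs_sum_le_sum_abs _ _
      _ ≤ ∑ m ∈ Finset.range N, (6 * (l*ε) * (1/2) ^ m * σ2ω) := by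
          refine Finset.sum_le_sum fun m _ => ?_
          rw [abs_mul, abs_of_nonneg (by positivity : (0:ℝ) ≤ l ^ (m+1) / (Nat.factorial (m+1) : ℝ))]
          have h1 : l ^ (m+1) / (Nat.factorial (m+1) : ℝ) * |(μ[fun ω => ξ ω ^ (m+3)|F]) ω|
              ≤ l ^ (m+1) / (Nat.factorial (m+1) : ℝ) *
                ((1/2) * (Nat.factorial (m+3) : ℝ) * ε ^ (m+1) * σ2ω) :=
            mul_le_mul_of_nonneg_left (hω m) (by positivity)
          refine h1.trans ?_
          have hfac : (Nat.factorial (m+3) : ℝ) =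
              ((m:ℝ)+2) * (((m:ℝ)+3) * (Nat.factorial (m+1) : ℝ)) := by
            rw [show m+3 = (m+2)+1 by omega, Nat.factorial_succ,
                show m+2 = (m+1)+1 by omega, Nat.factorial_succ]
            push_cast; ring
          have hfm1 : (0:ℝ) < (Nat.factorial (m+1) : ℝ) := by
            exact_mod_cast Nat.factorial_pos (m+1)
          have heq2 : l ^ (m+1) / (Nat.factorial (m+1) : ℝ) *
              ((1/2) * (Nat.factorial (m+3) : ℝ) * ε ^ (m+1) * σ2ω)
              = (1/2) * (((m:ℝ)+2) * ((m:ℝ)+3)) * (l*ε) ^ (m+1) * σ2ω := by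
            rw [hfac, mul_pow]
            field_simp
          rw [heq2]
          have hNB := NB2 (m+1)
          push_cast at hNB
          have hb1 : (1/2:ℝ) * (((m:ℝ)+2) * ((m:ℝ)+3)) ≤ 3 * 2 ^ (m+1) := by linarith
          have base : (1/2:ℝ) * (((m:ℝ)+2) * ((m:ℝ)+3)) * (l*ε) ^ (m+1)
              ≤ 6 * (l*ε) * (1/2) ^ m := by
            calc (1/2:ℝ) * (((m:ℝ)+2) * ((m:ℝ)+3)) * (l*ε) ^ (m+1)
                ≤ 3 * 2 ^ (m+1) * (l*ε) ^ (m+1) :=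
                  mul_le_mul_of_nonneg_right hb1 (by positivity)
              _ = 6 * (l*ε) * (2*(l*ε)) ^ m := by
                  rw [pow_succ, pow_succ, mul_pow]; ring
              _ ≤ 6 * (l*ε) * (1/2) ^ m := by
                  apply mul_le_mul_of_nonneg_left _ (by positivity)
                  apply pow_le_pow_left₀ (by positivity) (by linarith)
          exact mul_le_mul_of_nonneg_right base hσ0
      _ = 6 * (l*ε) * (∑ m ∈ Finset.range N, (1/2:ℝ) ^ m) * σ2ω := by
          rw [← Finset.sum_mul, ← Finset.mul_sum]
      _ ≤ 12 * (l * ε) * σ2ω := by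
          have hgeo := sum_geometric_two_le N
          have hlε0 : (0:ℝ) ≤ l * ε := by positivity
          nlinarith [mul_nonneg hlε0 hσ0]
  -- conclude via positive part argument
  set R : ℕ → Ω → ℝ := fun N ω => f ω - ∑ m ∈ Finset.range N, h m ω with hRdef
  have hIR : ∀ N, Integrable (R N) μ := fun N => hIb.sub (hIS N)
  have hH0 : ∀ N, 0 ≤ᵐ[μ] μ[(fun ω => |R N ω|)|F] :=
    fun N => condExp_nonneg (Filter.Eventually.of_forall fun ω => abs_nonneg _)
  have hHabs : ∀ N, ∀ᵐ ω ∂μ, |(μ[R N|F]) ω| ≤ (μ[(fun ω => |R N ω|)|F]) ω := by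
    intro N
    have hup : μ[R N|F] ≤ᵐ[μ] μ[(fun ω => |R N ω|)|F] :=
      condExp_mono (hIR N) (hIR N).abs (Filter.Eventually.of_forall fun ω => le_abs_self _)
    have hdn : μ[fun ω => -(R N ω)|F] ≤ᵐ[μ] μ[(fun ω => |R N ω|)|F] :=
      condExp_mono (hIR N).neg (hIR N).abs (Filter.Eventually.of_forall fun ω => neg_le_abs _)
    have hneg : μ[fun ω => -(R N ω)|F] =ᵐ[μ] fun ω => -((μ[R N|F]) ω) := by
      have := condExp_neg (μ := μ) (m := F) (R N)
      refine Filter.EventuallyEq.trans (condExp_congr_ae ?_) (this.trans ?_)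
      · exact Filter.Eventually.of_forall fun ω => by simp
      · exact Filter.Eventually.of_forall fun ω => by simp
    filter_upwards [hup, hdn, hneg] with ω h1 h2 h3
    rw [h3] at h2
    exact abs_le.mpr ⟨by linarith, h1⟩
  have hdecomp : ∀ N, μ[f|F] =ᵐ[μ]
      fun ω => (μ[fun ω => ∑ m ∈ Finset.range N, h m ω|F]) ω + (μ[R N|F]) ω := by
    intro N
    have hfeq : f = fun ω => (∑ m ∈ Finset.range N, h m ω) + R N ω := by
      funext ω; simp [hRdef]
    nth_rewrite 1 [hfeq]
    exact condExp_add (hIS N) (hIR N) F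
  set W : Ω → ℝ := fun ω => |(μ[f|F]) ω - (μ[fun ω => ξ ω ^ 2|F]) ω|
    - 12 * (l * ε) * (μ[fun ω => ξ ω ^ 2|F]) ω with hWdef
  have hWN : ∀ N : ℕ, ∀ᵐ ω ∂μ, W ω ≤ (μ[(fun ω => |R (N+1) ω|)|F]) ω := by
    intro N
    filter_upwards [hdecomp (N+1), hcond (N+1), hTbd N, hHabs (N+1)] with ω h1 h2 h3 h4
    rw [hWdef]
    simp only
    rw [h1, h2]
    have := abs_sub_abs_le_abs_sub ((∑ m ∈ Finset.range (N+1),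
      (l ^ m / (Nat.factorial m : ℝ)) * (μ[fun ω => ξ ω ^ (m+2)|F]) ω) + (μ[R (N+1)|F]) ω
      - (μ[fun ω => ξ ω ^ 2|F]) ω)
      ((∑ m ∈ Finset.range (N+1), (l ^ m / (Nat.factorial m : ℝ)) *
        (μ[fun ω => ξ ω ^ (m+2)|F]) ω) - (μ[fun ω => ξ ω ^ 2|F]) ω)
    have habs2 : |(∑ m ∈ Finset.range (N+1), (l ^ m / (Nat.factorial m : ℝ)) *
        (μ[fun ω => ξ ω ^ (m+2)|F]) ω) + (μ[R (N+1)|F]) ω - (μ[fun ω => ξ ω ^ 2|F]) ω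
        - ((∑ m ∈ Finset.range (N+1), (l ^ m / (Nat.factorial m : ℝ)) *
        (μ[fun ω => ξ ω ^ (m+2)|F]) ω) - (μ[fun ω => ξ ω ^ 2|F]) ω)| = |(μ[R (N+1)|F]) ω| := by
      congr 1; ring
    rw [habs2] at this
    linarith
  have hWint : Integrable W μ := by
    rw [hWdef]
    exact ((integrable_condExp.sub integrable_condExp).abs).sub (integrable_condExp.const_mul _)
  have hWpint : Integrable (fun ω => max (W ω) 0) μ := hWint.pos_part
  have hWpbd : ∀ N : ℕ, ∫ ω, max (W ω) 0 ∂μ ≤ 288 * ε * (1/2) ^ (N+1) := by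
    intro N
    have h1 : ∫ ω, max (W ω) 0 ∂μ ≤ ∫ ω, (μ[(fun ω => |R (N+1) ω|)|F]) ω ∂μ := by
      refine integral_mono_ae hWpint integrable_condExp ?_
      filter_upwards [hWN N, hH0 (N+1)] with ω h1 h2
      exact max_le h1 h2
    have h2 : ∫ ω, (μ[(fun ω => |R (N+1) ω|)|F]) ω ∂μ = ∫ ω, |R (N+1) ω| ∂μ :=
      integral_condExp hF
    calc ∫ ω, max (W ω) 0 ∂μ ≤ ∫ ω, |R (N+1) ω| ∂μ := by rw [← h2]; exact h1
      _ ≤ 288 * ε * (1/2) ^ (N+1) := hremainder (N+1)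
  have htend : Filter.Tendsto (fun N : ℕ => 288 * ε * (1/2 : ℝ) ^ (N+1)) Filter.atTop (nhds 0) := by
    have h0 : Filter.Tendsto (fun N : ℕ => (1/2 : ℝ) ^ N) Filter.atTop (nhds 0) :=
      tendsto_pow_atTop_nhds_zero_of_lt_one (by norm_num) (by norm_num)
    have h1 := h0.const_mul (144 * ε)
    rw [mul_zero] at h1
    refine h1.congr fun N => ?_
    rw [pow_succ]
    ring
  have hWple : ∫ ω, max (W ω) 0 ∂μ ≤ 0 :=
    ge_of_tendsto htend (Filter.Eventually.of_forall fun N => hWpbd N)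
  have hWpz : ∫ ω, max (W ω) 0 ∂μ = 0 :=
    le_antisymm hWple (integral_nonneg fun ω => le_max_right _ _)
  have hWp0 : (fun ω => max (W ω) 0) =ᵐ[μ] 0 :=
    (integral_eq_zero_iff_of_nonneg_ae
      (Filter.Eventually.of_forall fun ω => le_max_right _ _) hWpint).mp hWpz
  filter_upwards [hWp0] with ω h0
  have : W ω ≤ 0 := by
    by_contra hcon
    push_neg at hcon
    simp only [Pi.zero_apply] at h0
    rw [max_eq_left hcon.le] at h0
    linarith
  rw [hWdef] at this
  simp only at this
  linarith

lemma core [IsProbabilityMeasure μ] (hF : F ≤ m0) (ξ : Ω → ℝ) (ε l : ℝ)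
    (hε : 0 < ε) (hε2 : ε ≤ 1/2) (hl : 0 ≤ l) (hlε : l * ε ≤ 1/4)
    (hInt : ∀ k : ℕ, Integrable (fun ω => ξ ω ^ k) μ)
    (hcond0 : μ[ξ|F] =ᵐ[μ] 0)
    (hB : ∀ k : ℕ, 3 ≤ k → ∀ᵐ ω ∂μ, |(μ[fun ω => ξ ω ^ k|F]) ω| ≤
      (1/2) * (Nat.factorial k : ℝ) * ε ^ (k-2) * (μ[fun ω => ξ ω ^ 2|F]) ω)
    (hσ : ∀ᵐ ω ∂μ, 0 ≤ (μ[fun ω => ξ ω ^ 2|F]) ω ∧ (μ[fun ω => ξ ω ^ 2|F]) ω ≤ 12 * ε ^ 2)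
    (hbs : ∀ᵐ ω ∂μ, |(μ[fun ω => ξ ω ^ 2 * Real.exp (l * ξ ω)|F]) ω - (μ[fun ω => ξ ω ^ 2|F]) ω|
      ≤ 12 * (l * ε) * (μ[fun ω => ξ ω ^ 2|F]) ω)
    (hIe : Integrable (fun ω => Real.exp (l * ξ ω)) μ)
    (hIa : Integrable (fun ω => ξ ω * Real.exp (l * ξ ω)) μ)
    (hIb : Integrable (fun ω => ξ ω ^ 2 * Real.exp (l * ξ ω)) μ) :
    ∀ᵐ ω ∂μ,
      |(μ[fun ω => ξ ω ^ 2 * Real.exp (l * ξ ω)|F]) ω / (μ[fun ω => Real.exp (l * ξ ω)|F]) ω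
        - ((μ[fun ω => ξ ω * Real.exp (l * ξ ω)|F]) ω / (μ[fun ω => Real.exp (l * ξ ω)|F]) ω) ^ 2
        - (μ[fun ω => ξ ω ^ 2|F]) ω|
      ≤ 102 * (l * ε) * (μ[fun ω => ξ ω ^ 2|F]) ω := by
  haveI : SigmaFinite (μ.trim hF) := by infer_instance
  have hIξ : Integrable ξ μ := by
    have := hInt 1
    simpa [pow_one] using this
  have hIq2 : Integrable (fun ω => ξ ω ^ 2) μ := hInt 2
  -- b ≥ 0
  have h_b_nonneg : 0 ≤ᵐ[μ] μ[fun ω => ξ ω ^ 2 * Real.exp (l * ξ ω)|F] :=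
    condExp_nonneg (Filter.Eventually.of_forall fun ω => by positivity)
  -- e ≥ 1
  have h_e_ge : ∀ᵐ ω ∂μ, 1 ≤ (μ[fun ω => Real.exp (l * ξ ω)|F]) ω := by
    have hmono : μ[(fun _ => (1:ℝ)) + l • ξ|F] ≤ᵐ[μ] μ[fun ω => Real.exp (l * ξ ω)|F] := by
      refine condExp_mono ((integrable_const 1).add (hIξ.smul l)) hIe ?_
      exact Filter.Eventually.of_forall fun ω => by
        simpa [Pi.add_apply, Pi.smul_apply, smul_eq_mul] using PL4 l (ξ ω)
    have hcomp : μ[(fun _ => (1:ℝ)) + l • ξ|F] =ᵐ[μ] fun ω => 1 + l * (μ[ξ|F]) ω := by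
      refine (condExp_add (integrable_const 1) (hIξ.smul l) F).trans ?_
      have h1 : μ[(fun _ => (1:ℝ))|F] = fun _ => (1:ℝ) := condExp_const hF 1
      have h2 : μ[l • ξ|F] =ᵐ[μ] l • μ[ξ|F] := condExp_smul l ξ F
      filter_upwards [h2] with ω h2ω
      simp only [Pi.add_apply, h1, h2ω, Pi.smul_apply, smul_eq_mul]
    filter_upwards [hmono, hcomp, hcond0] with ω h1 h2 h3
    rw [h2] at h1
    simp only [h3] at h1
    simpa using h1
  -- a ≥ 0
  have h_a_ge : ∀ᵐ ω ∂μ, 0 ≤ (μ[fun ω => ξ ω * Real.exp (l * ξ ω)|F]) ω := by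
    have hmono : μ[ξ|F] ≤ᵐ[μ] μ[fun ω => ξ ω * Real.exp (l * ξ ω)|F] :=
      condExp_mono hIξ hIa (Filter.Eventually.of_forall fun ω => PL3 l hl (ξ ω))
    filter_upwards [hmono, hcond0] with ω h1 h2
    rw [h2] at h1
    simpa using h1
  -- a ≤ l σ2 + l b
  have h_a_le : ∀ᵐ ω ∂μ, (μ[fun ω => ξ ω * Real.exp (l * ξ ω)|F]) ω ≤
      l * (μ[fun ω => ξ ω ^ 2|F]) ω + l * (μ[fun ω => ξ ω ^ 2 * Real.exp (l * ξ ω)|F]) ω := by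
    have hmono : μ[fun ω => ξ ω * Real.exp (l * ξ ω)|F] ≤ᵐ[μ]
        μ[ξ + (l • (fun ω => ξ ω ^ 2) + l • fun ω => ξ ω ^ 2 * Real.exp (l * ξ ω))|F] := by
      refine condExp_mono hIa (hIξ.add ((hIq2.smul l).add (hIb.smul l))) ?_
      refine Filter.Eventually.of_forall fun ω => ?_
      have hp := PL2 l hl (ξ ω)
      simp only [Pi.add_apply, Pi.smul_apply, smul_eq_mul]
      ring_nf at hp ⊢
      linarith
    have hcomp : μ[ξ + (l • (fun ω => ξ ω ^ 2) + l • fun ω => ξ ω ^ 2 * Real.exp (l * ξ ω))|F]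
        =ᵐ[μ] fun ω => (μ[ξ|F]) ω + (l * (μ[fun ω => ξ ω ^ 2|F]) ω
          + l * (μ[fun ω => ξ ω ^ 2 * Real.exp (l * ξ ω)|F]) ω) := by
      refine (condExp_add hIξ ((hIq2.smul l).add (hIb.smul l)) F).trans ?_
      have h2 : μ[l • (fun ω => ξ ω ^ 2) + l • fun ω => ξ ω ^ 2 * Real.exp (l * ξ ω)|F] =ᵐ[μ]
          fun ω => l * (μ[fun ω => ξ ω ^ 2|F]) ω
            + l * (μ[fun ω => ξ ω ^ 2 * Real.exp (l * ξ ω)|F]) ω := by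
        refine (condExp_add (hIq2.smul l) (hIb.smul l) F).trans ?_
        have h3 := condExp_smul (μ := μ) (m := F) l (fun ω => ξ ω ^ 2)
        have h4 := condExp_smul (μ := μ) (m := F) l (fun ω => ξ ω ^ 2 * Real.exp (l * ξ ω))
        filter_upwards [h3, h4] with ω h3ω h4ω
        simp only [Pi.add_apply, h3ω, h4ω, Pi.smul_apply, smul_eq_mul]
      filter_upwards [h2] with ω h2ω
      simp only [Pi.add_apply, h2ω]
    filter_upwards [hmono, hcomp, hcond0] with ω h1 h2 h3
    rw [h2] at h1
    simp only [h3] at h1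
    simpa using h1
  -- e ≤ 1 + l² σ2 + l² b
  have h_e_le : ∀ᵐ ω ∂μ, (μ[fun ω => Real.exp (l * ξ ω)|F]) ω ≤
      1 + (l^2 * (μ[fun ω => ξ ω ^ 2|F]) ω
        + l^2 * (μ[fun ω => ξ ω ^ 2 * Real.exp (l * ξ ω)|F]) ω) := by
    have hmono : μ[fun ω => Real.exp (l * ξ ω)|F] ≤ᵐ[μ]
        μ[(fun _ => (1:ℝ)) + (l • ξ + ((l^2) • (fun ω => ξ ω ^ 2)
          + (l^2) • fun ω => ξ ω ^ 2 * Real.exp (l * ξ ω)))|F] := by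
      refine condExp_mono hIe ((integrable_const 1).add ((hIξ.smul l).add
        ((hIq2.smul (l^2)).add (hIb.smul (l^2))))) ?_
      refine Filter.Eventually.of_forall fun ω => ?_
      have := PL1 (l * ξ ω)
      have hexp : (l * ξ ω)^2 = l^2 * ξ ω ^2 := by ring
      simp only [Pi.add_apply, Pi.smul_apply, smul_eq_mul]
      nlinarith [this, hexp]
    have hcomp : μ[(fun _ => (1:ℝ)) + (l • ξ + ((l^2) • (fun ω => ξ ω ^ 2)
          + (l^2) • fun ω => ξ ω ^ 2 * Real.exp (l * ξ ω)))|F] =ᵐ[μ]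
        fun ω => 1 + (l * (μ[ξ|F]) ω + (l^2 * (μ[fun ω => ξ ω ^ 2|F]) ω
          + l^2 * (μ[fun ω => ξ ω ^ 2 * Real.exp (l * ξ ω)|F]) ω)) := by
      refine (condExp_add (integrable_const 1) ((hIξ.smul l).add
        ((hIq2.smul (l^2)).add (hIb.smul (l^2)))) F).trans ?_
      have h1 : μ[(fun _ => (1:ℝ))|F] = fun _ => (1:ℝ) := condExp_const hF 1
      have h2 : μ[l • ξ + ((l^2) • (fun ω => ξ ω ^ 2)
          + (l^2) • fun ω => ξ ω ^ 2 * Real.exp (l * ξ ω))|F] =ᵐ[μ]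
          fun ω => l * (μ[ξ|F]) ω + (l^2 * (μ[fun ω => ξ ω ^ 2|F]) ω
            + l^2 * (μ[fun ω => ξ ω ^ 2 * Real.exp (l * ξ ω)|F]) ω) := by
        refine (condExp_add (hIξ.smul l) ((hIq2.smul (l^2)).add (hIb.smul (l^2))) F).trans ?_
        have h3 := condExp_smul (μ := μ) (m := F) l ξ
        have h4 := condExp_smul (μ := μ) (m := F) (l^2) (fun ω => ξ ω ^ 2)
        have h5 := condExp_smul (μ := μ) (m := F) (l^2) (fun ω => ξ ω ^ 2 * Real.exp (l * ξ ω))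
        have h6 : μ[(l^2) • (fun ω => ξ ω ^ 2) + (l^2) • fun ω => ξ ω ^ 2 * Real.exp (l * ξ ω)|F]
            =ᵐ[μ] fun ω => l^2 * (μ[fun ω => ξ ω ^ 2|F]) ω
              + l^2 * (μ[fun ω => ξ ω ^ 2 * Real.exp (l * ξ ω)|F]) ω := by
          refine (condExp_add (hIq2.smul (l^2)) (hIb.smul (l^2)) F).trans ?_
          filter_upwards [h4, h5] with ω h4ω h5ω
          simp only [Pi.add_apply, h4ω, h5ω, Pi.smul_apply, smul_eq_mul]
        filter_upwards [h3, h6] with ω h3ω h6ω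
        simp only [Pi.add_apply, h3ω, h6ω, Pi.smul_apply, smul_eq_mul]
      filter_upwards [h2] with ω h2ω
      simp only [Pi.add_apply, h2ω, h1]
    filter_upwards [hmono, hcomp, hcond0] with ω h1 h2 h3
    rw [h2] at h1
    simp only [h3] at h1
    simpa using h1
  -- final pointwise arithmetic
  filter_upwards [h_b_nonneg, h_e_ge, h_a_ge, h_a_le, h_e_le, hσ, hbs]
    with ω hb0 he1 ha0 ha1 he2 ⟨hs0, hs1⟩ hbs'
  set S := (μ[fun ω => ξ ω ^ 2|F]) ω with hS
  set E := (μ[fun ω => Real.exp (l * ξ ω)|F]) ω with hE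
  set A := (μ[fun ω => ξ ω * Real.exp (l * ξ ω)|F]) ω with hA
  set B := (μ[fun ω => ξ ω ^ 2 * Real.exp (l * ξ ω)|F]) ω with hB2
  simp only [Pi.zero_apply] at hb0
  set r := l * ε with hr
  have hr0 : 0 ≤ r := by positivity
  have hr14 : r ≤ 1/4 := hlε
  have habs := abs_le.mp hbs'
  have hBle : B ≤ 4 * S := by nlinarith
  have hl2S : l^2 * S ≤ 12 * r^2 := by nlinarith [sq_nonneg l, mul_le_mul_of_nonneg_left hs1 (sq_nonneg l)]
  have hEpos : (0:ℝ) < E := lt_of_lt_of_le one_pos he1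
  have hEe : E - 1 ≤ 60 * r^2 := by nlinarith
  have h1 : |B / E - S| ≤ 27 * r * S := by
    have hq : B / E - S = (B - S * E) / E := by field_simp
    rw [hq, abs_div, abs_of_pos hEpos]
    have hle1 : |B - S * E| ≤ |B - S| + S * (E - 1) := by
      have : B - S * E = (B - S) - S * (E - 1) := by ring
      rw [this]
      refine (abs_sub _ _).trans ?_
      rw [abs_of_nonneg (by nlinarith : (0:ℝ) ≤ S * (E - 1))]
    have hle2 : |B - S * E| ≤ 27 * r * S := by
      have hSE : S * (E - 1) ≤ 15 * r * S := by nlinarith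
      nlinarith [habs.1, habs.2]
    calc |B - S * E| / E ≤ |B - S * E| := by
          apply div_le_self (abs_nonneg _) he1
      _ ≤ 27 * r * S := hle2
  have h2 : (A / E)^2 ≤ 75 * r * S := by
    have hA5 : A ≤ 5 * l * S := by nlinarith
    have hAE : (A/E)^2 ≤ A^2 := by
      rw [div_pow]
      apply div_le_self (sq_nonneg A) (by nlinarith : (1:ℝ) ≤ E^2)
    have hA2 : A^2 ≤ 25 * (l^2 * S) * S := by nlinarith
    nlinarith [hl2S, mul_le_mul_of_nonneg_right hl2S hs0]
  calc |B / E - (A / E)^2 - S| ≤ |B / E - S| + (A / E)^2 := by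
        have : B / E - (A/E)^2 - S = (B/E - S) - (A/E)^2 := by ring
        rw [this]
        refine (abs_sub _ _).trans ?_
        rw [abs_of_nonneg (sq_nonneg (A/E))]
    _ ≤ 27 * r * S + 75 * r * S := add_le_add h1 h2
    _ = 102 * (l * ε) * S := by rw [hr]; ring

end Aux

theorem conjugate_quadratic_characteristic_close_to_one :
    ∃ c > 0, ∀ (Ω : Type) (m0 : MeasurableSpace Ω) (μ : Measure Ω),
      IsProbabilityMeasure μ →
      ∀ (n : ℕ) (ξ : ℕ → Ω → ℝ) (𝓕 : ℕ → MeasurableSpace Ω) (ε δ : ℝ),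
      (∀ i, 𝓕 i ≤ m0) →
      ε ∈ Set.Ioc (0 : ℝ) (1 / 2) → δ ∈ Set.Icc (0 : ℝ) (1 / 2) →
      (∀ i ∈ Finset.Icc 1 n, ∀ k : ℕ, Integrable (fun ω => ξ i ω ^ k) μ) →
      (∀ i ∈ Finset.Icc 1 n, μ[ξ i|𝓕 (i - 1)] =ᵐ[μ] 0) →
      (∀ i ∈ Finset.Icc 1 n, ∀ k : ℕ, 3 ≤ k → ∀ᵐ ω ∂μ,
        |(μ[fun ω => ξ i ω ^ k|𝓕 (i - 1)]) ω| ≤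
          (1 / 2) * (Nat.factorial k : ℝ) * ε ^ (k - 2) *
            (μ[fun ω => ξ i ω ^ 2|𝓕 (i - 1)]) ω) →
      (∀ᵐ ω ∂μ,
        |(∑ i ∈ Finset.Icc 1 n, (μ[fun ω => ξ i ω ^ 2|𝓕 (i - 1)]) ω) - 1| ≤ δ ^ 2) →
      ∀ l : ℝ, 0 ≤ l → l ≤ (1 / 4) * ε⁻¹ →
      (∀ i ∈ Finset.Icc 1 n, Integrable (fun ω => Real.exp (l * ξ i ω)) μ) →
      (∀ i ∈ Finset.Icc 1 n, Integrable (fun ω => ξ i ω * Real.exp (l * ξ i ω)) μ) →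
      (∀ i ∈ Finset.Icc 1 n, Integrable (fun ω => ξ i ω ^ 2 * Real.exp (l * ξ i ω)) μ) →
      ∀ᵐ ω ∂μ,
        |(∑ k ∈ Finset.Icc 1 n,
            ((μ[fun ω => ξ k ω ^ 2 * Real.exp (l * ξ k ω)|𝓕 (k - 1)]) ω /
              (μ[fun ω => Real.exp (l * ξ k ω)|𝓕 (k - 1)]) ω -
            ((μ[fun ω => ξ k ω * Real.exp (l * ξ k ω)|𝓕 (k - 1)]) ω /
              (μ[fun ω => Real.exp (l * ξ k ω)|𝓕 (k - 1)]) ω) ^ 2)) - 1|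
        ≤ c * (l * ε + δ ^ 2) := by
  refine ⟨128, by norm_num, ?_⟩
  intro Ω m0 μ hprob n ξ 𝓕 ε δ h𝓕 hε hδ hInt hcond0 hbern hA2 l hl0 hl2 hIe hIa hIb
  haveI := hprob
  obtain ⟨hε0, hε12⟩ := hε
  obtain ⟨hδ0, hδ12⟩ := hδ
  have hlε : l * ε ≤ 1/4 := by
    calc l * ε ≤ (1/4 * ε⁻¹) * ε := mul_le_mul_of_nonneg_right hl2 hε0.le
      _ = 1/4 := by field_simp
  have hper : ∀ i ∈ Finset.Icc 1 n, ∀ᵐ ω ∂μ,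
      |(μ[fun ω => ξ i ω ^ 2 * Real.exp (l * ξ i ω)|𝓕 (i - 1)]) ω /
          (μ[fun ω => Real.exp (l * ξ i ω)|𝓕 (i - 1)]) ω
        - ((μ[fun ω => ξ i ω * Real.exp (l * ξ i ω)|𝓕 (i - 1)]) ω /
          (μ[fun ω => Real.exp (l * ξ i ω)|𝓕 (i - 1)]) ω) ^ 2
        - (μ[fun ω => ξ i ω ^ 2|𝓕 (i - 1)]) ω|
      ≤ 102 * (l * ε) * (μ[fun ω => ξ i ω ^ 2|𝓕 (i - 1)]) ω := by
    intro i hi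
    have hσ := sigma2_bounds (h𝓕 (i-1)) (ξ i) ε hε0 hε12 (hInt i hi 2) (hInt i hi 4)
      (hbern i hi 4 (by norm_num))
    have hmom := mom (h𝓕 (i-1)) (ξ i) ε hε0 hε12 (hInt i hi) hσ (hbern i hi)
    have hbs := bseries (h𝓕 (i-1)) (ξ i) ε l hε0 hε12 hl0 hlε (hInt i hi) hσ (hbern i hi)
      hmom (hIb i hi)
    exact core (h𝓕 (i-1)) (ξ i) ε l hε0 hε12 hl0 hlε (hInt i hi) (hcond0 i hi) (hbern i hi)
      hσ hbs (hIe i hi) (hIa i hi) (hIb i hi)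
  have hall : ∀ᵐ ω ∂μ, ∀ i : ℕ, i ∈ Finset.Icc 1 n →
      |(μ[fun ω => ξ i ω ^ 2 * Real.exp (l * ξ i ω)|𝓕 (i - 1)]) ω /
          (μ[fun ω => Real.exp (l * ξ i ω)|𝓕 (i - 1)]) ω
        - ((μ[fun ω => ξ i ω * Real.exp (l * ξ i ω)|𝓕 (i - 1)]) ω /
          (μ[fun ω => Real.exp (l * ξ i ω)|𝓕 (i - 1)]) ω) ^ 2
        - (μ[fun ω => ξ i ω ^ 2|𝓕 (i - 1)]) ω|
      ≤ 102 * (l * ε) * (μ[fun ω => ξ i ω ^ 2|𝓕 (i - 1)]) ω := by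
    rw [ae_all_iff]
    intro i
    by_cases hi : i ∈ Finset.Icc 1 n
    · filter_upwards [hper i hi] with ω h _
      exact h
    · exact Filter.Eventually.of_forall fun ω h => absurd h hi
  filter_upwards [hall, hA2] with ω h1 h2
  set T : ℕ → ℝ := fun i =>
    (μ[fun ω => ξ i ω ^ 2 * Real.exp (l * ξ i ω)|𝓕 (i - 1)]) ω /
      (μ[fun ω => Real.exp (l * ξ i ω)|𝓕 (i - 1)]) ω -
    ((μ[fun ω => ξ i ω * Real.exp (l * ξ i ω)|𝓕 (i - 1)]) ω /
      (μ[fun ω => Real.exp (l * ξ i ω)|𝓕 (i - 1)]) ω) ^ 2 with hT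
  set G : ℕ → ℝ := fun i => (μ[fun ω => ξ i ω ^ 2|𝓕 (i - 1)]) ω with hG
  have hδ2 : δ ^ 2 ≤ 1/4 := by nlinarith
  have hsumG : ∑ i ∈ Finset.Icc 1 n, G i ≤ 1 + δ ^ 2 := by
    have := (abs_le.mp h2).2
    linarith
  have hkey : (∑ i ∈ Finset.Icc 1 n, T i) - 1
      = (∑ i ∈ Finset.Icc 1 n, (T i - G i)) + ((∑ i ∈ Finset.Icc 1 n, G i) - 1) := by
    have hsub : (∑ i ∈ Finset.Icc 1 n, (T i - G i))
        = (∑ i ∈ Finset.Icc 1 n, T i) - ∑ i ∈ Finset.Icc 1 n, G i :=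
      Finset.sum_sub_distrib _ _
    linarith [hsub]
  calc |(∑ i ∈ Finset.Icc 1 n, T i) - 1|
      ≤ |∑ i ∈ Finset.Icc 1 n, (T i - G i)| + |(∑ i ∈ Finset.Icc 1 n, G i) - 1| := by
        rw [hkey]; exact abs_add_le _ _
    _ ≤ (∑ i ∈ Finset.Icc 1 n, |T i - G i|) + δ ^ 2 :=
        add_le_add (Finset.abs_sum_le_sum_abs _ _) h2
    _ ≤ (∑ i ∈ Finset.Icc 1 n, 102 * (l * ε) * G i) + δ ^ 2 :=
        add_le_add_left (Finset.sum_le_sum fun i hi => h1 i hi) _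
    _ = 102 * (l * ε) * (∑ i ∈ Finset.Icc 1 n, G i) + δ ^ 2 := by
        rw [Finset.mul_sum]
    _ ≤ 128 * (l * ε + δ ^ 2) := by
        have hlε0 : (0:ℝ) ≤ l * ε := by positivity
        nlinarith [mul_le_mul_of_nonneg_left hsumG (by positivity : (0:ℝ) ≤ 102 * (l * ε))]
end
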